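/- arXiv:2210.03934 — 6 statements merged into one kernel-verified Lean document; each statement's English description precedes it below -/
import Mathlib

section
/- For every language of correct protocols PROT and every nondeterministic finite automaton A over the protocol alphabet Γ = Γ_wr ∪ Γ_qu ∪ Γ_re, there exists a 1NB_PROT-automaton M with input alphabet Γ such that L(M) = L(A) ∩ PROT; in particular, L(A) ∩ PROT ≠ ∅ if and only if L(M) ≠ ∅. (This is the reduction of the nondeterministic regular realizability problem NREG(PROT) to the non-emptiness problem for 1NB_PROT-automata.) -/
/-! ### Finite-state transducers -/

/-- A finite-state transducer from alphabet `α` to alphabet `β`, with state type `Q`: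
an initial state, a set of accepting states, and a finite set of transitions
`(q, x, y, q')` reading `x ∈ α ∪ {ε}` and writing the word `y ∈ β*`. -/
structure FST (α β Q : Type) where
  init : Q
  accept : Set Q
  trans : Set (Q × Option α × List β × Q)
  trans_fin : trans.Finite

/-- Paths of a transducer: `T.Path q u v q'` holds iff some sequence of transitions
leads from `q` to `q'` with input labels concatenating to `u` and output labels
concatenating to `v`. -/
inductive FST.Path {α β Q : Type} (T : FST α β Q) : Q → List α → List β → Q → Prop
  | refl (q : Q) : FST.Path T q [] [] q
  | step {q q' q'' : Q} {x : Option α} {y : List β} {u : List α} {v : List β} :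
      (q, x, y, q') ∈ T.trans → FST.Path T q' u v q'' →
      FST.Path T q (x.toList ++ u) (y ++ v) q''

/-- The relation computed by a transducer. -/
def FST.Rel {α β Q : Type} (T : FST α β Q) (u : List α) (v : List β) : Prop :=
  ∃ f ∈ T.accept, T.Path T.init u v f

/-- The image `T(B)` of a language under the relation computed by a transducer. -/
def FST.Img {α β Q : Type} (T : FST α β Q) (B : Set (List α)) : Set (List β) :=
  {v | ∃ u ∈ B, T.Rel u v}

/-- A transducer is deterministic if, for each state `q`, the transitions leaving `q`
either consist of a single transition with input label `ε`, or all have pairwise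
distinct input labels, none of which is `ε`. -/
def FST.Det {α β Q : Type} (T : FST α β Q) : Prop :=
  ∀ q : Q,
    (∃ t ∈ T.trans, t.1 = q ∧ t.2.1 = (none : Option α) ∧
        ∀ t' ∈ T.trans, t'.1 = q → t' = t) ∨
    ((∀ t ∈ T.trans, t.1 = q → t.2.1 ≠ none) ∧
      ∀ t ∈ T.trans, ∀ t' ∈ T.trans, t.1 = q → t'.1 = q → t.2.1 = t'.2.1 → t = t')

/-- Rational dominance: `RatDom A B` iff `A = T(B)` for some finite-state transducer. -/
def RatDom {α β : Type} (A : Set (List α)) (B : Set (List β)) : Prop :=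
  ∃ (n : ℕ) (T : FST β α (Fin n)), T.Img B = A

/-! ### Protocols -/

/-- The protocol alphabet `Γ_wr ∪ Γ_qu ∪ Γ_re` (disjoint union). -/
abbrev PLet (W Q R : Type) := W ⊕ Q ⊕ R

def wrLet {W Q R : Type} (w : W) : PLet W Q R := Sum.inl w
def quLet {W Q R : Type} (q : Q) : PLet W Q R := Sum.inr (Sum.inl q)
def reLet {W Q R : Type} (r : R) : PLet W Q R := Sum.inr (Sum.inr r)

/-- The query block `u q r`. -/
def pblock {W Q R : Type} (u : List W) (q : Q) (r : R) : List (PLet W Q R) :=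
  u.map wrLet ++ [quLet q, reLet r]

/-- A word over the protocol alphabet is a protocol (w.r.t. the validity
relation `valid`) iff it is a concatenation of query blocks `uᵢqᵢrᵢ` with
`valid qᵢ rᵢ`. -/
inductive IsProtocol {W Q R : Type} (valid : Q → R → Prop) : List (PLet W Q R) → Prop
  | nil : IsProtocol valid []
  | block (u : List W) (q : Q) (r : R) (p : List (PLet W Q R)) :
      valid q r → IsProtocol valid p → IsProtocol valid (pblock u q r ++ p)

/-- A language of correct protocols over the alphabets `W = Γ_wr`, `Q = Γ_qu`,
`R = Γ_re`, satisfying axioms (i)-(v). -/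
structure ProtLang (W Q R : Type) where
  valid : Q → R → Prop
  prot : Set (List (PLet W Q R))
  /-- (i) the empty protocol is correct -/
  empty_mem : [] ∈ prot
  /-- (ii) every member is a protocol -/
  mem_protocol : ∀ p ∈ prot, IsProtocol valid p
  /-- (iii) closure under protocol prefixes -/
  prefix_mem : ∀ p₁ p₂ : List (PLet W Q R), p₁ ++ p₂ ∈ prot → IsProtocol valid p₁ → p₁ ∈ prot
  /-- (iv) every query has some valid response extending the protocol -/
  extend : ∀ p ∈ prot, ∀ (u : List W) (q : Q), ∃ r : R, p ++ pblock u q r ∈ prot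
  /-- (v) the response to a query is uniquely determined -/
  resp_unique : ∀ (p : List (PLet W Q R)) (u : List W) (q : Q) (r r' : R)
      (s : List (PLet W Q R)),
      p ++ pblock u q r ∈ prot → p ++ pblock u q r' ++ s ∈ prot → r' = r

/-! ### Automata with an auxiliary data structure -/

/-- Input-tape letters: input letters plus the two endmarkers. -/
inductive EndM (σ : Type) where
  | lt : σ → EndM σ
  | lmark : EndM σ
  | rmark : EndM σ

/-- The input tape `⊢ w ⊣`. -/
def tape {σ : Type} (w : List σ) : List (EndM σ) :=
  EndM.lmark :: (w.map EndM.lt ++ [EndM.rmark])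

/-- A one-way automaton equipped with an auxiliary data structure
(a `1NB_PROT`-automaton), over input alphabet `σ`, with state type `S`
split into writing states (`isWr`) and query states (`¬ isWr`). -/
structure ProtAut (σ W Q R S : Type) where
  isWr : S → Prop
  s₀ : S
  F : Set S
  s₀_not_F : s₀ ∉ F
  transWr : Set (S × Option (EndM σ) × List W × S)
  transQu : Set (S × Q × R × S)
  wr_src : ∀ t ∈ transWr, isWr t.1
  qu_src : ∀ t ∈ transQu, ¬ isWr t.1
  qu_tgt : ∀ t ∈ transQu, isWr t.2.2.2
  transWr_fin : transWr.Finite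

/-- Configurations `(s, v, u, p)`: state, unprocessed input, query tape, protocol. -/
abbrev PConfig (σ W Q R S : Type) := S × List (EndM σ) × List W × List (PLet W Q R)

/-- The move relation of an automaton with an ADS, relative to the language `P`
of correct protocols. -/
inductive ProtStep {σ W Q R S : Type} (M : ProtAut σ W Q R S)
    (P : Set (List (PLet W Q R))) : PConfig σ W Q R S → PConfig σ W Q R S → Prop
  | wr {s s' : S} {a : Option (EndM σ)} {x : List W} {v : List (EndM σ)}
      {u : List W} {p : List (PLet W Q R)} :
      (s, a, x, s') ∈ M.transWr →
      ProtStep M P (s, a.toList ++ v, u, p) (s', v, u ++ x, p)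
  | qu {s s' : S} {q : Q} {r : R} {v : List (EndM σ)} {u : List W}
      {p : List (PLet W Q R)} :
      (s, q, r, s') ∈ M.transQu → p ++ pblock u q r ∈ P →
      ProtStep M P (s, v, u, p) (s', v, [], p ++ pblock u q r)

/-- `M` has an accepting run on `w` that produces the protocol `p`. -/
def ProtAut.AcceptsWith {σ W Q R S : Type} (M : ProtAut σ W Q R S)
    (P : Set (List (PLet W Q R))) (w : List σ) (p : List (PLet W Q R)) : Prop :=
  ∃ sf ∈ M.F,
    Relation.ReflTransGen (ProtStep M P) (M.s₀, tape w, [], []) (sf, [], [], p)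

/-- `M` accepts the word `w`. -/
def ProtAut.Accepts {σ W Q R S : Type} (M : ProtAut σ W Q R S)
    (P : Set (List (PLet W Q R))) (w : List σ) : Prop :=
  ∃ p ∈ P, M.AcceptsWith P w p

/-- The language accepted by `M`. -/
def ProtAut.Lang {σ W Q R S : Type} (M : ProtAut σ W Q R S)
    (P : Set (List (PLet W Q R))) : Set (List σ) :=
  {w | M.Accepts P w}

/-- `M` is deterministic: each configuration has at most one successor. -/
def ProtAut.Deterministic {σ W Q R S : Type} (M : ProtAut σ W Q R S)
    (P : Set (List (PLet W Q R))) : Prop :=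
  ∀ c c₁ c₂ : PConfig σ W Q R S, ProtStep M P c c₁ → ProtStep M P c c₂ → c₁ = c₂

/-- The class of languages over `σ` accepted by `1NB_PROT`-automata. -/
def ProtCL {W Q R : Type} (P : ProtLang W Q R) (σ : Type) : Set (Set (List σ)) :=
  {L | ∃ (n : ℕ) (M : ProtAut σ W Q R (Fin n)), L = M.Lang P.prot}

/-- The class of languages over `σ` accepted by deterministic `1DB_PROT`-automata. -/
def ProtCLdet {W Q R : Type} (P : ProtLang W Q R) (σ : Type) : Set (Set (List σ)) :=
  {L | ∃ (n : ℕ) (M : ProtAut σ W Q R (Fin n)),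
    M.Deterministic P.prot ∧ L = M.Lang P.prot}

/-! ### Concatenation and Kleene star of languages -/

def LangConcat {σ : Type} (L₁ L₂ : Set (List σ)) : Set (List σ) :=
  {w | ∃ u ∈ L₁, ∃ v ∈ L₂, w = u ++ v}

def LangStar {σ : Type} (L : Set (List σ)) : Set (List σ) :=
  {w | ∃ ws : List (List σ), (∀ u ∈ ws, u ∈ L) ∧ w = ws.flatten}

/-! ### Auxiliary NFA lemmas -/

section NFAAux
variable {α S : Type} (A : NFA α S)

theorem nfa_evalFrom_append (St : Set S) (x y : List α) :
    A.evalFrom St (x ++ y) = A.evalFrom (A.evalFrom St x) y :=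
  List.foldl_append

theorem nfa_evalFrom_biUnion (x : List α) (St : Set S) :
    A.evalFrom St x = ⋃ s ∈ St, A.evalFrom {s} x := by
  induction x generalizing St with
  | nil => simp [NFA.evalFrom]
  | cons a x ih =>
    have h1 : ∀ T : Set S, A.evalFrom T (a :: x) = A.evalFrom (A.stepSet T a) x := by
      intro T; rfl
    rw [h1, ih]
    ext t
    constructor
    · intro ht
      simp only [Set.mem_iUnion, NFA.mem_stepSet] at ht
      obtain ⟨s, ⟨u, hu, hs⟩, ht⟩ := ht
      simp only [Set.mem_iUnion]
      refine ⟨u, hu, ?_⟩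
      rw [h1, ih (A.stepSet {u} a)]
      simp only [Set.mem_iUnion, NFA.mem_stepSet]
      exact ⟨s, ⟨u, rfl, hs⟩, ht⟩
    · intro ht
      simp only [Set.mem_iUnion] at ht
      obtain ⟨u, hu, ht⟩ := ht
      rw [h1, ih (A.stepSet {u} a)] at ht
      simp only [Set.mem_iUnion, NFA.mem_stepSet] at ht
      obtain ⟨s, ⟨u', hu', hs⟩, ht⟩ := ht
      rw [Set.mem_singleton_iff] at hu'
      rw [hu'] at hs
      simp only [Set.mem_iUnion, NFA.mem_stepSet]
      exact ⟨s, ⟨u, hu, hs⟩, ht⟩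

theorem nfa_mem_evalFrom_append {St : Set S} {x y : List α} {t : S}
    (h : t ∈ A.evalFrom St (x ++ y)) :
    ∃ s ∈ A.evalFrom St x, t ∈ A.evalFrom {s} y := by
  rw [nfa_evalFrom_append, nfa_evalFrom_biUnion] at h
  simpa using h

theorem nfa_evalFrom_step {St : Set S} {t : S} {x : List α} {a : α}
    (hx : t ∈ A.evalFrom St x) {u : S} (ha : u ∈ A.step t a) :
    u ∈ A.evalFrom St (x ++ [a]) := by
  rw [NFA.evalFrom_append, NFA.evalFrom_singleton, NFA.mem_stepSet]
  exact ⟨t, hx, ha⟩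

theorem nfa_mem_evalFrom_singleton_append {St : Set S} {x : List α} {a : α} {t : S}
    (h : t ∈ A.evalFrom St (x ++ [a])) :
    ∃ u ∈ A.evalFrom St x, t ∈ A.step u a := by
  rw [NFA.evalFrom_append, NFA.evalFrom_singleton, NFA.mem_stepSet] at h; exact h

end NFAAux

/-! ### Protocol lemmas -/

theorem isProtocol_append_block {W Q R : Type} {valid : Q → R → Prop}
    {p : List (PLet W Q R)} (hp : IsProtocol valid p)
    (u : List W) {q : Q} {r : R} (hqr : valid q r) :
    IsProtocol valid (p ++ pblock u q r) := by
  induction hp with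
  | nil => simpa using IsProtocol.block u q r [] hqr IsProtocol.nil
  | block u' q' r' p' h hp' ih =>
    rw [List.append_assoc]
    exact IsProtocol.block u' q' r' _ h ih

/-! ### The states of the constructed automaton -/

inductive MSt (S Q R : Type) where
  | init | fin
  | wr (s : S)
  | qu (s : S) (q : Q)
  | re (s : S) (r : R)
  deriving DecidableEq, Fintype

namespace Stmt2

variable {W Q R S : Type}

/-- The constructed `1NB`-automaton simulating an NFA `A` on protocol inputs. -/
def autM [Fintype W] [Fintype Q] [Fintype R] [Fintype S]
    (A : NFA (PLet W Q R) S) : ProtAut (PLet W Q R) W Q R (MSt S Q R) where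
  isWr s := match s with | .qu _ _ => False | _ => True
  s₀ := .init
  F := {MSt.fin}
  s₀_not_F := by simp
  transWr := {t |
    (∃ s', s' ∈ A.start ∧ t = (.init, some .lmark, [], .wr s'))
    ∨ (∃ s a s', s' ∈ A.step s (wrLet a) ∧
        t = (.wr s, some (.lt (wrLet a)), [a], .wr s'))
    ∨ (∃ s q s', s' ∈ A.step s (quLet q) ∧
        t = (.wr s, some (.lt (quLet q)), [], .qu s' q))
    ∨ (∃ s, s ∈ A.accept ∧ t = (.wr s, some .rmark, [], .fin))
    ∨ (∃ s r s', s' ∈ A.step s (reLet r) ∧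
        t = (.re s r, some (.lt (reLet r)), [], .wr s'))}
  transQu := {t | ∃ s q r, t = (.qu s q, q, r, .re s r)}
  wr_src := by rintro t (⟨s', _, rfl⟩ | ⟨s, a, s', _, rfl⟩ | ⟨s, q, s', _, rfl⟩ |
      ⟨s, _, rfl⟩ | ⟨s, r, s', _, rfl⟩) <;> trivial
  qu_src := by rintro t ⟨s, q, r, rfl⟩ h; exact h
  qu_tgt := by rintro t ⟨s, q, r, rfl⟩; trivial
  transWr_fin := by
    classical
    apply Set.Finite.subset (Set.finite_range
      (fun x : S ⊕ (S × W × S) ⊕ (S × Q × S) ⊕ S ⊕ (S × R × S) =>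
        match x with
        | .inl s' => ((.init, some .lmark, [], .wr s') :
            MSt S Q R × Option (EndM (PLet W Q R)) × List W × MSt S Q R)
        | .inr (.inl ⟨s, a, s'⟩) => (.wr s, some (.lt (wrLet a)), [a], .wr s')
        | .inr (.inr (.inl ⟨s, q, s'⟩)) => (.wr s, some (.lt (quLet q)), [], .qu s' q)
        | .inr (.inr (.inr (.inl s))) => (.wr s, some .rmark, [], .fin)
        | .inr (.inr (.inr (.inr ⟨s, r, s'⟩))) => (.re s r, some (.lt (reLet r)), [], .wr s')))
    rintro t (⟨s', _, rfl⟩ | ⟨s, a, s', _, rfl⟩ | ⟨s, q, s', _, rfl⟩ |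
      ⟨s, _, rfl⟩ | ⟨s, r, s', _, rfl⟩)
    · exact ⟨.inl s', rfl⟩
    · exact ⟨.inr (.inl ⟨s, a, s'⟩), rfl⟩
    · exact ⟨.inr (.inr (.inl ⟨s, q, s'⟩)), rfl⟩
    · exact ⟨.inr (.inr (.inr (.inl s))), rfl⟩
    · exact ⟨.inr (.inr (.inr (.inr ⟨s, r, s'⟩))), rfl⟩

variable [Fintype W] [Fintype Q] [Fintype R] [Fintype S]
variable (P : ProtLang W Q R) (A : NFA (PLet W Q R) S)

/-- Invariant on reachable configurations of `autM A` on input `w`. -/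
def Inv (w : List (PLet W Q R)) : PConfig (PLet W Q R) W Q R (MSt S Q R) → Prop :=
  fun c =>
    match c with
    | (.init, v, u, p) => v = tape w ∧ u = [] ∧ p = []
    | (.wr s, v, u, p) => ∃ w₂, v = w₂.map EndM.lt ++ [EndM.rmark] ∧
        w = (p ++ u.map wrLet) ++ w₂ ∧
        s ∈ A.evalFrom A.start (p ++ u.map wrLet) ∧ p ∈ P.prot
    | (.qu s q, v, u, p) => ∃ w₂, v = w₂.map EndM.lt ++ [EndM.rmark] ∧
        w = (p ++ u.map wrLet ++ [quLet q]) ++ w₂ ∧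
        s ∈ A.evalFrom A.start (p ++ u.map wrLet ++ [quLet q]) ∧ p ∈ P.prot
    | (.re s r, v, u, p) => ∃ w₂ p₀, v = w₂.map EndM.lt ++ [EndM.rmark] ∧
        u = [] ∧ p = p₀ ++ [reLet r] ∧ w = p₀ ++ w₂ ∧
        s ∈ A.evalFrom A.start p₀ ∧ p ∈ P.prot
    | (.fin, v, u, p) => v = [] ∧ p ∈ P.prot ∧
        ∃ s ∈ A.accept, s ∈ A.evalFrom A.start (p ++ u.map wrLet) ∧
          w = p ++ u.map wrLet

theorem inv_step {w : List (PLet W Q R)}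
    {c c' : PConfig (PLet W Q R) W Q R (MSt S Q R)}
    (hc : Inv P A w c) (h : ProtStep (autM A) P.prot c c') : Inv P A w c' := by
  cases h with
  | wr hmem =>
    rename_i s s' a x v u p
    rcases hmem with ⟨t, ht, heq⟩ | ⟨t, b, t', ht, heq⟩ | ⟨t, q, t', ht, heq⟩ |
      ⟨t, ht, heq⟩ | ⟨t, r, t', ht, heq⟩ <;>
      simp only [Prod.mk.injEq] at heq <;>
      obtain ⟨rfl, rfl, rfl, rfl⟩ := heq
    · -- init reads ⊢
      obtain ⟨hv, rfl, rfl⟩ := hc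
      simp only [tape, Option.toList, List.singleton_append, List.cons.injEq] at hv
      exact ⟨w, hv.2, by simp, by simpa [NFA.evalFrom] using ht, P.empty_mem⟩
    · -- wr reads a write letter
      obtain ⟨w₂, hv, hw, hev, hp⟩ := hc
      cases w₂ with
      | nil => simp at hv
      | cons c w₂' =>
        simp only [List.map_cons, List.cons_append, Option.toList,
          List.singleton_append, List.cons.injEq] at hv
        obtain ⟨hc1, hv'⟩ := hv
        obtain rfl : c = wrLet b := by
          cases hc1; rfl
        refine ⟨w₂', by simpa using hv', ?_, ?_, hp⟩
        · rw [hw]; simp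
        · have h2 := nfa_evalFrom_step A hev ht
          simpa [List.append_assoc] using h2
    · -- wr reads a query letter
      obtain ⟨w₂, hv, hw, hev, hp⟩ := hc
      cases w₂ with
      | nil => simp at hv
      | cons c w₂' =>
        simp only [List.map_cons, List.cons_append, Option.toList,
          List.singleton_append, List.cons.injEq] at hv
        obtain ⟨hc1, hv'⟩ := hv
        obtain rfl : c = quLet q := by cases hc1; rfl
        refine ⟨w₂', by simpa using hv', ?_, ?_, hp⟩
        · rw [hw]; simp
        · simpa using nfa_evalFrom_step A hev ht
    · -- wr reads ⊣
      obtain ⟨w₂, hv, hw, hev, hp⟩ := hc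
      cases w₂ with
      | nil =>
        simp only [List.map_nil, List.nil_append, Option.toList,
          List.singleton_append, List.cons.injEq] at hv
        refine ⟨hv.2.symm ▸ rfl, hp, t, ht, by simpa using hev, by simpa using hw⟩
      | cons c w₂' => simp at hv
    · -- re reads the response letter
      obtain ⟨w₂, p₀, hv, rfl, hpeq, hw, hev, hp⟩ := hc
      cases w₂ with
      | nil => simp at hv
      | cons c w₂' =>
        simp only [List.map_cons, List.cons_append, Option.toList,
          List.singleton_append, List.cons.injEq] at hv
        obtain ⟨hc1, hv'⟩ := hv
        obtain rfl : c = reLet r := by cases hc1; rfl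
        refine ⟨w₂', by simpa using hv', ?_, ?_, hp⟩
        · rw [hw, hpeq]; simp
        · rw [hpeq]
          simpa using nfa_evalFrom_step A hev ht
  | qu hmem hprot =>
    rename_i s s' q r v u p
    obtain ⟨t, q', r', heq⟩ := hmem
    simp only [Prod.mk.injEq] at heq
    obtain ⟨h1, rfl, rfl, rfl⟩ := heq
    obtain rfl : s = MSt.qu t q := h1
    obtain ⟨w₂, hv, hw, hev, hp⟩ := hc
    refine ⟨w₂, p ++ u.map wrLet ++ [quLet q], hv, rfl, ?_, ?_, ?_, hprot⟩
    · simp [pblock, List.append_assoc]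
    · simpa [List.append_assoc] using hw
    · exact hev

/-! ### Step helpers -/

theorem protStep_wr {σ S' : Type} {M : ProtAut σ W Q R S'} {P' : Set (List (PLet W Q R))}
    {s s' : S'} {a : Option (EndM σ)} {x : List W} {v v' : List (EndM σ)}
    {u u' : List W} {p : List (PLet W Q R)}
    (hmem : (s, a, x, s') ∈ M.transWr) (hv : v = a.toList ++ v') (hu : u' = u ++ x) :
    ProtStep M P' (s, v, u, p) (s', v', u', p) := by
  subst hv hu; exact ProtStep.wr hmem

theorem protStep_qu {σ S' : Type} {M : ProtAut σ W Q R S'} {P' : Set (List (PLet W Q R))}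
    {s s' : S'} {q : Q} {r : R} {v : List (EndM σ)} {u : List W}
    {p p' : List (PLet W Q R)}
    (hmem : (s, q, r, s') ∈ M.transQu) (hp : p' = p ++ pblock u q r) (hP : p' ∈ P') :
    ProtStep M P' (s, v, u, p) (s', v, [], p') := by
  subst hp; exact ProtStep.qu hmem hP

/-! ### Soundness -/

theorem lang_subset {w : List (PLet W Q R)} (hw : w ∈ (autM A).Lang P.prot) :
    w ∈ A.accepts ∧ w ∈ P.prot := by
  obtain ⟨p, hp, sf, hsf, hrun⟩ := hw
  have key : ∀ {c c' : PConfig (PLet W Q R) W Q R (MSt S Q R)},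
      Relation.ReflTransGen (ProtStep (autM A) P.prot) c c' →
      Inv P A w c → Inv P A w c' := by
    intro c c' h
    induction h with
    | refl => exact id
    | tail _ hstep ih => exact fun h0 => inv_step P A (ih h0) hstep
  have hInv : Inv P A w (sf, [], [], p) := key hrun ⟨rfl, rfl, rfl⟩
  have hsf' : sf = MSt.fin := hsf
  subst hsf'
  obtain ⟨-, hp', s, hacc, hev, hweq⟩ := hInv
  simp only [List.map_nil, List.append_nil] at hev hweq
  subst hweq
  exact ⟨⟨s, hacc, hev⟩, hp'⟩

/-! ### Completeness: constructing an accepting run -/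

theorem run_writes (u : List W) :
    ∀ (s t : S) (u₀ : List W) (v : List (EndM (PLet W Q R)))
      (p : List (PLet W Q R)),
      t ∈ A.evalFrom {s} (u.map wrLet) →
      Relation.ReflTransGen (ProtStep (autM A) P.prot)
        (MSt.wr s, (u.map wrLet).map EndM.lt ++ v, u₀, p) (MSt.wr t, v, u₀ ++ u, p) := by
  induction u with
  | nil =>
    intro s t u₀ v p ht
    have : t = s := by simpa [NFA.evalFrom] using ht
    subst this
    simpa using Relation.ReflTransGen.refl
  | cons a u' ih =>
    intro s t u₀ v p ht
    have ht' : t ∈ A.evalFrom (A.stepSet {s} (wrLet a)) (u'.map wrLet) := ht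
    rw [nfa_evalFrom_biUnion] at ht'
    simp only [Set.mem_iUnion, NFA.mem_stepSet] at ht'
    obtain ⟨s', ⟨s'', hs'', hstep⟩, ht'⟩ := ht'
    rw [Set.mem_singleton_iff] at hs''; rw [hs''] at hstep
    refine Relation.ReflTransGen.head
      (protStep_wr (P' := P.prot) (v' := (u'.map wrLet).map EndM.lt ++ v)
        (Or.inr (Or.inl ⟨s, a, s', hstep, rfl⟩)) (by simp) rfl) ?_
    have := ih s' t (u₀ ++ [a]) v p ht'
    simpa using this

theorem run_block {p₂ : List (PLet W Q R)} (hp₂ : IsProtocol P.valid p₂) :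
    ∀ (p₁ : List (PLet W Q R)) (s sf : S), IsProtocol P.valid p₁ →
      p₁ ++ p₂ ∈ P.prot → sf ∈ A.accept → sf ∈ A.evalFrom {s} p₂ →
      Relation.ReflTransGen (ProtStep (autM A) P.prot)
        (MSt.wr s, p₂.map EndM.lt ++ [EndM.rmark], [], p₁) (MSt.fin, [], [], p₁ ++ p₂) := by
  induction hp₂ with
  | nil =>
    intro p₁ s sf hp₁ hmem hacc hsf
    obtain rfl : sf = s := by simpa [NFA.evalFrom] using hsf
    simp only [List.append_nil, List.map_nil, List.nil_append]
    refine Relation.ReflTransGen.single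
      (protStep_wr (P' := P.prot) (v' := ([] : List _))
        (Or.inr (Or.inr (Or.inr (Or.inl ⟨sf, hacc, rfl⟩)))) (by simp) (by simp))
  | block u q r p₂' hqr hp₂' ih =>
    intro p₁ s sf hp₁ hmem hacc hsf
    -- decompose the NFA run over the block
    obtain ⟨s₃, hs₃, hsf'⟩ := nfa_mem_evalFrom_append A hsf
    have hs₃' : s₃ ∈ A.evalFrom {s} ((u.map wrLet ++ [quLet q]) ++ [reLet r]) := by
      simpa [pblock, List.append_assoc] using hs₃
    obtain ⟨s₂, hs₂, hstep₃⟩ := nfa_mem_evalFrom_singleton_append A hs₃'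
    obtain ⟨s₁, hs₁, hstep₂⟩ := nfa_mem_evalFrom_singleton_append A hs₂
    -- the new protocol prefix is correct
    have hprot' : p₁ ++ pblock u q r ∈ P.prot := by
      refine P.prefix_mem _ p₂' ?_ (isProtocol_append_block hp₁ u hqr)
      simpa [List.append_assoc] using hmem
    -- build the run
    have hlist : (pblock u q r ++ p₂').map EndM.lt ++ [EndM.rmark] =
        (u.map wrLet).map EndM.lt ++ (EndM.lt (quLet q) :: EndM.lt (reLet r) ::
          (p₂'.map EndM.lt ++ [EndM.rmark])) := by
      simp [pblock]
    rw [hlist]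
    set V := p₂'.map EndM.lt ++ [EndM.rmark] with hV
    have h1 : Relation.ReflTransGen (ProtStep (autM A) P.prot)
        (MSt.wr s, (u.map wrLet).map EndM.lt ++
          (EndM.lt (quLet q) :: EndM.lt (reLet r) :: V), [], p₁)
        (MSt.wr s₁, EndM.lt (quLet q) :: EndM.lt (reLet r) :: V, [] ++ u, p₁) :=
      run_writes P A u s s₁ [] _ p₁ hs₁
    have h2 : ProtStep (autM A) P.prot
        (MSt.wr s₁, EndM.lt (quLet q) :: EndM.lt (reLet r) :: V, u, p₁)
        (MSt.qu s₂ q, EndM.lt (reLet r) :: V, u, p₁) :=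
      protStep_wr (Or.inr (Or.inr (Or.inl ⟨s₁, q, s₂, hstep₂, rfl⟩))) (by simp) (by simp)
    have h3 : ProtStep (autM A) P.prot
        (MSt.qu s₂ q, EndM.lt (reLet r) :: V, u, p₁)
        (MSt.re s₂ r, EndM.lt (reLet r) :: V, [], p₁ ++ pblock u q r) :=
      protStep_qu ⟨s₂, q, r, rfl⟩ rfl hprot'
    have h4 : ProtStep (autM A) P.prot
        (MSt.re s₂ r, EndM.lt (reLet r) :: V, [], p₁ ++ pblock u q r)
        (MSt.wr s₃, V, [], p₁ ++ pblock u q r) :=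
      protStep_wr (Or.inr (Or.inr (Or.inr (Or.inr ⟨s₂, r, s₃, hstep₃, rfl⟩))))
        (by simp) (by simp)
    have h5 := ih (p₁ ++ pblock u q r) s₃ sf
      (isProtocol_append_block hp₁ u hqr)
      (by simpa [List.append_assoc] using hmem) hacc hsf'
    exact h1.trans (Relation.ReflTransGen.head h2 (Relation.ReflTransGen.head h3
      (Relation.ReflTransGen.head h4 (by simpa [List.append_assoc] using h5))))

theorem lang_superset {w : List (PLet W Q R)} (h1 : w ∈ A.accepts) (h2 : w ∈ P.prot) :
    w ∈ (autM A).Lang P.prot := by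
  obtain ⟨sf, hacc, hev⟩ := h1
  have hev : sf ∈ A.evalFrom A.start w := hev
  rw [nfa_evalFrom_biUnion] at hev
  simp only [Set.mem_iUnion] at hev
  obtain ⟨s, hs, hev⟩ := hev
  refine ⟨w, h2, MSt.fin, rfl, ?_⟩
  refine Relation.ReflTransGen.head
    (protStep_wr (P' := P.prot) (v' := w.map EndM.lt ++ [EndM.rmark])
      (Or.inl ⟨s, hs, rfl⟩) (by simp [tape]) rfl) ?_
  have := run_block P A (P.mem_protocol w h2) [] s sf IsProtocol.nil
    (by simpa using h2) hacc hev
  simpa using this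

theorem lang_eq : (autM A).Lang P.prot = {p | p ∈ A.accepts} ∩ P.prot := by
  ext w
  constructor
  · intro hw
    exact lang_subset P A hw
  · rintro ⟨h1, h2⟩
    exact lang_superset P A h1 h2

/-! ### Relabelling states -/

def relabel {σ S₁ S₂ : Type} (M : ProtAut σ W Q R S₁) (e : S₁ ≃ S₂) :
    ProtAut σ W Q R S₂ where
  isWr s := M.isWr (e.symm s)
  s₀ := e M.s₀
  F := {s | e.symm s ∈ M.F}
  s₀_not_F := by simpa using M.s₀_not_F
  transWr := {t | (e.symm t.1, t.2.1, t.2.2.1, e.symm t.2.2.2) ∈ M.transWr}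
  transQu := {t | (e.symm t.1, t.2.1, t.2.2.1, e.symm t.2.2.2) ∈ M.transQu}
  wr_src := fun t ht => M.wr_src _ ht
  qu_src := fun t ht => M.qu_src _ ht
  qu_tgt := fun t ht => M.qu_tgt _ ht
  transWr_fin := by
    have hinj : Function.Injective
        (fun t : S₂ × Option (EndM σ) × List W × S₂ =>
          (e.symm t.1, t.2.1, t.2.2.1, e.symm t.2.2.2)) := by
      rintro ⟨a1, a2, a3, a4⟩ ⟨b1, b2, b3, b4⟩ h
      simp only [Prod.mk.injEq] at h
      obtain ⟨h1, h2, h3, h4⟩ := h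
      simp [e.symm.injective h1, h2, h3, e.symm.injective h4]
    exact M.transWr_fin.preimage hinj.injOn

theorem relabel_step {σ S₁ S₂ : Type} {M : ProtAut σ W Q R S₁} (e : S₁ ≃ S₂)
    {P' : Set (List (PLet W Q R))} {c c' : PConfig σ W Q R S₁}
    (h : ProtStep M P' c c') :
    ProtStep (relabel M e) P' (e c.1, c.2) (e c'.1, c'.2) := by
  cases h with
  | wr hmem => exact ProtStep.wr (by simpa [relabel] using hmem)
  | qu hmem hp => exact ProtStep.qu (by simpa [relabel] using hmem) hp

theorem relabel_step' {σ S₁ S₂ : Type} {M : ProtAut σ W Q R S₁} (e : S₁ ≃ S₂)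
    {P' : Set (List (PLet W Q R))} {c c' : PConfig σ W Q R S₂}
    (h : ProtStep (relabel M e) P' c c') :
    ProtStep M P' (e.symm c.1, c.2) (e.symm c'.1, c'.2) := by
  cases h with
  | wr hmem => exact ProtStep.wr hmem
  | qu hmem hp => exact ProtStep.qu hmem hp

theorem relabel_lang {σ S₁ S₂ : Type} (M : ProtAut σ W Q R S₁) (e : S₁ ≃ S₂)
    (P' : Set (List (PLet W Q R))) :
    (relabel M e).Lang P' = M.Lang P' := by
  ext w
  constructor
  · rintro ⟨p, hp, sf, hsf, hrun⟩
    refine ⟨p, hp, e.symm sf, hsf, ?_⟩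
    have := Relation.ReflTransGen.lift
      (fun c : PConfig σ W Q R S₂ => ((e.symm c.1, c.2) : PConfig σ W Q R S₁))
      (fun a b h => relabel_step' e h) _ _ hrun
    simpa [relabel, Function.onFun] using this
  · rintro ⟨p, hp, sf, hsf, hrun⟩
    refine ⟨p, hp, e sf, by simpa [relabel] using hsf, ?_⟩
    have := Relation.ReflTransGen.lift
      (fun c : PConfig σ W Q R S₁ => ((e c.1, c.2) : PConfig σ W Q R S₂))
      (fun a b h => relabel_step e h) _ _ hrun
    simpa [relabel] using this

end Stmt2

/-- For every language of correct protocols `PROT` and every NFA `A`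
over the protocol alphabet, there is a `1NB_PROT`-automaton `M` with input alphabet the
protocol alphabet such that `L(M) = L(A) ∩ PROT`; in particular
`L(A) ∩ PROT ≠ ∅ ↔ L(M) ≠ ∅`. -/
theorem stmt2 {W Q R : Type} [Fintype W] [Fintype Q] [Fintype R]
    [Nonempty Q] [Nonempty R]
    (P : ProtLang W Q R) {S : Type} [Fintype S] (A : NFA (PLet W Q R) S) :
    ∃ (n : ℕ) (M : ProtAut (PLet W Q R) W Q R (Fin n)),
      M.Lang P.prot = {p | p ∈ A.accepts} ∩ P.prot ∧
      ((∃ p, p ∈ A.accepts ∧ p ∈ P.prot) ↔ (M.Lang P.prot).Nonempty) := by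
  classical
  refine ⟨Fintype.card (MSt S Q R),
    Stmt2.relabel (Stmt2.autM A) (Fintype.equivFin (MSt S Q R)), ?_, ?_⟩ <;>
    rw [Stmt2.relabel_lang (Stmt2.autM A) (Fintype.equivFin (MSt S Q R)) P.prot,
      Stmt2.lang_eq P A]
  constructor
  · rintro ⟨p, h1, h2⟩; exact ⟨p, h1, h2⟩
  · rintro ⟨p, h1, h2⟩; exact ⟨p, h1, h2⟩
end

section
/- Let PROT be a language of correct protocols and M a 1NB_PROT-automaton over input alphabet Σ. Then there exists a finite-state transducer T_M from Σ to the protocol alphabet Γ = Γ_wr ∪ Γ_qu ∪ Γ_re (the extractor of protocols) such that: (1) for every w ∈ Σ*, w ∈ L(M) if and only if T_M(w) ∩ PROT ≠ ∅; and (2) for every p ∈ PROT, p ∈ T_M(w) if and only if M has an accepting run on w producing the protocol p, i.e., (s₀, ⊢w⊣, ε, ε) ⊢* (s_f, ε, ε, p) for some s_f ∈ F. -/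
/-! ### Auxiliary development for the extractor of protocols -/

namespace Stmt6Aux

variable {W Q R σ S : Type}

lemma fin3_cases (ph : Fin 3) : ph = 0 ∨ ph = 1 ∨ ph = 2 := by
  revert ph; decide

/-- The remaining input tape in phase `ph` (0: before `⊢`, 1: after `⊢`, 2: after `⊣`)
with unread proper input `w`. -/
def rem (ph : Fin 3) (w : List σ) : List (EndM σ) :=
  match ph.1 with
  | 0 => EndM.lmark :: (w.map EndM.lt ++ [EndM.rmark])
  | 1 => w.map EndM.lt ++ [EndM.rmark]
  | _ => []

@[simp] lemma rem_zero (w : List σ) :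
    rem (0 : Fin 3) w = EndM.lmark :: (w.map EndM.lt ++ [EndM.rmark]) := rfl

@[simp] lemma rem_one (w : List σ) :
    rem (1 : Fin 3) w = w.map EndM.lt ++ [EndM.rmark] := rfl

@[simp] lemma rem_two (w : List σ) : rem (2 : Fin 3) w = [] := rfl

/-- Transitions of the extractor of protocols. -/
def extTrans (M : ProtAut σ W Q R S) :
    Set ((S × Fin 3) × Option σ × List (PLet W Q R) × (S × Fin 3)) :=
  {t | (∃ s x s', (s, some EndM.lmark, x, s') ∈ M.transWr ∧
          t = ((s, 0), none, x.map wrLet, (s', 1)))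
     ∨ (∃ s a x s', (s, some (EndM.lt a), x, s') ∈ M.transWr ∧
          t = ((s, 1), some a, x.map wrLet, (s', 1)))
     ∨ (∃ s x s', (s, some EndM.rmark, x, s') ∈ M.transWr ∧
          t = ((s, 1), none, x.map wrLet, (s', 2)))
     ∨ (∃ s x s' ph, (s, none, x, s') ∈ M.transWr ∧
          t = ((s, ph), none, x.map wrLet, (s', ph)))
     ∨ (∃ s q r s' ph, (s, q, r, s') ∈ M.transQu ∧
          t = ((s, ph), none, [quLet q, reLet r], (s', ph)))}

/-- Encoding used to prove finiteness of `extTrans`. -/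
def encode :
    ((S × Option (EndM σ) × List W × S) ⊕ (S × Q × R × S)) × Fin 3 × Fin 3 →
      (S × Fin 3) × Option σ × List (PLet W Q R) × (S × Fin 3)
  | (Sum.inl (s, a, x, s'), ph, ph') =>
      ((s, ph), (match a with | some (EndM.lt c) => some c | _ => none),
        x.map wrLet, (s', ph'))
  | (Sum.inr (s, q, r, s'), ph, ph') =>
      ((s, ph), none, [quLet q, reLet r], (s', ph'))

lemma extTrans_fin [Fintype Q] [Fintype R] [Fintype S] (M : ProtAut σ W Q R S) :
    (extTrans M).Finite := by
  have hD : (((Sum.inl '' M.transWr ∪ Sum.inr '' M.transQu) ×ˢ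
      (Set.univ : Set (Fin 3 × Fin 3)))).Finite :=
    Set.Finite.prod ((M.transWr_fin.image _).union ((Set.toFinite _).image _))
      (Set.toFinite _)
  refine (hD.image encode).subset ?_
  rintro t (⟨s, x, s', ht, rfl⟩ | ⟨s, a, x, s', ht, rfl⟩ | ⟨s, x, s', ht, rfl⟩ |
    ⟨s, x, s', ph, ht, rfl⟩ | ⟨s, q, r, s', ph, ht, rfl⟩)
  · exact ⟨(Sum.inl (s, some EndM.lmark, x, s'), 0, 1),
      ⟨Or.inl ⟨_, ht, rfl⟩, trivial⟩, rfl⟩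
  · exact ⟨(Sum.inl (s, some (EndM.lt a), x, s'), 1, 1),
      ⟨Or.inl ⟨_, ht, rfl⟩, trivial⟩, rfl⟩
  · exact ⟨(Sum.inl (s, some EndM.rmark, x, s'), 1, 2),
      ⟨Or.inl ⟨_, ht, rfl⟩, trivial⟩, rfl⟩
  · exact ⟨(Sum.inl (s, none, x, s'), ph, ph), ⟨Or.inl ⟨_, ht, rfl⟩, trivial⟩, rfl⟩
  · exact ⟨(Sum.inr (s, q, r, s'), ph, ph), ⟨Or.inr ⟨_, ht, rfl⟩, trivial⟩, rfl⟩

/-- The extractor of protocols of `M`. -/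
def extractor [Fintype Q] [Fintype R] [Fintype S] (M : ProtAut σ W Q R S) :
    FST σ (PLet W Q R) (S × Fin 3) where
  init := (M.s₀, 0)
  accept := {f | f.1 ∈ M.F ∧ f.2 = 2}
  trans := extTrans M
  trans_fin := extTrans_fin M

/-- Paths of the extractor starting in phase 2 consume no input and stay in phase 2. -/
lemma path_phase2 [Fintype Q] [Fintype R] [Fintype S] {M : ProtAut σ W Q R S}
    {c c' : S × Fin 3} {u : List σ} {out : List (PLet W Q R)}
    (h : (extractor M).Path c u out c') : c.2 = 2 → u = [] ∧ c'.2 = 2 := by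
  induction h with
  | refl q => exact fun h2 => ⟨rfl, h2⟩
  | step ht _ ih =>
    intro h2
    rcases ht with (⟨s, x, s', ht, heq⟩ | ⟨s, a, x, s', ht, heq⟩ | ⟨s, x, s', ht, heq⟩ |
      ⟨s, x, s', ph, ht, heq⟩ | ⟨s, q, r, s', ph, ht, heq⟩) <;> cases heq
    · simp at h2
    · simp at h2
    · simp at h2
    · simp only at h2
      obtain ⟨h3, h4⟩ := ih h2
      exact ⟨by simp [h3], h4⟩
    · simp only at h2
      obtain ⟨h3, h4⟩ := ih h2
      exact ⟨by simp [h3], h4⟩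

/-- In a protocol, the last letter (if any) is a response letter. -/
lemma isProtocol_getLast {valid : Q → R → Prop} {p : List (PLet W Q R)}
    (h : IsProtocol valid p) (hne : p ≠ []) : ∃ r : R, p.getLast? = some (reLet r) := by
  induction h with
  | nil => exact absurd rfl hne
  | block u q r p' hv hp ih =>
    rcases eq_or_ne p' [] with rfl | hne'
    · exact ⟨r, by simp [pblock]⟩
    · obtain ⟨r', hr'⟩ := ih hne'
      exact ⟨r', by rw [List.getLast?_append_of_ne_nil _ hne', hr']⟩

/-- A protocol cannot end with a nonempty block of write letters. -/
lemma wr_tail_nil {valid : Q → R → Prop} {p x : List (PLet W Q R)} {u : List W}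
    (h : IsProtocol valid p) (he : x ++ u.map wrLet = p) : u = [] := by
  rcases List.eq_nil_or_concat u with rfl | ⟨u', a, rfl⟩
  · rfl
  · exfalso
    subst he
    rw [List.concat_eq_append] at h
    have hne : x ++ (u' ++ [a]).map wrLet ≠ [] := by simp
    obtain ⟨r, hr⟩ := isProtocol_getLast h (by simpa [List.concat_eq_append] using hne)
    rw [List.map_append, ← List.append_assoc] at hr
    simp only [List.map_cons, List.map_nil, List.getLast?_concat] at hr
    simp [wrLet, reLet] at hr

/-- From a path of the extractor we reconstruct a run of `M` (soundness). -/
lemma pathA [Fintype Q] [Fintype R] [Fintype S] (P : ProtLang W Q R)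
    (M : ProtAut σ W Q R S) {c c' : S × Fin 3} {u : List σ} {out : List (PLet W Q R)}
    (hpath : (extractor M).Path c u out c') :
    ∀ qt pcur, pcur ∈ P.prot → pcur ++ (qt.map wrLet ++ out) ∈ P.prot →
    ∃ qt' pfin, pfin ∈ P.prot ∧ pfin ++ qt'.map wrLet = pcur ++ (qt.map wrLet ++ out) ∧
      Relation.ReflTransGen (ProtStep M P.prot)
        (c.1, rem c.2 u, qt, pcur) (c'.1, rem c'.2 [], qt', pfin) := by
  induction hpath with
  | refl q =>
    intro qt pcur h1 h2
    exact ⟨qt, pcur, h1, by simp, Relation.ReflTransGen.refl⟩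
  | @step q q' q'' x y u v ht hrest ih =>
    intro qt pcur h1 h2
    rcases ht with (⟨s, xw, s', ht, heq⟩ | ⟨s, a, xw, s', ht, heq⟩ |
      ⟨s, xw, s', ht, heq⟩ | ⟨s, xw, s', ph, ht, heq⟩ | ⟨s, q₁, r, s', ph, ht, heq⟩) <;>
      cases heq
    · -- left endmarker
      obtain ⟨qt', pfin, hf1, hf2, hrun⟩ := ih (qt ++ xw) pcur h1
        (by simpa [List.append_assoc] using h2)
      refine ⟨qt', pfin, hf1, by simpa [List.append_assoc] using hf2, ?_⟩
      refine Relation.ReflTransGen.head ?_ hrun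
      have := ProtStep.wr (M := M) (P := P.prot) (v := rem 1 u) (u := qt) (p := pcur) ht
      simpa using this
    · -- ordinary input letter
      obtain ⟨qt', pfin, hf1, hf2, hrun⟩ := ih (qt ++ xw) pcur h1
        (by simpa [List.append_assoc] using h2)
      refine ⟨qt', pfin, hf1, by simpa [List.append_assoc] using hf2, ?_⟩
      refine Relation.ReflTransGen.head ?_ hrun
      have := ProtStep.wr (M := M) (P := P.prot) (v := rem 1 u) (u := qt) (p := pcur) ht
      simpa using this
    · -- right endmarker
      obtain ⟨rfl, -⟩ := path_phase2 hrest rfl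
      obtain ⟨qt', pfin, hf1, hf2, hrun⟩ := ih (qt ++ xw) pcur h1
        (by simpa [List.append_assoc] using h2)
      refine ⟨qt', pfin, hf1, by simpa [List.append_assoc] using hf2, ?_⟩
      refine Relation.ReflTransGen.head ?_ hrun
      have := ProtStep.wr (M := M) (P := P.prot) (v := rem 2 []) (u := qt) (p := pcur) ht
      simpa using this
    · -- epsilon write move
      obtain ⟨qt', pfin, hf1, hf2, hrun⟩ := ih (qt ++ xw) pcur h1
        (by simpa [List.append_assoc] using h2)
      refine ⟨qt', pfin, hf1, by simpa [List.append_assoc] using hf2, ?_⟩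
      refine Relation.ReflTransGen.head ?_ hrun
      have := ProtStep.wr (M := M) (P := P.prot) (a := none) (v := rem ph u) (u := qt)
        (p := pcur) ht
      simpa using this
    · -- query move
      obtain ⟨r₀, hr₀⟩ := P.extend pcur h1 qt q₁
      have hrr : r = r₀ := P.resp_unique pcur qt q₁ r₀ r v hr₀
        (by simpa [pblock, List.append_assoc] using h2)
      rw [← hrr] at hr₀
      obtain ⟨qt', pfin, hf1, hf2, hrun⟩ := ih [] (pcur ++ pblock qt q₁ r) hr₀
        (by simpa [pblock, List.append_assoc] using h2)
      refine ⟨qt', pfin, hf1, by simpa [pblock, List.append_assoc] using hf2, ?_⟩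
      refine Relation.ReflTransGen.head ?_ hrun
      have := ProtStep.qu (M := M) (P := P.prot) (v := rem ph u) ht hr₀
      simpa using this

/-- From a run of `M` we extract a path of the extractor (completeness). -/
lemma pathB [Fintype Q] [Fintype R] [Fintype S] (P : ProtLang W Q R)
    (M : ProtAut σ W Q R S) {p : List (PLet W Q R)} {sf : S} {c : PConfig σ W Q R S}
    (h : Relation.ReflTransGen (ProtStep M P.prot) c (sf, [], [], p)) :
    ∀ s ph w qt pcur, c = (s, rem ph w, qt, pcur) → (ph = 2 → w = []) →
    ∃ out, pcur ++ (qt.map wrLet ++ out) = p ∧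
      (extractor M).Path (s, ph) w out (sf, 2) := by
  induction h using Relation.ReflTransGen.head_induction_on with
  | refl =>
    intro s ph w qt pcur heq h2
    simp only [Prod.mk.injEq] at heq
    obtain ⟨rfl, heq2, rfl, rfl⟩ := heq
    rcases fin3_cases ph with rfl | rfl | rfl
    · simp at heq2
    · simp at heq2
    · refine ⟨[], by simp, ?_⟩
      rw [h2 rfl]
      exact FST.Path.refl _
  | head hstep hrest ih =>
    intro s ph w qt pcur heq h2
    subst heq
    generalize hv : rem ph w = vv at hstep
    cases hstep with
    | @wr s₁ s' a x v₁ u₁ p₁ hmem =>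
      cases a with
      | none =>
        have hv' : v₁ = rem ph w := by simpa using hv.symm
        obtain ⟨out, ho1, ho2⟩ := ih s' ph w (qt ++ x) pcur (by rw [hv']) h2
        refine ⟨x.map wrLet ++ out, by simpa [List.append_assoc] using ho1, ?_⟩
        have hstep' : ((s, ph), (none : Option σ), x.map wrLet, (s', ph)) ∈
            (extractor M).trans := Or.inr (Or.inr (Or.inr (Or.inl ⟨s, x, s', ph, hmem, rfl⟩)))
        simpa using FST.Path.step hstep' ho2
      | some e =>
        cases e with
        | lmark =>
          rcases fin3_cases ph with rfl | rfl | rfl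
          · -- phase 0: consume the left endmarker
            have hv₁ : v₁ = rem 1 w := by
              rw [rem_zero] at hv
              simpa using hv.symm
            obtain ⟨out, ho1, ho2⟩ := ih s' 1 w (qt ++ x) pcur (by rw [hv₁])
              (fun hh => absurd hh (by decide))
            refine ⟨x.map wrLet ++ out, by simpa [List.append_assoc] using ho1, ?_⟩
            have hstep' : ((s, (0 : Fin 3)), (none : Option σ), x.map wrLet, (s', 1)) ∈
                (extractor M).trans := Or.inl ⟨s, x, s', hmem, rfl⟩
            simpa using FST.Path.step hstep' ho2
          · exfalso
            rcases w with _ | ⟨cw, w'⟩ <;> simp at hv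
          · exfalso; simp at hv
        | rmark =>
          rcases fin3_cases ph with rfl | rfl | rfl
          · exfalso; simp at hv
          · -- phase 1: consume right endmarker; w must be empty
            rcases w with _ | ⟨cw, w'⟩
            · have hv₁ : v₁ = rem 2 ([] : List σ) := by
                rw [rem_one] at hv
                simpa using hv.symm
              obtain ⟨out, ho1, ho2⟩ := ih s' 2 [] (qt ++ x) pcur (by rw [hv₁])
                (fun _ => rfl)
              refine ⟨x.map wrLet ++ out, by simpa [List.append_assoc] using ho1, ?_⟩
              have hstep' : ((s, (1 : Fin 3)), (none : Option σ), x.map wrLet,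
                  (s', 2)) ∈ (extractor M).trans :=
                Or.inr (Or.inr (Or.inl ⟨s, x, s', hmem, rfl⟩))
              simpa using FST.Path.step hstep' ho2
            · exfalso; simp at hv
          · exfalso; simp at hv
        | lt cσ =>
          rcases fin3_cases ph with rfl | rfl | rfl
          · exfalso; simp at hv
          · -- phase 1: consume an input letter; w = cσ :: w'
            rcases w with _ | ⟨cw, w'⟩
            · exfalso; simp at hv
            · rw [rem_one, List.map_cons, List.cons_append, Option.toList_some,
                List.singleton_append] at hv
              injection hv with hcc hv₁
              injection hcc with hcc
              subst hcc
              rw [eq_comm, ← rem_one] at hv₁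
              obtain ⟨out, ho1, ho2⟩ := ih s' 1 w' (qt ++ x) pcur (by rw [← hv₁])
                (fun hh => absurd hh (by decide))
              refine ⟨x.map wrLet ++ out, by simpa [List.append_assoc] using ho1, ?_⟩
              have hstep' : ((s, (1 : Fin 3)), some cw, x.map wrLet, (s', 1)) ∈
                  (extractor M).trans := Or.inr (Or.inl ⟨s, cw, x, s', hmem, rfl⟩)
              simpa using FST.Path.step hstep' ho2
          · exfalso; simp at hv
    | @qu s₁ s' q₁ r v₁ u₁ p₁ hmem hprot =>
      obtain ⟨out, ho1, ho2⟩ := ih s' ph w [] (pcur ++ pblock qt q₁ r)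
        (by rw [hv]) h2
      refine ⟨[quLet q₁, reLet r] ++ out, ?_, ?_⟩
      · rw [← ho1]; simp [pblock, List.append_assoc]
      · have hstep' : ((s, ph), (none : Option σ), [quLet q₁, reLet r], (s', ph)) ∈
            (extractor M).trans :=
          Or.inr (Or.inr (Or.inr (Or.inr ⟨s, q₁, r, s', ph, hmem, rfl⟩)))
        simpa using FST.Path.step hstep' ho2

/-! ### Transport of an FST along an equivalence of state types -/

def fstMap {α β Q₀ Q₁ : Type} (T : FST α β Q₀) (e : Q₀ ≃ Q₁) : FST α β Q₁ where
  init := e T.init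
  accept := {q | e.symm q ∈ T.accept}
  trans := (fun t => (e t.1, t.2.1, t.2.2.1, e t.2.2.2)) '' T.trans
  trans_fin := T.trans_fin.image _

lemma fstMap_path {α β Q₀ Q₁ : Type} {T : FST α β Q₀} (e : Q₀ ≃ Q₁)
    {q q' : Q₀} {u : List α} {v : List β} (h : T.Path q u v q') :
    (fstMap T e).Path (e q) u v (e q') := by
  induction h with
  | refl q => exact FST.Path.refl _
  | step ht _ ih => exact FST.Path.step ⟨_, ht, rfl⟩ ih

lemma fstMap_path_inv {α β Q₀ Q₁ : Type} {T : FST α β Q₀} (e : Q₀ ≃ Q₁)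
    {q q' : Q₁} {u : List α} {v : List β} (h : (fstMap T e).Path q u v q') :
    T.Path (e.symm q) u v (e.symm q') := by
  induction h with
  | refl q => exact FST.Path.refl _
  | step ht _ ih =>
    obtain ⟨⟨t1, t2, t3, t4⟩, htT, heq⟩ := ht
    cases heq
    simpa using FST.Path.step htT (by simpa using ih)

lemma fstMap_rel {α β Q₀ Q₁ : Type} (T : FST α β Q₀) (e : Q₀ ≃ Q₁)
    (u : List α) (v : List β) : (fstMap T e).Rel u v ↔ T.Rel u v := by
  constructor
  · rintro ⟨f, hf, hp⟩
    exact ⟨e.symm f, hf, by simpa [fstMap] using fstMap_path_inv e hp⟩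
  · rintro ⟨f, hf, hp⟩
    exact ⟨e f, by simpa [fstMap] using hf, fstMap_path e hp⟩


/-- Main lemma: the full statement, proved inside the auxiliary namespace. -/
lemma main {W Q R σ : Type} [Fintype W] [Fintype Q] [Fintype R]
    [Nonempty Q] [Nonempty R] [Fintype σ]
    (P : ProtLang W Q R) {S : Type} [Fintype S] (M : ProtAut σ W Q R S) :
    ∃ (m : ℕ) (T : FST σ (PLet W Q R) (Fin m)),
      (∀ w : List σ, w ∈ M.Lang P.prot ↔ ∃ p, T.Rel w p ∧ p ∈ P.prot) ∧
      (∀ (w : List σ) (p : List (PLet W Q R)), p ∈ P.prot →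
        (T.Rel w p ↔ M.AcceptsWith P.prot w p)) := by
  classical
  have key : ∀ (w : List σ) (p : List (PLet W Q R)), p ∈ P.prot →
      ((fstMap (extractor M) (Fintype.equivFin (S × Fin 3))).Rel w p ↔
        M.AcceptsWith P.prot w p) := by
    intro w p hp
    rw [fstMap_rel]
    constructor
    · rintro ⟨⟨sf, phf⟩, ⟨hsf, hph⟩, hpath⟩
      simp only at hsf hph
      subst hph
      obtain ⟨qt', pfin, h1, h2, hrun⟩ := pathA P M hpath [] [] P.empty_mem
        (by simpa using hp)
      have h2' : pfin ++ qt'.map wrLet = p := by simpa using h2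
      have hqt : qt' = [] := wr_tail_nil (P.mem_protocol p hp) h2'
      subst hqt
      have hpfin : pfin = p := by simpa using h2'
      subst hpfin
      exact ⟨sf, hsf, by simpa [tape, extractor] using hrun⟩
    · rintro ⟨sf, hsf, hrun⟩
      obtain ⟨out, ho1, ho2⟩ := pathB P M hrun M.s₀ 0 w [] [] (by simp [tape])
        (fun h => absurd h (by decide))
      have hop : out = p := by simpa using ho1
      subst hop
      exact ⟨(sf, 2), ⟨hsf, rfl⟩, ho2⟩
  refine ⟨Fintype.card (S × Fin 3), fstMap (extractor M) (Fintype.equivFin (S × Fin 3)),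
    ?_, key⟩
  intro w
  constructor
  · rintro ⟨p, hp, hacc⟩
    exact ⟨p, (key w p hp).mpr hacc, hp⟩
  · rintro ⟨p, hrel, hp⟩
    exact ⟨p, hp, (key w p hp).mp hrel⟩

end Stmt6Aux

/-- For every language of correct protocols `PROT` and
`1NB_PROT`-automaton `M` over `σ` there exists an extractor of protocols: a transducer
`T_M` from `σ` to the protocol alphabet such that (1) `w ∈ L(M) ↔ T_M(w) ∩ PROT ≠ ∅`,
and (2) for `p ∈ PROT`, `p ∈ T_M(w)` iff `M` has an accepting run on `w` producing `p`. -/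
theorem stmt6 {W Q R σ : Type} [Fintype W] [Fintype Q] [Fintype R]
    [Nonempty Q] [Nonempty R] [Fintype σ]
    (P : ProtLang W Q R) {S : Type} [Fintype S] (M : ProtAut σ W Q R S) :
    ∃ (m : ℕ) (T : FST σ (PLet W Q R) (Fin m)),
      (∀ w : List σ, w ∈ M.Lang P.prot ↔ ∃ p, T.Rel w p ∧ p ∈ P.prot) ∧
      (∀ (w : List σ) (p : List (PLet W Q R)), p ∈ P.prot →
        (T.Rel w p ↔ M.AcceptsWith P.prot w p)) :=
  Stmt6Aux.main P M
end

section
/- Let PROT be a language of correct protocols that additionally has a reset operation, i.e., satisfies axiom (vi): there exist q ∈ Γ_qu and r ∈ Γ_re such that for all p₁, p₂ ∈ PROT, p₁ q r p₂ ∈ PROT. Then the class CL(1NB_PROT A) of languages accepted by 1NB_PROT-automata is closed under concatenation and under Kleene star: if L₁, L₂ ∈ CL(1NB_PROT A) then L₁·L₂ ∈ CL(1NB_PROT A) and L₁* ∈ CL(1NB_PROT A). -/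
/-! ### Auxiliary machinery -/

section Aux

open Relation

/-- Runs of a given length. -/
inductive RunN {α : Type*} (r : α → α → Prop) : ℕ → α → α → Prop
  | refl (a : α) : RunN r 0 a a
  | head {a b c : α} {n : ℕ} : r a b → RunN r n b c → RunN r (n + 1) a c

lemma RunN.tail {α : Type*} {r : α → α → Prop} :
    ∀ {n a b c}, RunN r n a b → r b c → RunN r (n + 1) a c := by
  intro n a b c h hb
  induction h with
  | refl a => exact .head hb (.refl _)
  | head h₁ h₂ ih => exact .head h₁ (ih hb)

lemma runN_of_rtg {α : Type*} {r : α → α → Prop} {a b : α}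
    (h : ReflTransGen r a b) : ∃ n, RunN r n a b := by
  induction h with
  | refl => exact ⟨0, .refl a⟩
  | tail h₁ h₂ ih => obtain ⟨n, hn⟩ := ih; exact ⟨n + 1, hn.tail h₂⟩

lemma rtg_of_runN {α : Type*} {r : α → α → Prop} {n : ℕ} {a b : α}
    (h : RunN r n a b) : ReflTransGen r a b := by
  induction h with
  | refl a => exact .refl
  | head h₁ h₂ ih => exact .head h₁ ih

end Aux

section Phase

variable {σ W Q R : Type}

/-- actual input consumed by the virtualized transition -/
def vi : Option (EndM σ) → Option (EndM σ)
  | some (EndM.lt c) => some (EndM.lt c)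
  | _ => none

/-- guard for the virtualized transition -/
def vg : Option (EndM σ) → Bool → Bool → Prop
  | none, _, _ => True
  | some (EndM.lt _), g, e => g = true ∧ e = false
  | some EndM.lmark, g, e => g = false ∧ e = false
  | some EndM.rmark, g, e => g = true ∧ e = false

/-- update of the "left marker consumed" flag -/
def gU : Option (EndM σ) → Bool → Bool
  | some EndM.lmark, _ => true
  | _, g => g

/-- update of the "right marker consumed" flag -/
def eU : Option (EndM σ) → Bool → Bool
  | some EndM.rmark, _ => true
  | _, e => e

/-- the tape of a virtualized phase -/
def vtape (g e : Bool) (ws : List σ) : List (EndM σ) :=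
  (if g then [] else [EndM.lmark]) ++ ws.map EndM.lt ++ (if e then [] else [EndM.rmark])

lemma vtape_ff (ws : List σ) : vtape false false ws = tape ws := by
  simp [vtape, tape]

lemma vtape_eq_nil {g e : Bool} {ws : List σ} (h : vtape g e ws = []) :
    g = true ∧ e = true ∧ ws = [] := by
  cases g <;> cases e <;> cases ws <;> simp_all [vtape]

variable {S : Type}

lemma step_wr' {M : ProtAut σ W Q R S} {P : Set (List (PLet W Q R))}
    {s s' : S} {a : Option (EndM σ)} {x : List W} {v v' : List (EndM σ)}
    {u u' : List W} {p : List (PLet W Q R)}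
    (h : (s, a, x, s') ∈ M.transWr) (hv : v = a.toList ++ v') (hu : u' = u ++ x) :
    ProtStep M P (s, v, u, p) (s', v', u', p) := by
  subst hv hu; exact .wr h

lemma step_qu' {M : ProtAut σ W Q R S} {P : Set (List (PLet W Q R))}
    {s s' : S} {q : Q} {r : R} {v : List (EndM σ)} {u : List W}
    {p p' : List (PLet W Q R)}
    (h : (s, q, r, s') ∈ M.transQu) (hm : p ++ pblock u q r ∈ P)
    (hp : p' = p ++ pblock u q r) :
    ProtStep M P (s, v, u, p) (s', v, [], p') := by
  subst hp; exact .qu h hm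

end Phase

section Prot

variable {W Q R : Type} (P : ProtLang W Q R)

/-- `p₀` is an absorbing member of `P`. -/
def Abs (p₀ : List (PLet W Q R)) : Prop :=
  p₀ ∈ P.prot ∧ ∀ x ∈ P.prot, p₀ ++ x ∈ P.prot

lemma abs_nil : Abs P ([] : List (PLet W Q R)) :=
  ⟨P.empty_mem, fun x hx => by simpa using hx⟩

lemma abs_block {p₀ p' : List (PLet W Q R)} (hA : Abs P p₀) (hp : p' ∈ P.prot)
    {u : List W} {q : Q} {r : R}
    (h : p₀ ++ (p' ++ pblock u q r) ∈ P.prot) : p' ++ pblock u q r ∈ P.prot := by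
  obtain ⟨r', hr'⟩ := P.extend p' hp u q
  have h1 : (p₀ ++ p') ++ pblock u q r' ∈ P.prot := by
    rw [List.append_assoc]; exact hA.2 _ hr'
  have h2 : (p₀ ++ p') ++ pblock u q r ++ [] ∈ P.prot := by
    rw [List.append_nil, List.append_assoc]; exact h
  have := P.resp_unique (p₀ ++ p') u q r' r [] h1 h2
  rw [this]; exact hr'

variable {q₀ : Q} {r₀ : R}
variable (hrs : ∀ p₁ ∈ P.prot, ∀ p₂ ∈ P.prot, p₁ ++ pblock ([] : List W) q₀ r₀ ++ p₂ ∈ P.prot)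
include hrs

lemma abs_reset {p' : List (PLet W Q R)} (hp : p' ∈ P.prot) {x : List (PLet W Q R)}
    (hx : x ∈ P.prot) : p' ++ pblock ([] : List W) q₀ r₀ ++ x ∈ P.prot :=
  hrs p' hp x hx

lemma abs_step {p₀ p' : List (PLet W Q R)} (hA : Abs P p₀) (hp : p' ∈ P.prot) :
    Abs P (p₀ ++ (p' ++ pblock ([] : List W) q₀ r₀)) := by
  constructor
  · have := hrs p' hp [] P.empty_mem
    rw [List.append_nil] at this
    exact hA.2 _ this
  · intro x hx
    have := hrs p' hp x hx
    rw [List.append_assoc, List.append_assoc]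
    rw [← List.append_assoc p']
    exact hA.2 _ this

end Prot

section Emb

open Relation

lemma isEmpty_append' {α : Type*} (u x : List α) :
    (u ++ x).isEmpty = (u.isEmpty && x.isEmpty) := by cases u <;> simp

variable {σ W Q R S T : Type} (P : ProtLang W Q R)
variable (M : ProtAut σ W Q R S) (C : ProtAut σ W Q R T)
variable (ι : S → Bool → Bool → Bool → T)
variable (EW : Set (T × Option (EndM σ) × List W × T)) (EQ : Set (T × Q × R × T))

/-- `ι` embeds the virtualization of `M` into `C`, with exit transitions `EW`, `EQ`. -/
structure PhaseEmb : Prop where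
  inj : ∀ {s g e k s' g' e' k'}, ι s g e k = ι s' g' e' k' →
      s = s' ∧ g = g' ∧ e = e' ∧ k = k'
  wf : ∀ {s a x s'} (g e k : Bool), (s, a, x, s') ∈ M.transWr → vg a g e →
      (ι s g e k, vi a, x, ι s' (gU a g) (eU a e) (k && x.isEmpty)) ∈ C.transWr
  qf : ∀ {s q r s'} (g e k : Bool), (s, q, r, s') ∈ M.transQu →
      (ι s g e k, q, r, ι s' g e true) ∈ C.transQu
  wb : ∀ t ∈ C.transWr, ∀ s g e k, t.1 = ι s g e k →
      (∃ a x s', (s, a, x, s') ∈ M.transWr ∧ vg a g e ∧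
        t = (ι s g e k, vi a, x, ι s' (gU a g) (eU a e) (k && x.isEmpty))) ∨ t ∈ EW
  qb : ∀ t ∈ C.transQu, ∀ s g e k, t.1 = ι s g e k →
      (∃ q r s', (s, q, r, s') ∈ M.transQu ∧ t = (ι s g e k, q, r, ι s' g e true)) ∨ t ∈ EQ

variable {P M C ι EW EQ}

lemma genFwd (E : PhaseEmb M C ι EW EQ) (p₀ : List (PLet W Q R)) (hA : Abs P p₀)
    {c c' : PConfig σ W Q R S} (hrun : ReflTransGen (ProtStep M P.prot) c c') :
    ∀ s g e (ws : List σ) u p', c = (s, vtape g e ws, u, p') →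
    (e = true → g = true ∧ ws = []) →
    ∃ s' g' e' ws' u' p'', c' = (s', vtape g' e' ws', u', p'') ∧
      (e' = true → g' = true ∧ ws' = []) ∧
      ∀ vr, ReflTransGen (ProtStep C P.prot)
        (ι s g e u.isEmpty, ws.map EndM.lt ++ vr, u, p₀ ++ p')
        (ι s' g' e' u'.isEmpty, ws'.map EndM.lt ++ vr, u', p₀ ++ p'') := by
  induction hrun using Relation.ReflTransGen.head_induction_on with
  | refl =>
    intro s g e ws u p' hc hgw
    exact ⟨s, g, e, ws, u, p', hc, hgw, fun vr => .refl⟩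
  | head h₁ h₂ ih =>
    intro s g e ws u p' hc hgw
    cases h₁ with
    | @wr s₁ s₁' a x v u₁ p₁ hT =>
      simp only [Prod.mk.injEq] at hc
      obtain ⟨hs, hv, hu, hp⟩ := hc
      subst hs hu hp
      cases a with
      | none =>
        simp only [Option.toList, List.nil_append] at hv
        obtain ⟨s', g', e', ws', u', p'', hc', hgw', hrun'⟩ :=
          ih s₁' g e ws (u₁ ++ x) p₁ (by rw [hv]) hgw
        refine ⟨s', g', e', ws', u', p'', hc', hgw', fun vr => ?_⟩
        refine ReflTransGen.head (step_wr' (v' := ws.map EndM.lt ++ vr)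
          (E.wf g e u₁.isEmpty hT trivial) rfl rfl) ?_
        rw [← isEmpty_append']
        exact hrun' vr
      | some ℓ =>
        simp only [Option.toList, List.singleton_append] at hv
        rcases e with _ | _
        · rcases g with _ | _
          · -- g = false, e = false : head of tape is ⊢
            rcases ℓ with c | _ | _
            · simp [vtape] at hv
            · -- ℓ = lmark
              simp only [vtape] at hv ⊢
              simp at hv
              obtain ⟨s', g', e', ws', u', p'', hc', hgw', hrun'⟩ :=
                ih s₁' true false ws (u₁ ++ x) p₁
                  (by simp [vtape, hv]) (by simp)
              refine ⟨s', g', e', ws', u', p'', hc', hgw', fun vr => ?_⟩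
              refine ReflTransGen.head (step_wr' (v' := ws.map EndM.lt ++ vr)
                (E.wf (a := some EndM.lmark) false false u₁.isEmpty hT
                  ⟨rfl, rfl⟩) rfl rfl) ?_
              rw [← isEmpty_append']
              exact hrun' vr
            · simp [vtape] at hv
          · -- g = true, e = false
            rcases ws with _ | ⟨c₀, ws₀⟩
            · -- ws = [] : head is ⊣
              rcases ℓ with c | _ | _
              · simp [vtape] at hv
              · simp [vtape] at hv
              · simp [vtape] at hv
                obtain ⟨s', g', e', ws', u', p'', hc', hgw', hrun'⟩ :=
                  ih s₁' true true [] (u₁ ++ x) p₁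
                    (by simp [vtape, hv]) (fun _ => ⟨rfl, rfl⟩)
                refine ⟨s', g', e', ws', u', p'', hc', hgw', fun vr => ?_⟩
                refine ReflTransGen.head (step_wr' (v' := vr)
                  (E.wf (a := some EndM.rmark) true false u₁.isEmpty hT
                    ⟨rfl, rfl⟩) rfl rfl) ?_
                rw [← isEmpty_append']
                exact hrun' vr
            · -- ws = c₀ :: ws₀ : head is lt c₀
              rcases ℓ with c | _ | _
              · simp [vtape] at hv
                obtain ⟨rfl, hv⟩ := hv
                obtain ⟨s', g', e', ws', u', p'', hc', hgw', hrun'⟩ :=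
                  ih s₁' true false ws₀ (u₁ ++ x) p₁
                    (by simp [vtape, hv]) (by simp)
                refine ⟨s', g', e', ws', u', p'', hc', hgw', fun vr => ?_⟩
                refine ReflTransGen.head (step_wr' (v' := ws₀.map EndM.lt ++ vr)
                  (E.wf (a := some (EndM.lt c)) true false u₁.isEmpty hT
                    ⟨rfl, rfl⟩) rfl rfl) ?_
                rw [← isEmpty_append']
                exact hrun' vr
              · simp [vtape] at hv
              · simp [vtape] at hv
        · -- e = true
          obtain ⟨rfl, rfl⟩ := hgw rfl
          simp [vtape] at hv
    | @qu s₁ s₁' qq rr v u₁ p₁ hT hmem =>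
      simp only [Prod.mk.injEq] at hc
      obtain ⟨hs, hv, hu, hp⟩ := hc
      subst hs hu hp
      obtain ⟨s', g', e', ws', u', p'', hc', hgw', hrun'⟩ :=
        ih s₁' g e ws [] (p₁ ++ pblock u₁ qq rr) (by rw [hv]) hgw
      refine ⟨s', g', e', ws', u', p'', hc', hgw', fun vr => ?_⟩
      refine ReflTransGen.head
        (b := (ι s₁' g e true, List.map EndM.lt ws ++ vr, [],
          p₀ ++ (p₁ ++ pblock u₁ qq rr)))
        (step_qu' (E.qf g e u₁.isEmpty hT) ?_ ?_) ?_
      · rw [List.append_assoc]; exact hA.2 _ hmem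
      · rw [List.append_assoc]
      · exact hrun' vr

end Emb

section Back

open Relation

variable {σ W Q R S T : Type} {P : ProtLang W Q R}
variable {M : ProtAut σ W Q R S} {C : ProtAut σ W Q R T}
variable {ι : S → Bool → Bool → Bool → T}
variable {EW : Set (T × Option (EndM σ) × List W × T)} {EQ : Set (T × Q × R × T)}

lemma genBack (E : PhaseEmb M C ι EW EQ) (p₀ : List (PLet W Q R)) (hA : Abs P p₀) :
    ∀ n (s : S) (g e k : Bool) (v : List (EndM σ)) (u : List W)
      (pm : List (PLet W Q R)) (c₂ : PConfig σ W Q R T),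
    RunN (ProtStep C P.prot) n (ι s g e k, v, u, p₀ ++ pm) c₂ →
    pm ∈ P.prot → (k = true → u = []) → (e = true → g = true) →
    (∃ s' g' e' k' v' u' pm', c₂ = (ι s' g' e' k', v', u', p₀ ++ pm')) ∨
    (∃ m, m < n ∧ ∃ ws v₁ s₁ g₁ e₁ k₁ u₁ pm₁,
      v = ws.map EndM.lt ++ v₁ ∧ (e = true → ws = []) ∧
      ReflTransGen (ProtStep M P.prot) (s, vtape g e ws, u, pm)
        (s₁, vtape g₁ e₁ [], u₁, pm₁) ∧
      pm₁ ∈ P.prot ∧ (k₁ = true → u₁ = []) ∧ (e₁ = true → g₁ = true) ∧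
      ((∃ a x t', (ι s₁ g₁ e₁ k₁, a, x, t') ∈ C.transWr ∧ (ι s₁ g₁ e₁ k₁, a, x, t') ∈ EW ∧
          ∃ v₂, v₁ = a.toList ++ v₂ ∧
            RunN (ProtStep C P.prot) m (t', v₂, u₁ ++ x, p₀ ++ pm₁) c₂) ∨
       (∃ qq rr t', (ι s₁ g₁ e₁ k₁, qq, rr, t') ∈ C.transQu ∧
          (ι s₁ g₁ e₁ k₁, qq, rr, t') ∈ EQ ∧
          (p₀ ++ pm₁) ++ pblock u₁ qq rr ∈ P.prot ∧
          RunN (ProtStep C P.prot) m (t', v₁, [], (p₀ ++ pm₁) ++ pblock u₁ qq rr) c₂))) := by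
  intro n
  induction n with
  | zero =>
    intro s g e k v u pm c₂ hrun hpm hk he
    cases hrun
    exact Or.inl ⟨s, g, e, k, v, u, pm, rfl⟩
  | succ n IH =>
    intro s g e k v u pm c₂ hrun hpm hk he
    cases hrun with
    | head hstep hrest =>
      generalize hcb : ((ι s g e k, v, u, p₀ ++ pm) : PConfig σ W Q R T) = c₁ at hstep
      cases hstep with
      | @wr s₂ t' a x v₂ u₂ p₂ hT =>
        simp only [Prod.mk.injEq] at hcb
        obtain ⟨hs, hv, hu, hp⟩ := hcb
        subst hs hu hp
        rcases E.wb _ hT s g e k rfl with ⟨a₀, x₀, s', hM, hvg, heq⟩ | hEW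
        · simp only [Prod.mk.injEq, true_and] at heq
          obtain ⟨ha, hx, ht⟩ := heq
          subst ha hx ht
          have hk' : (k && x.isEmpty) = true → u ++ x = [] := by
            intro h
            rw [Bool.and_eq_true, List.isEmpty_iff] at h
            rw [hk h.1, h.2, List.append_nil]
          have he' : eU a₀ e = true → gU a₀ g = true := by
            cases a₀ with
            | none => exact he
            | some ℓ =>
              cases ℓ with
              | lt c => obtain ⟨rfl, rfl⟩ := hvg; simp [eU, gU]
              | lmark => obtain ⟨rfl, rfl⟩ := hvg; simp [eU, gU]
              | rmark => obtain ⟨rfl, rfl⟩ := hvg; simp [eU, gU]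
          rcases IH s' (gU a₀ g) (eU a₀ e) (k && x.isEmpty) v₂ (u ++ x) pm c₂
              hrest hpm hk' he' with hL | ⟨m, hm, ws', v₁, s₁, g₁, e₁, k₁, u₁, pm₁,
              hv', hws', hMrun, hpm₁, hk₁, he₁, hexit⟩
          · exact Or.inl hL
          · refine Or.inr ⟨m, Nat.lt_succ_of_lt hm, ?_⟩
            cases a₀ with
            | none =>
              refine ⟨ws', v₁, s₁, g₁, e₁, k₁, u₁, pm₁, ?_, ?_, ?_, hpm₁, hk₁, he₁, hexit⟩
              · simpa [vi, hv'] using hv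
              · intro h; exact hws' h
              · exact ReflTransGen.head (step_wr' hM rfl rfl) hMrun
            | some ℓ =>
              cases ℓ with
              | lt c =>
                obtain ⟨rfl, rfl⟩ := hvg
                refine ⟨c :: ws', v₁, s₁, g₁, e₁, k₁, u₁, pm₁, ?_, ?_, ?_,
                  hpm₁, hk₁, he₁, hexit⟩
                · simp only [vi] at hv
                  simp [hv, hv']
                · simp
                · refine ReflTransGen.head (step_wr' hM ?_ rfl) hMrun
                  simp [vtape, gU, eU]
              | lmark =>
                obtain ⟨rfl, rfl⟩ := hvg
                refine ⟨ws', v₁, s₁, g₁, e₁, k₁, u₁, pm₁, ?_, ?_, ?_,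
                  hpm₁, hk₁, he₁, hexit⟩
                · simpa [vi, hv'] using hv
                · simp
                · refine ReflTransGen.head (step_wr' hM ?_ rfl) hMrun
                  simp [vtape, gU, eU]
              | rmark =>
                obtain ⟨rfl, rfl⟩ := hvg
                have hws0 : ws' = [] := hws' (by simp [eU])
                subst hws0
                refine ⟨[], v₁, s₁, g₁, e₁, k₁, u₁, pm₁, ?_, ?_, ?_,
                  hpm₁, hk₁, he₁, hexit⟩
                · simpa [vi, hv'] using hv
                · simp
                · refine ReflTransGen.head (step_wr' hM ?_ rfl) hMrun
                  simp [vtape, gU, eU]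
        · refine Or.inr ⟨n, Nat.lt_succ_self n, [], v, s, g, e, k, u, pm,
            by simp, fun _ => rfl, .refl, hpm, hk, he, Or.inl ⟨a, x, t', hT, hEW,
            v₂, hv, hrest⟩⟩
      | @qu s₂ t' qq rr v₂ u₂ p₂ hT hmem =>
        simp only [Prod.mk.injEq] at hcb
        obtain ⟨hs, hv, hu, hp⟩ := hcb
        subst hs hu hp hv
        rcases E.qb _ hT s g e k rfl with ⟨qq', rr', s', hM, heq⟩ | hEQ
        · simp only [Prod.mk.injEq, true_and] at heq
          obtain ⟨hq, hr, ht⟩ := heq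
          subst hq hr ht
          have hmem' : pm ++ pblock u qq rr ∈ P.prot := by
            refine abs_block P hA hpm ?_
            rw [← List.append_assoc]; exact hmem
          have hrest' : RunN (ProtStep C P.prot) n
              (ι s' g e true, v, [], p₀ ++ (pm ++ pblock u qq rr)) c₂ := by
            rw [← List.append_assoc]; exact hrest
          rcases IH s' g e true v [] (pm ++ pblock u qq rr) c₂ hrest' hmem'
              (fun _ => rfl) he with hL | ⟨m, hm, ws', v₁, s₁, g₁, e₁, k₁, u₁, pm₁,
              hv', hws', hMrun, hpm₁, hk₁, he₁, hexit⟩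
          · exact Or.inl hL
          · refine Or.inr ⟨m, Nat.lt_succ_of_lt hm, ws', v₁, s₁, g₁, e₁, k₁, u₁, pm₁,
              hv', hws', ?_, hpm₁, hk₁, he₁, hexit⟩
            exact ReflTransGen.head (step_qu' hM hmem' rfl) hMrun
        · exact Or.inr ⟨n, Nat.lt_succ_self n, [], v, s, g, e, k, u, pm,
            by simp, fun _ => rfl, .refl, hpm, hk, he, Or.inr ⟨qq, rr, t', hT, hEQ,
            hmem, hrest⟩⟩

end Back

section Reindex

open Relation

variable {σ W Q R S T : Type}

/-- Transport an automaton along a bijection of state sets. -/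
def ProtAut.reindex (M : ProtAut σ W Q R S) (f : S ≃ T) : ProtAut σ W Q R T where
  isWr t := M.isWr (f.symm t)
  s₀ := f M.s₀
  F := {t | f.symm t ∈ M.F}
  s₀_not_F := by simpa using M.s₀_not_F
  transWr := (fun t => (f t.1, t.2.1, t.2.2.1, f t.2.2.2)) '' M.transWr
  transQu := (fun t => (f t.1, t.2.1, t.2.2.1, f t.2.2.2)) '' M.transQu
  wr_src := by rintro t ⟨⟨s, a, x, s'⟩, hm, rfl⟩; simpa using M.wr_src _ hm
  qu_src := by rintro t ⟨⟨s, q, r, s'⟩, hm, rfl⟩; simpa using M.qu_src _ hm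
  qu_tgt := by rintro t ⟨⟨s, q, r, s'⟩, hm, rfl⟩; simpa using M.qu_tgt _ hm
  transWr_fin := M.transWr_fin.image _

/-- map a configuration along a state map -/
def cmap (f : S → T) : PConfig σ W Q R S → PConfig σ W Q R T :=
  fun c => (f c.1, c.2.1, c.2.2.1, c.2.2.2)

lemma step_reindex (M : ProtAut σ W Q R S) (f : S ≃ T) (Pr : Set (List (PLet W Q R)))
    {c c' : PConfig σ W Q R S} (h : ProtStep M Pr c c') :
    ProtStep (M.reindex f) Pr (cmap f c) (cmap f c') := by
  cases h with
  | wr h => exact ProtStep.wr ⟨_, h, rfl⟩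
  | qu h hm => exact ProtStep.qu ⟨_, h, rfl⟩ hm

lemma step_reindex_rev (M : ProtAut σ W Q R S) (f : S ≃ T) (Pr : Set (List (PLet W Q R)))
    {c c' : PConfig σ W Q R T} (h : ProtStep (M.reindex f) Pr c c') :
    ProtStep M Pr (cmap f.symm c) (cmap f.symm c') := by
  cases h with
  | @wr s s' a x v u p h =>
    obtain ⟨⟨s₁, a₁, x₁, s₁'⟩, hm, heq⟩ := h
    simp only [Prod.mk.injEq] at heq
    obtain ⟨rfl, rfl, rfl, rfl⟩ := heq
    simpa [cmap] using ProtStep.wr (M := M) (P := Pr) (v := v) (u := u) (p := p) hm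
  | @qu s s' q r v u p h hmem =>
    obtain ⟨⟨s₁, q₁, r₁, s₁'⟩, hm, heq⟩ := h
    simp only [Prod.mk.injEq] at heq
    obtain ⟨rfl, rfl, rfl, rfl⟩ := heq
    simpa [cmap] using ProtStep.qu (M := M) (P := Pr) (v := v) hm hmem

lemma lang_reindex (M : ProtAut σ W Q R S) (f : S ≃ T) (Pr : Set (List (PLet W Q R))) :
    (M.reindex f).Lang Pr = M.Lang Pr := by
  ext w
  constructor
  · rintro ⟨p, hp, sf, hsf, hrun⟩
    refine ⟨p, hp, f.symm sf, hsf, ?_⟩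
    have := Relation.ReflTransGen.lift (cmap f.symm)
      (fun a b h => step_reindex_rev M f Pr h) _ _ hrun
    simpa [cmap, ProtAut.reindex, Function.onFun] using this
  · rintro ⟨p, hp, sf, hsf, hrun⟩
    refine ⟨p, hp, f sf, by simpa [ProtAut.reindex] using hsf, ?_⟩
    have := Relation.ReflTransGen.lift (cmap f)
      (fun a b h => step_reindex M f Pr h) _ _ hrun
    simpa [cmap, ProtAut.reindex, Function.onFun] using this

lemma mem_protCL (P : ProtLang W Q R) [Fintype S] (M : ProtAut σ W Q R S) :
    M.Lang P.prot ∈ ProtCL P σ :=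
  ⟨Fintype.card S, M.reindex (Fintype.equivFin S),
    (lang_reindex M (Fintype.equivFin S) P.prot).symm⟩

end Reindex

section Star

open Relation

variable {σ W Q R S₁ : Type}

/-- states of the star machine -/
abbrev StS (σ W S : Type) : Type := (S × Bool × Bool × Bool) ⊕ Fin 4

def io (s : S₁) (g e k : Bool) : StS σ W S₁ := Sum.inl (s, g, e, k)

def stInit : StS σ W S₁ := Sum.inr 0
def stLoop : StS σ W S₁ := Sum.inr 1
def stRq : StS σ W S₁ := Sum.inr 2
def stFin : StS σ W S₁ := Sum.inr 3

/-- virtualized write transitions -/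
def ImgW {S T : Type} (M : ProtAut σ W Q R S) (ι : S → Bool → Bool → Bool → T) :
    Set (T × Option (EndM σ) × List W × T) :=
  {t | ∃ s a x s' g e k, (s, a, x, s') ∈ M.transWr ∧ vg a g e ∧
    t = (ι s g e k, vi a, x, ι s' (gU a g) (eU a e) (k && x.isEmpty))}

/-- virtualized query transitions -/
def ImgQ {S T : Type} (M : ProtAut σ W Q R S) (ι : S → Bool → Bool → Bool → T) :
    Set (T × Q × R × T) :=
  {t | ∃ s q r s' g e k, (s, q, r, s') ∈ M.transQu ∧ t = (ι s g e k, q, r, ι s' g e true)}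

def BrW (M₁ : ProtAut σ W Q R S₁) :
    Set (StS σ W S₁ × Option (EndM σ) × List W × StS σ W S₁) :=
  {t | ∃ s, s ∈ M₁.F ∧ M₁.isWr s ∧ t = (io s true true true, none, [], stRq)}

def BrQ (q₀ : Q) (r₀ : R) (M₁ : ProtAut σ W Q R S₁) :
    Set (StS σ W S₁ × Q × R × StS σ W S₁) :=
  {t | ∃ s, s ∈ M₁.F ∧ ¬ M₁.isWr s ∧ t = (io s true true true, q₀, r₀, stLoop)}

lemma imgW_finite {S T : Type} (M : ProtAut σ W Q R S) (ι : S → Bool → Bool → Bool → T) :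
    (ImgW M ι).Finite := by
  refine Set.Finite.subset (Set.Finite.image
    (f := fun z : (S × Option (EndM σ) × List W × S) × Bool × Bool × Bool =>
      (ι z.1.1 z.2.1 z.2.2.1 z.2.2.2, vi z.1.2.1, z.1.2.2.1,
        ι z.1.2.2.2 (gU z.1.2.1 z.2.1) (eU z.1.2.1 z.2.2.1) (z.2.2.2 && z.1.2.2.1.isEmpty)))
    (M.transWr_fin.prod (Set.finite_univ (α := Bool × Bool × Bool)))) ?_
  rintro t ⟨s, a, x, s', g, e, k, hm, hg, rfl⟩
  exact ⟨((s, a, x, s'), (g, e, k)), ⟨hm, trivial⟩, rfl⟩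

variable [Finite S₁]

/-- the star machine -/
def StA (q₀ : Q) (r₀ : R) (M₁ : ProtAut σ W Q R S₁) : ProtAut σ W Q R (StS σ W S₁) where
  isWr t := match t with
    | Sum.inl (s, _, _, _) => M₁.isWr s
    | Sum.inr i => i ≠ 2
  s₀ := stInit
  F := {stFin}
  s₀_not_F := by simp [stInit, stFin, Set.mem_singleton_iff]
  transWr := ImgW M₁ io ∪ ({(stInit, some EndM.lmark, [], stLoop)} ∪
    {(stLoop, none, [], io M₁.s₀ false false true)} ∪ {(stLoop, some EndM.rmark, [], stFin)}) ∪
    BrW M₁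
  transQu := ImgQ M₁ io ∪ {(stRq, q₀, r₀, stLoop)} ∪ BrQ q₀ r₀ M₁
  wr_src := by
    rintro t ((⟨s, a, x, s', g, e, k, hm, hg, rfl⟩ | ((rfl | rfl) | rfl)) | ⟨s, hF, hW, rfl⟩)
    · exact M₁.wr_src _ hm
    · simp [stInit]
    · simp [stLoop]
    · simp [stLoop]
    · exact hW
  qu_src := by
    rintro t ((⟨s, q, r, s', g, e, k, hm, rfl⟩ | rfl) | ⟨s, hF, hW, rfl⟩)
    · exact M₁.qu_src _ hm
    · simp [stRq]
    · exact hW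
  qu_tgt := by
    rintro t ((⟨s, q, r, s', g, e, k, hm, rfl⟩ | rfl) | ⟨s, hF, hW, rfl⟩)
    · exact M₁.qu_tgt _ hm
    · simp [stLoop]
    · simp [stLoop]
  transWr_fin := by
    refine ((imgW_finite M₁ io).union (((Set.finite_singleton _).union
      (Set.finite_singleton _)).union (Set.finite_singleton _))).union ?_
    refine Set.Finite.subset (Set.Finite.image
      (f := fun s : S₁ => ((io s true true true : StS σ W S₁), (none : Option (EndM σ)),
        ([] : List W), (stRq : StS σ W S₁))) (Set.toFinite M₁.F)) ?_
    rintro t ⟨s, hF, hW, rfl⟩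
    exact ⟨s, hF, rfl⟩

lemma io_inj {s g e k : _} {s' : S₁} {g' e' k' : Bool}
    (h : (io s g e k : StS σ W S₁) = io s' g' e' k') :
    s = s' ∧ g = g' ∧ e = e' ∧ k = k' := by
  simp only [io, Sum.inl.injEq, Prod.mk.injEq] at h
  exact ⟨h.1, h.2.1, h.2.2.1, h.2.2.2⟩

/-- the embedding of the virtualized `M₁` into the star machine -/
lemma star_emb (q₀ : Q) (r₀ : R) (M₁ : ProtAut σ W Q R S₁) :
    PhaseEmb M₁ (StA q₀ r₀ M₁) io (BrW M₁) (BrQ q₀ r₀ M₁) := by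
  constructor
  · exact fun h => io_inj h
  · intro s a x s' g e k hm hg
    exact Or.inl (Or.inl ⟨s, a, x, s', g, e, k, hm, hg, rfl⟩)
  · intro s q r s' g e k hm
    exact Or.inl (Or.inl ⟨s, q, r, s', g, e, k, hm, rfl⟩)
  · rintro t ((⟨s', a, x, s'', g', e', k', hm, hg, rfl⟩ | ((rfl | rfl) | rfl)) | hBr)
      <;> intro s g e k ht
    · obtain ⟨rfl, rfl, rfl, rfl⟩ := io_inj ht
      exact Or.inl ⟨a, x, s'', hm, hg, rfl⟩
    · simp [stInit, io] at ht
    · simp [stLoop, io] at ht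
    · simp [stLoop, io] at ht
    · exact Or.inr hBr
  · rintro t ((⟨s', q, r, s'', g', e', k', hm, rfl⟩ | rfl) | hBr) <;> intro s g e k ht
    · obtain ⟨rfl, rfl, rfl, rfl⟩ := io_inj ht
      exact Or.inl ⟨q, r, s'', hm, rfl⟩
    · simp [stRq, io] at ht
    · exact Or.inr hBr

end Star

section StarLemmas

open Relation

variable {σ W Q R S₁ : Type} (P : ProtLang W Q R) (q₀ : Q) (r₀ : R)
variable (M₁ : ProtAut σ W Q R S₁) [Finite S₁]

lemma star_fin_stuck {v : List (EndM σ)} {u : List W} {p : List (PLet W Q R)}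
    {c' : PConfig σ W Q R (StS σ W S₁)}
    (hstep : ProtStep (StA q₀ r₀ M₁) P.prot (stFin, v, u, p) c') : False := by
  cases hstep with
  | wr h =>
    rcases h with ((⟨s, a', x', s', g, e, k, hm, hg, heq⟩ | ((heq | heq) | heq)) |
        ⟨s, hF, hW, heq⟩) <;>
    · simp only [Set.mem_singleton_iff, Prod.mk.injEq] at heq
      have := heq.1
      simp [io, stInit, stLoop, stRq, stFin] at this
  | qu h hm =>
    rcases h with ((⟨s, q', r', s', g, e, k, hm', heq⟩ | heq) | ⟨s, hF, hW, heq⟩) <;>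
    · simp only [Set.mem_singleton_iff, Prod.mk.injEq] at heq
      have := heq.1
      simp [io, stRq, stFin] at this

lemma star_fin_run {m : ℕ} {v : List (EndM σ)} {u : List W} {p pf : List (PLet W Q R)}
    (h : RunN (ProtStep (StA q₀ r₀ M₁) P.prot) m (stFin, v, u, p) (stFin, [], [], pf)) :
    v = [] := by
  cases h with
  | refl => rfl
  | head hstep hrest => exact absurd hstep (by intro h'; exact star_fin_stuck P q₀ r₀ M₁ h')

variable (hrs : ∀ p₁ ∈ P.prot, ∀ p₂ ∈ P.prot, p₁ ++ pblock ([] : List W) q₀ r₀ ++ p₂ ∈ P.prot)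
include hrs

lemma star_complete : ∀ (l : List (List σ)), (∀ w ∈ l, w ∈ M₁.Lang P.prot) →
    ∀ p, Abs P p →
    ∃ pf ∈ P.prot, ReflTransGen (ProtStep (StA q₀ r₀ M₁) P.prot)
      (stLoop, (l.flatten).map EndM.lt ++ [EndM.rmark], [], p) (stFin, [], [], pf) := by
  intro l
  induction l with
  | nil =>
    intro _ p hA
    refine ⟨p, hA.1, ReflTransGen.single ?_⟩
    exact step_wr' (a := some EndM.rmark) (x := [])
      (Or.inl (Or.inr (Or.inr rfl))) (by simp) (by simp)
  | cons w l' ih =>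
    intro hall p hA
    have hw : w ∈ M₁.Lang P.prot := hall w List.mem_cons_self
    simp only [ProtAut.Lang, Set.mem_setOf_eq, ProtAut.Accepts,
      ProtAut.AcceptsWith] at hw
    obtain ⟨p₁, hp₁, sf, hsf, hrun₁⟩ := hw
    obtain ⟨s', g', e', ws', u', p'', hc', hgw', hrunC⟩ :=
      genFwd (star_emb q₀ r₀ M₁) p hA hrun₁ M₁.s₀ false false w [] []
        (by rw [vtape_ff]) (by simp)
    simp only [Prod.mk.injEq] at hc'
    obtain ⟨rfl, hvt, hu', rfl⟩ := hc'
    obtain ⟨rfl, rfl, rfl⟩ := vtape_eq_nil hvt.symm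
    subst hu'
    have hmem : (p ++ p₁) ++ pblock ([] : List W) q₀ r₀ ∈ P.prot := by
      rw [List.append_assoc]
      have h1 := hrs p₁ hp₁ [] P.empty_mem
      rw [List.append_nil] at h1
      exact hA.2 _ h1
    have hAbs' : Abs P ((p ++ p₁) ++ pblock ([] : List W) q₀ r₀) := by
      rw [List.append_assoc]; exact abs_step P hrs hA hp₁
    obtain ⟨pf, hpf, hrunRest⟩ := ih (fun u hu => hall u (List.mem_cons_of_mem _ hu))
      _ hAbs'
    refine ⟨pf, hpf, ?_⟩
    have hstep0 : ProtStep (StA q₀ r₀ M₁) P.prot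
        (stLoop, ((w :: l').flatten).map EndM.lt ++ [EndM.rmark], [], p)
        (io M₁.s₀ false false true,
          w.map EndM.lt ++ ((l'.flatten).map EndM.lt ++ [EndM.rmark]), [], p) :=
      step_wr' (a := none) (x := [])
        (Or.inl (Or.inr (Or.inl (Or.inr rfl)))) (by simp) (by simp)
    have hrunC' := hrunC ((l'.flatten).map EndM.lt ++ [EndM.rmark])
    rw [List.append_nil] at hrunC'
    refine ReflTransGen.head hstep0 (hrunC'.trans ?_)
    by_cases hwr : M₁.isWr sf
    · refine ReflTransGen.head (step_wr' (a := none) (x := [])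
        (Or.inr ⟨sf, hsf, hwr, rfl⟩) rfl rfl) ?_
      exact ReflTransGen.head (step_qu' (Or.inl (Or.inr rfl)) hmem rfl) hrunRest
    · exact ReflTransGen.head (step_qu' (Or.inr ⟨sf, hsf, hwr, rfl⟩) hmem rfl) hrunRest

lemma star_sound : ∀ n (v : List (EndM σ)) (p pf : List (PLet W Q R)),
    p ∈ P.prot → Abs P p →
    RunN (ProtStep (StA q₀ r₀ M₁) P.prot) n (stLoop, v, [], p) (stFin, [], [], pf) →
    ∃ l : List (List σ), (∀ w ∈ l, w ∈ M₁.Lang P.prot) ∧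
      v = (l.flatten).map EndM.lt ++ [EndM.rmark] := by
  intro n
  induction n using Nat.strong_induction_on with
  | _ n IH =>
  intro v p pf hp hA hrun
  generalize hc2 : ((stFin, [], [], pf) : PConfig σ W Q R (StS σ W S₁)) = c₂ at hrun
  cases hrun with
  | refl =>
    simp only [Prod.mk.injEq] at hc2
    have := hc2.1; simp [stLoop, stFin] at this
  | @head _ b _ m hstep hrest =>
    generalize hcb : ((stLoop, v, [], p) : PConfig σ W Q R (StS σ W S₁)) = c₁ at hstep
    cases hstep with
    | @wr s₂ t' a x v₂ u₂ p₂ hT =>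
      simp only [Prod.mk.injEq] at hcb
      obtain ⟨hs, hv, hu, hpp⟩ := hcb
      subst hs hu hpp
      rcases hT with ((⟨s, a', x', s', g, e, k, hm, hg, heq⟩ | ((heq | heq) | heq)) |
          ⟨s, hF, hW, heq⟩)
      · exfalso
        simp only [Prod.mk.injEq] at heq
        have := heq.1; simp [io, stLoop] at this
      · exfalso
        simp only [Set.mem_singleton_iff, Prod.mk.injEq] at heq
        have := heq.1; simp [stInit, stLoop] at this
      · -- enter the phase
        simp only [Set.mem_singleton_iff, Prod.mk.injEq] at heq
        obtain ⟨-, rfl, rfl, rfl⟩ := heq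
        simp only [Option.toList, List.nil_append] at hv
        subst hv
        have hrest' : RunN (ProtStep (StA q₀ r₀ M₁) P.prot) m
            (io M₁.s₀ false false true, v, [], p ++ []) c₂ := by
          rw [List.append_nil]; simpa using hrest
        rcases genBack (star_emb q₀ r₀ M₁) p hA m M₁.s₀ false false true v [] [] c₂
            hrest' P.empty_mem (fun _ => rfl) (by simp) with
          ⟨s', g', e', k', v', u', pm', hc₂'⟩ |
          ⟨m', hm', ws, v₁, s₁, g₁, e₁, k₁, u₁, pm₁, hveq, hwsnil, hMrun, hpm₁,
            hk₁, he₁, hexit⟩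
        · exfalso
          rw [← hc2] at hc₂'
          simp only [Prod.mk.injEq] at hc₂'
          have := hc₂'.1; simp [stFin, io] at this
        · rcases hexit with ⟨a'', x'', t'', hTmem, hEWmem, v₃, hv₁, hrest₂⟩ |
            ⟨qq, rr, t'', hTmem, hEQmem, hmem₂, hrest₂⟩
          · obtain ⟨sf, hsF, hsW, heq₂⟩ := hEWmem
            simp only [Prod.mk.injEq] at heq₂
            obtain ⟨hio, rfl, rfl, rfl⟩ := heq₂
            obtain ⟨rfl, rfl, rfl, rfl⟩ := io_inj hio
            have hu₁ : u₁ = [] := hk₁ rfl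
            subst hu₁
            have hacc : ws ∈ M₁.Lang P.prot := by
              simp only [ProtAut.Lang, Set.mem_setOf_eq, ProtAut.Accepts,
                ProtAut.AcceptsWith]
              refine ⟨pm₁, hpm₁, s₁, hsF, ?_⟩
              have h := hMrun
              rw [vtape_ff] at h
              simpa [vtape] using h
            simp only [Option.toList, List.nil_append] at hv₁
            subst hv₁
            simp only [List.append_nil] at hrest₂
            cases hrest₂ with
            | refl =>
              exfalso
              simp only [Prod.mk.injEq] at hc2
              have := hc2.1; simp [stFin, stRq] at this
            | @head _ b₂ _ m'' hstep₃ hrest₃ =>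
              generalize hcb₃ : ((stRq, v₁, ([] : List W), p ++ pm₁) :
                PConfig σ W Q R (StS σ W S₁)) = c₃ at hstep₃
              cases hstep₃ with
              | @wr s₄ t₄ a₄ x₄ v₄ u₄ p₄ hT₄ =>
                exfalso
                simp only [Prod.mk.injEq] at hcb₃
                obtain ⟨hs₄, -, -, -⟩ := hcb₃
                rcases hT₄ with ((⟨s, a', x', s', g, e, k, hm, hg, heq⟩ |
                    ((heq | heq) | heq)) | ⟨s, hF', hW', heq⟩) <;>
                  · simp only [Set.mem_singleton_iff, Prod.mk.injEq] at heq
                    rw [heq.1] at hs₄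
                    simp [io, stInit, stLoop, stRq] at hs₄
              | @qu s₄ t₄ qq₄ rr₄ v₄ u₄ p₄ hT₄ hmem₄ =>
                simp only [Prod.mk.injEq] at hcb₃
                obtain ⟨hs₄, hv₄, hu₄, hp₄⟩ := hcb₃
                subst hs₄ hv₄ hu₄ hp₄
                rcases hT₄ with ((⟨s, q', r', s', g, e, k, hm, heq⟩ | heq) |
                    ⟨s, hF', hW', heq⟩)
                · exfalso
                  simp only [Prod.mk.injEq] at heq
                  have := heq.1; simp [io, stRq] at this
                · simp only [Set.mem_singleton_iff, Prod.mk.injEq] at heq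
                  obtain ⟨-, rfl, rfl, rfl⟩ := heq
                  have hAbs' : Abs P ((p ++ pm₁) ++ pblock ([] : List W) qq₄ rr₄) := by
                    rw [List.append_assoc]; exact abs_step P hrs hA hpm₁
                  obtain ⟨l', hl', hv₁'⟩ := IH m'' (by omega) v₁ _ pf hmem₄ hAbs'
                    (by rw [hc2]; exact hrest₃)
                  refine ⟨ws :: l', ?_, by simp [hveq, hv₁']⟩
                  intro u hu
                  rcases List.mem_cons.mp hu with rfl | hu
                  · exact hacc
                  · exact hl' u hu
                · exfalso
                  simp only [Prod.mk.injEq] at heq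
                  have := heq.1; simp [io, stRq] at this
          · obtain ⟨sf, hsF, hsW, heq₂⟩ := hEQmem
            simp only [Prod.mk.injEq] at heq₂
            obtain ⟨hio, rfl, rfl, rfl⟩ := heq₂
            obtain ⟨rfl, rfl, rfl, rfl⟩ := io_inj hio
            have hu₁ : u₁ = [] := hk₁ rfl
            subst hu₁
            have hacc : ws ∈ M₁.Lang P.prot := by
              simp only [ProtAut.Lang, Set.mem_setOf_eq, ProtAut.Accepts,
                ProtAut.AcceptsWith]
              refine ⟨pm₁, hpm₁, s₁, hsF, ?_⟩
              have h := hMrun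
              rw [vtape_ff] at h
              simpa [vtape] using h
            have hAbs' : Abs P ((p ++ pm₁) ++ pblock ([] : List W) qq rr) := by
              rw [List.append_assoc]; exact abs_step P hrs hA hpm₁
            obtain ⟨l', hl', hv₁'⟩ := IH m' (by omega) v₁ _ pf hmem₂ hAbs'
              (by rw [hc2]; exact hrest₂)
            refine ⟨ws :: l', ?_, by simp [hveq, hv₁']⟩
            intro u hu
            rcases List.mem_cons.mp hu with rfl | hu
            · exact hacc
            · exact hl' u hu
      · -- exit to fin
        simp only [Set.mem_singleton_iff, Prod.mk.injEq] at heq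
        obtain ⟨-, rfl, rfl, rfl⟩ := heq
        simp only [Option.toList, List.singleton_append] at hv
        have hv₂ : v₂ = [] := by
          refine star_fin_run P q₀ r₀ M₁ (m := m) (u := [] ++ []) (p := p) (pf := pf) ?_
          rw [hc2]; exact hrest
        exact ⟨[], by simp, by simp [hv, hv₂]⟩
      · exfalso
        simp only [Prod.mk.injEq] at heq
        have := heq.1; simp [io, stLoop] at this
    | @qu s₂ t' qq rr v₂ u₂ p₂ hT hmem =>
      exfalso
      simp only [Prod.mk.injEq] at hcb
      obtain ⟨hs, -, -, -⟩ := hcb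
      rcases hT with ((⟨s, q', r', s', g, e, k, hm, heq⟩ | heq) | ⟨s, hF', hW', heq⟩) <;>
        · simp only [Set.mem_singleton_iff, Prod.mk.injEq] at heq
          rw [heq.1] at hs
          simp [io, stRq, stLoop] at hs

end StarLemmas

section StarLang

open Relation

lemma map_rmark_cancel {σ : Type} {w₁ w₂ : List σ}
    (h : w₁.map EndM.lt ++ [EndM.rmark] = w₂.map EndM.lt ++ [EndM.rmark]) : w₁ = w₂ := by
  have h2 := (List.append_inj' h rfl).1
  have hinj : Function.Injective (EndM.lt : σ → EndM σ) := fun a b hab => by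
    injection hab
  exact List.map_injective_iff.mpr hinj h2

variable {σ W Q R S₁ : Type} (P : ProtLang W Q R) (q₀ : Q) (r₀ : R)
variable (M₁ : ProtAut σ W Q R S₁) [Finite S₁]
variable (hrs : ∀ p₁ ∈ P.prot, ∀ p₂ ∈ P.prot, p₁ ++ pblock ([] : List W) q₀ r₀ ++ p₂ ∈ P.prot)
include hrs

lemma star_lang : (StA q₀ r₀ M₁).Lang P.prot = LangStar (M₁.Lang P.prot) := by
  ext w
  constructor
  · intro hw
    simp only [ProtAut.Lang, Set.mem_setOf_eq, ProtAut.Accepts,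
      ProtAut.AcceptsWith] at hw
    obtain ⟨p, hp, sf, hsf, hrun⟩ := hw
    have hsf' : sf = stFin := hsf
    subst hsf'
    obtain ⟨n, hrunN⟩ := runN_of_rtg hrun
    generalize hc2 : ((stFin, [], [], p) : PConfig σ W Q R (StS σ W S₁)) = c₂ at hrunN
    cases hrunN with
    | refl =>
      exfalso
      simp only [Prod.mk.injEq] at hc2
      have h1 : (StA q₀ r₀ M₁).s₀ = stFin := hc2.1.symm
      simp [StA, stInit, stFin] at h1
    | @head _ b _ m hstep hrest =>
      generalize hcb : (((StA q₀ r₀ M₁).s₀, tape w, ([] : List W),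
        ([] : List (PLet W Q R))) : PConfig σ W Q R (StS σ W S₁)) = c₁ at hstep
      cases hstep with
      | @wr s₂ t' a x v₂ u₂ p₂ hT =>
        simp only [Prod.mk.injEq] at hcb
        obtain ⟨hs, hv, hu, hpp⟩ := hcb
        subst hu hpp
        have hs' : s₂ = stInit := by rw [← hs]; rfl
        subst hs'
        rcases hT with ((⟨s, a', x', s', g, e, k, hm, hg, heq⟩ | ((heq | heq) | heq)) |
            ⟨s, hF, hW, heq⟩)
        · exfalso
          simp only [Prod.mk.injEq] at heq
          have := heq.1; simp [io, stInit] at this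
        · simp only [Set.mem_singleton_iff, Prod.mk.injEq] at heq
          obtain ⟨-, rfl, rfl, rfl⟩ := heq
          simp only [tape, Option.toList, List.singleton_append, List.cons.injEq,
            true_and] at hv
          obtain ⟨l, hl, hveq⟩ := star_sound P q₀ r₀ M₁ hrs m (v₂) [] p
            P.empty_mem (abs_nil P) (by
              rw [hc2]
              simpa using hrest)
          refine ⟨l, hl, ?_⟩
          rw [← hv] at hveq
          exact map_rmark_cancel hveq
        · exfalso
          simp only [Set.mem_singleton_iff, Prod.mk.injEq] at heq
          have := heq.1; simp [stInit, stLoop] at this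
        · exfalso
          simp only [Set.mem_singleton_iff, Prod.mk.injEq] at heq
          have := heq.1; simp [stInit, stLoop] at this
        · exfalso
          simp only [Prod.mk.injEq] at heq
          have := heq.1; simp [io, stInit] at this
      | @qu s₂ t' qq rr v₂ u₂ p₂ hT hmem =>
        exfalso
        simp only [Prod.mk.injEq] at hcb
        obtain ⟨hs, -, -, -⟩ := hcb
        have hs' : s₂ = stInit := by rw [← hs]; rfl
        subst hs'
        rcases hT with ((⟨s, q', r', s', g, e, k, hm, heq⟩ | heq) |
            ⟨s, hF', hW', heq⟩) <;>
          · simp only [Set.mem_singleton_iff, Prod.mk.injEq] at heq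
            have := heq.1
            simp [io, stRq, stInit] at this
  · rintro ⟨l, hl, rfl⟩
    obtain ⟨pf, hpf, hrun⟩ := star_complete P q₀ r₀ M₁ hrs l hl [] (abs_nil P)
    refine ⟨pf, hpf, stFin, rfl, ?_⟩
    refine ReflTransGen.head
      (b := (stLoop, List.map EndM.lt l.flatten ++ [EndM.rmark], [] ++ [], []))
      (step_wr' (a := some EndM.lmark) (x := [])
        (Or.inl (Or.inr (Or.inl (Or.inl rfl)))) (by simp [tape]) rfl) ?_
    simpa using hrun

end StarLang

section Concat

open Relation

variable {σ W Q R S₁ S₂ : Type}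

/-- states of the concatenation machine -/
abbrev CcS (σ W S₁ S₂ : Type) : Type :=
  (S₁ × Bool × Bool × Bool) ⊕ (S₂ × Bool × Bool × Bool) ⊕ Fin 5

def io1 (s : S₁) (g e k : Bool) : CcS σ W S₁ S₂ := Sum.inl (s, g, e, k)
def io2 (s : S₂) (g e k : Bool) : CcS σ W S₁ S₂ := Sum.inr (Sum.inl (s, g, e, k))

def cInit : CcS σ W S₁ S₂ := Sum.inr (Sum.inr 0)
def cRq : CcS σ W S₁ S₂ := Sum.inr (Sum.inr 1)
def cMid : CcS σ W S₁ S₂ := Sum.inr (Sum.inr 2)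
def cPre : CcS σ W S₁ S₂ := Sum.inr (Sum.inr 3)
def cFin : CcS σ W S₁ S₂ := Sum.inr (Sum.inr 4)

variable (q₀ : Q) (r₀ : R) (M₁ : ProtAut σ W Q R S₁) (M₂ : ProtAut σ W Q R S₂)

def CBrW : Set (CcS σ W S₁ S₂ × Option (EndM σ) × List W × CcS σ W S₁ S₂) :=
  {t | ∃ s, s ∈ M₁.F ∧ M₁.isWr s ∧ t = (io1 s true true true, none, [], cRq)}

def CEx2 : Set (CcS σ W S₁ S₂ × Option (EndM σ) × List W × CcS σ W S₁ S₂) :=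
  {t | ∃ s, s ∈ M₂.F ∧ M₂.isWr s ∧ t = (io2 s true true true, some EndM.rmark, [], cFin)}

def CBrQ : Set (CcS σ W S₁ S₂ × Q × R × CcS σ W S₁ S₂) :=
  {t | ∃ s, s ∈ M₁.F ∧ ¬ M₁.isWr s ∧ t = (io1 s true true true, q₀, r₀, cMid)}

def CExQ2 : Set (CcS σ W S₁ S₂ × Q × R × CcS σ W S₁ S₂) :=
  {t | ∃ s, s ∈ M₂.F ∧ ¬ M₂.isWr s ∧ t = (io2 s true true true, q₀, r₀, cPre)}

variable [Finite S₁] [Finite S₂]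

/-- the concatenation machine -/
def CcA : ProtAut σ W Q R (CcS σ W S₁ S₂) where
  isWr t := match t with
    | Sum.inl (s, _, _, _) => M₁.isWr s
    | Sum.inr (Sum.inl (s, _, _, _)) => M₂.isWr s
    | Sum.inr (Sum.inr i) => i ≠ 1
  s₀ := cInit
  F := {cFin}
  s₀_not_F := by simp [cInit, cFin, Set.mem_singleton_iff]
  transWr := (ImgW M₁ io1 ∪ ImgW M₂ io2) ∪
    ({(cInit, some EndM.lmark, [], io1 M₁.s₀ false false true)} ∪
     {(cMid, none, [], io2 M₂.s₀ false false true)} ∪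
     {(cPre, some EndM.rmark, [], cFin)}) ∪
    (CBrW M₁ ∪ CEx2 M₂)
  transQu := (ImgQ M₁ io1 ∪ ImgQ M₂ io2) ∪ {(cRq, q₀, r₀, cMid)} ∪
    (CBrQ q₀ r₀ M₁ ∪ CExQ2 q₀ r₀ M₂)
  wr_src := by
    rintro t (((⟨s, a, x, s', g, e, k, hm, hg, rfl⟩ | ⟨s, a, x, s', g, e, k, hm, hg, rfl⟩) |
      (((rfl | rfl) | rfl))) | (⟨s, hF, hW, rfl⟩ | ⟨s, hF, hW, rfl⟩))
    · exact M₁.wr_src _ hm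
    · exact M₂.wr_src _ hm
    · simp [cInit]
    · simp [cMid]
    · simp [cPre]
    · exact hW
    · exact hW
  qu_src := by
    rintro t (((⟨s, q, r, s', g, e, k, hm, rfl⟩ | ⟨s, q, r, s', g, e, k, hm, rfl⟩) | rfl) |
      (⟨s, hF, hW, rfl⟩ | ⟨s, hF, hW, rfl⟩))
    · exact M₁.qu_src _ hm
    · exact M₂.qu_src _ hm
    · simp [cRq]
    · exact hW
    · exact hW
  qu_tgt := by
    rintro t (((⟨s, q, r, s', g, e, k, hm, rfl⟩ | ⟨s, q, r, s', g, e, k, hm, rfl⟩) | rfl) |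
      (⟨s, hF, hW, rfl⟩ | ⟨s, hF, hW, rfl⟩))
    · exact M₁.qu_tgt _ hm
    · exact M₂.qu_tgt _ hm
    · simp [cMid]
    · simp [cMid]
    · simp [cPre]
  transWr_fin := by
    refine (((imgW_finite M₁ io1).union (imgW_finite M₂ io2)).union
      (((Set.finite_singleton _).union (Set.finite_singleton _)).union
        (Set.finite_singleton _))).union (Set.Finite.union ?_ ?_)
    · refine Set.Finite.subset (Set.Finite.image
        (f := fun s : S₁ => ((io1 s true true true : CcS σ W S₁ S₂),
          (none : Option (EndM σ)), ([] : List W), (cRq : CcS σ W S₁ S₂)))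
        (Set.toFinite M₁.F)) ?_
      rintro t ⟨s, hF, hW, rfl⟩
      exact ⟨s, hF, rfl⟩
    · refine Set.Finite.subset (Set.Finite.image
        (f := fun s : S₂ => ((io2 s true true true : CcS σ W S₁ S₂),
          (some EndM.rmark : Option (EndM σ)), ([] : List W), (cFin : CcS σ W S₁ S₂)))
        (Set.toFinite M₂.F)) ?_
      rintro t ⟨s, hF, hW, rfl⟩
      exact ⟨s, hF, rfl⟩

lemma io1_inj {s s' : S₁} {g e k g' e' k' : Bool}
    (h : (io1 s g e k : CcS σ W S₁ S₂) = io1 s' g' e' k') :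
    s = s' ∧ g = g' ∧ e = e' ∧ k = k' := by
  simp only [io1, Sum.inl.injEq, Prod.mk.injEq] at h
  exact ⟨h.1, h.2.1, h.2.2.1, h.2.2.2⟩

lemma io2_inj {s s' : S₂} {g e k g' e' k' : Bool}
    (h : (io2 s g e k : CcS σ W S₁ S₂) = io2 s' g' e' k') :
    s = s' ∧ g = g' ∧ e = e' ∧ k = k' := by
  simp only [io2, Sum.inr.injEq, Sum.inl.injEq, Prod.mk.injEq] at h
  exact ⟨h.1, h.2.1, h.2.2.1, h.2.2.2⟩

/-- the embedding of the virtualized `M₁` into the concatenation machine -/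
lemma cc_emb1 : PhaseEmb M₁ (CcA q₀ r₀ M₁ M₂) io1 (CBrW M₁) (CBrQ q₀ r₀ M₁) := by
  constructor
  · exact fun h => io1_inj h
  · intro s a x s' g e k hm hg
    exact Or.inl (Or.inl (Or.inl ⟨s, a, x, s', g, e, k, hm, hg, rfl⟩))
  · intro s q r s' g e k hm
    exact Or.inl (Or.inl (Or.inl ⟨s, q, r, s', g, e, k, hm, rfl⟩))
  · rintro t (((⟨s', a, x, s'', g', e', k', hm, hg, rfl⟩ |
      ⟨s', a, x, s'', g', e', k', hm, hg, rfl⟩) | ((rfl | rfl) | rfl)) |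
      (⟨s', hF, hW, rfl⟩ | ⟨s', hF, hW, rfl⟩)) <;> intro s g e k ht
    · obtain ⟨rfl, rfl, rfl, rfl⟩ := io1_inj ht
      exact Or.inl ⟨a, x, s'', hm, hg, rfl⟩
    · simp [io1, io2] at ht
    · simp [cInit, io1] at ht
    · simp [cMid, io1] at ht
    · simp [cPre, io1] at ht
    · exact Or.inr ⟨s', hF, hW, rfl⟩
    · simp [io1, io2] at ht
  · rintro t (((⟨s', q, r, s'', g', e', k', hm, rfl⟩ |
      ⟨s', q, r, s'', g', e', k', hm, rfl⟩) | rfl) |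
      (⟨s', hF, hW, rfl⟩ | ⟨s', hF, hW, rfl⟩)) <;> intro s g e k ht
    · obtain ⟨rfl, rfl, rfl, rfl⟩ := io1_inj ht
      exact Or.inl ⟨q, r, s'', hm, rfl⟩
    · simp [io1, io2] at ht
    · simp [cRq, io1] at ht
    · exact Or.inr ⟨s', hF, hW, rfl⟩
    · simp [io1, io2] at ht

/-- the embedding of the virtualized `M₂` into the concatenation machine -/
lemma cc_emb2 : PhaseEmb M₂ (CcA q₀ r₀ M₁ M₂) io2 (CEx2 M₂) (CExQ2 q₀ r₀ M₂) := by
  constructor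
  · exact fun h => io2_inj h
  · intro s a x s' g e k hm hg
    exact Or.inl (Or.inl (Or.inr ⟨s, a, x, s', g, e, k, hm, hg, rfl⟩))
  · intro s q r s' g e k hm
    exact Or.inl (Or.inl (Or.inr ⟨s, q, r, s', g, e, k, hm, rfl⟩))
  · rintro t (((⟨s', a, x, s'', g', e', k', hm, hg, rfl⟩ |
      ⟨s', a, x, s'', g', e', k', hm, hg, rfl⟩) | ((rfl | rfl) | rfl)) |
      (⟨s', hF, hW, rfl⟩ | ⟨s', hF, hW, rfl⟩)) <;> intro s g e k ht
    · simp [io1, io2] at ht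
    · obtain ⟨rfl, rfl, rfl, rfl⟩ := io2_inj ht
      exact Or.inl ⟨a, x, s'', hm, hg, rfl⟩
    · simp [cInit, io2] at ht
    · simp [cMid, io2] at ht
    · simp [cPre, io2] at ht
    · simp [io1, io2] at ht
    · exact Or.inr ⟨s', hF, hW, rfl⟩
  · rintro t (((⟨s', q, r, s'', g', e', k', hm, rfl⟩ |
      ⟨s', q, r, s'', g', e', k', hm, rfl⟩) | rfl) |
      (⟨s', hF, hW, rfl⟩ | ⟨s', hF, hW, rfl⟩)) <;> intro s g e k ht
    · simp [io1, io2] at ht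
    · obtain ⟨rfl, rfl, rfl, rfl⟩ := io2_inj ht
      exact Or.inl ⟨q, r, s'', hm, rfl⟩
    · simp [cRq, io2] at ht
    · simp [io1, io2] at ht
    · exact Or.inr ⟨s', hF, hW, rfl⟩

end Concat

section ConcatLemmas

open Relation

variable {σ W Q R S₁ S₂ : Type} (P : ProtLang W Q R) (q₀ : Q) (r₀ : R)
variable (M₁ : ProtAut σ W Q R S₁) (M₂ : ProtAut σ W Q R S₂) [Finite S₁] [Finite S₂]

variable (hrs : ∀ p₁ ∈ P.prot, ∀ p₂ ∈ P.prot, p₁ ++ pblock ([] : List W) q₀ r₀ ++ p₂ ∈ P.prot)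

omit [Finite S₁] [Finite S₂]

include hrs in
lemma abs_of_reset {p₁ : List (PLet W Q R)} (hp : p₁ ∈ P.prot) :
    Abs P (p₁ ++ pblock ([] : List W) q₀ r₀) := by
  constructor
  · have := hrs p₁ hp [] P.empty_mem
    rwa [List.append_nil] at this
  · intro x hx
    exact hrs p₁ hp x hx

variable [Finite S₁] [Finite S₂]

lemma cc_fin_stuck {v : List (EndM σ)} {u : List W} {p : List (PLet W Q R)}
    {c' : PConfig σ W Q R (CcS σ W S₁ S₂)}
    (hstep : ProtStep (CcA q₀ r₀ M₁ M₂) P.prot (cFin, v, u, p) c') : False := by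
  cases hstep with
  | wr h =>
    rcases h with (((⟨s, a', x', s', g, e, k, hm, hg, heq⟩ |
        ⟨s, a', x', s', g, e, k, hm, hg, heq⟩) | ((heq | heq) | heq)) |
        (⟨s, hF, hW, heq⟩ | ⟨s, hF, hW, heq⟩)) <;>
    · simp only [Set.mem_singleton_iff, Prod.mk.injEq] at heq
      have := heq.1
      simp [io1, io2, cInit, cMid, cPre, cFin] at this
  | qu h hm =>
    rcases h with (((⟨s, q', r', s', g, e, k, hm', heq⟩ |
        ⟨s, q', r', s', g, e, k, hm', heq⟩) | heq) |
        (⟨s, hF, hW, heq⟩ | ⟨s, hF, hW, heq⟩)) <;>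
    · simp only [Set.mem_singleton_iff, Prod.mk.injEq] at heq
      have := heq.1
      simp [io1, io2, cRq, cFin] at this

include hrs in
lemma cc_complete {w₁ w₂ : List σ} (h₁ : w₁ ∈ M₁.Lang P.prot)
    (h₂ : w₂ ∈ M₂.Lang P.prot) :
    (w₁ ++ w₂) ∈ (CcA q₀ r₀ M₁ M₂).Lang P.prot := by
  simp only [ProtAut.Lang, Set.mem_setOf_eq, ProtAut.Accepts,
    ProtAut.AcceptsWith] at h₁ h₂ ⊢
  obtain ⟨p₁, hp₁, sf₁, hsf₁, hrun₁⟩ := h₁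
  obtain ⟨p₂, hp₂, sf₂, hsf₂, hrun₂⟩ := h₂
  obtain ⟨s', g', e', ws', u', p'', hc', hgw', hrunC₁⟩ :=
    genFwd (cc_emb1 q₀ r₀ M₁ M₂) [] (abs_nil P) hrun₁ M₁.s₀ false false w₁ [] []
      (by rw [vtape_ff]) (by simp)
  simp only [Prod.mk.injEq] at hc'
  obtain ⟨rfl, hvt, hu', rfl⟩ := hc'
  obtain ⟨rfl, rfl, rfl⟩ := vtape_eq_nil hvt.symm
  subst hu'
  obtain ⟨s₂', g₂', e₂', ws₂', u₂', p₂'', hc₂', hgw₂', hrunC₂⟩ :=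
    genFwd (cc_emb2 q₀ r₀ M₁ M₂) (p₁ ++ pblock ([] : List W) q₀ r₀)
      (abs_of_reset P q₀ r₀ hrs hp₁) hrun₂ M₂.s₀ false false w₂ [] []
      (by rw [vtape_ff]) (by simp)
  simp only [Prod.mk.injEq] at hc₂'
  obtain ⟨rfl, hvt₂, hu₂', rfl⟩ := hc₂'
  obtain ⟨rfl, rfl, rfl⟩ := vtape_eq_nil hvt₂.symm
  subst hu₂'
  have hrunC₁' := hrunC₁ (w₂.map EndM.lt ++ [EndM.rmark])
  simp only [List.nil_append, List.map_nil] at hrunC₁'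
  have hrunC₂' := hrunC₂ [EndM.rmark]
  simp only [List.append_nil, List.map_nil, List.nil_append] at hrunC₂'
  have hm1 : p₁ ++ pblock ([] : List W) q₀ r₀ ∈ P.prot :=
    (abs_of_reset P q₀ r₀ hrs hp₁).1
  -- assemble the run
  have hinit : ProtStep (CcA q₀ r₀ M₁ M₂) P.prot
      (cInit, tape (w₁ ++ w₂), [], [])
      (io1 M₁.s₀ false false true,
        w₁.map EndM.lt ++ (w₂.map EndM.lt ++ [EndM.rmark]), [], []) :=
    step_wr' (a := some EndM.lmark) (x := [])
      (Or.inl (Or.inr (Or.inl (Or.inl rfl)))) (by simp [tape]) rfl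
  have hbridge : ReflTransGen (ProtStep (CcA q₀ r₀ M₁ M₂) P.prot)
      (io1 sf₁ true true true, w₂.map EndM.lt ++ [EndM.rmark], [], p₁)
      (cMid, w₂.map EndM.lt ++ [EndM.rmark], [], p₁ ++ pblock ([] : List W) q₀ r₀) := by
    by_cases hwr : M₁.isWr sf₁
    · refine ReflTransGen.head
        (b := (cRq, w₂.map EndM.lt ++ [EndM.rmark], [], p₁))
        (step_wr' (a := none) (x := [])
          (Or.inr (Or.inl ⟨sf₁, hsf₁, hwr, rfl⟩)) rfl rfl) ?_
      exact ReflTransGen.single (step_qu' (Or.inl (Or.inr rfl)) hm1 rfl)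
    · exact ReflTransGen.single (step_qu' (Or.inr (Or.inl ⟨sf₁, hsf₁, hwr, rfl⟩)) hm1 rfl)
  have hmid : ProtStep (CcA q₀ r₀ M₁ M₂) P.prot
      (cMid, w₂.map EndM.lt ++ [EndM.rmark], [], p₁ ++ pblock ([] : List W) q₀ r₀)
      (io2 M₂.s₀ false false true, w₂.map EndM.lt ++ [EndM.rmark], [],
        p₁ ++ pblock ([] : List W) q₀ r₀) :=
    step_wr' (a := none) (x := [])
      (Or.inl (Or.inr (Or.inl (Or.inr rfl)))) rfl rfl
  by_cases hwr₂ : M₂.isWr sf₂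
  · refine ⟨(p₁ ++ pblock ([] : List W) q₀ r₀) ++ p₂,
      (abs_of_reset P q₀ r₀ hrs hp₁).2 _ hp₂, cFin, rfl, ?_⟩
    refine ReflTransGen.head hinit (hrunC₁'.trans (hbridge.trans
      (ReflTransGen.head hmid (hrunC₂'.trans ?_))))
    exact ReflTransGen.single (step_wr' (a := some EndM.rmark) (x := [])
      (Or.inr (Or.inr ⟨sf₂, hsf₂, hwr₂, rfl⟩)) (by simp) rfl)
  · have hm2 : ((p₁ ++ pblock ([] : List W) q₀ r₀) ++ p₂) ++
        pblock ([] : List W) q₀ r₀ ∈ P.prot := by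
      rw [List.append_assoc]
      exact (abs_of_reset P q₀ r₀ hrs hp₁).2 _ (abs_of_reset P q₀ r₀ hrs hp₂).1
    refine ⟨((p₁ ++ pblock ([] : List W) q₀ r₀) ++ p₂) ++ pblock ([] : List W) q₀ r₀,
      hm2, cFin, rfl, ?_⟩
    refine ReflTransGen.head hinit (hrunC₁'.trans (hbridge.trans
      (ReflTransGen.head hmid (hrunC₂'.trans ?_))))
    refine ReflTransGen.head
      (b := (cPre, [EndM.rmark], [],
        ((p₁ ++ pblock ([] : List W) q₀ r₀) ++ p₂) ++ pblock ([] : List W) q₀ r₀))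
      (step_qu' (Or.inr (Or.inr ⟨sf₂, hsf₂, hwr₂, rfl⟩)) hm2 rfl) ?_
    exact ReflTransGen.single (step_wr' (a := some EndM.rmark) (x := [])
      (Or.inl (Or.inr (Or.inr rfl))) (by simp) rfl)

end ConcatLemmas

section ConcatSound

open Relation

variable {σ W Q R S₁ S₂ : Type} (P : ProtLang W Q R) (q₀ : Q) (r₀ : R)
variable (M₁ : ProtAut σ W Q R S₁) (M₂ : ProtAut σ W Q R S₂) [Finite S₁] [Finite S₂]

lemma cc_phase2 : ∀ (m : ℕ) (v₁ : List (EndM σ)) (pm₁ : List (PLet W Q R))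
    (qq : Q) (rr : R) (c₂ : PConfig σ W Q R (CcS σ W S₁ S₂)) (p : List (PLet W Q R)),
    Abs P (pm₁ ++ pblock ([] : List W) qq rr) →
    RunN (ProtStep (CcA q₀ r₀ M₁ M₂) P.prot) m
      (cMid, v₁, [], pm₁ ++ pblock ([] : List W) qq rr) c₂ →
    (cFin, [], [], p) = c₂ →
    ∃ w₂, w₂ ∈ M₂.Lang P.prot ∧ v₁ = w₂.map EndM.lt ++ [EndM.rmark] := by
  intro m v₁ pm₁ qq rr c₂ p hA hrun hc2
  cases hrun with
  | refl =>
    exfalso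
    simp only [Prod.mk.injEq] at hc2
    have := hc2.1; simp [cFin, cMid] at this
  | @head _ b _ m₁ hstep hrest =>
    generalize hcb : ((cMid, v₁, ([] : List W),
      pm₁ ++ pblock ([] : List W) qq rr) : PConfig σ W Q R (CcS σ W S₁ S₂)) = c₁ at hstep
    cases hstep with
    | @wr s₂ t' a x v₂ u₂ p₂ hT =>
      simp only [Prod.mk.injEq] at hcb
      obtain ⟨hs, hv, hu, hpp⟩ := hcb
      subst hs hu hpp
      rcases hT with (((⟨s, a', x', s', g, e, k, hm, hg, heq⟩ |
          ⟨s, a', x', s', g, e, k, hm, hg, heq⟩) | ((heq | heq) | heq)) |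
          (⟨s, hF, hW, heq⟩ | ⟨s, hF, hW, heq⟩))
      · exfalso
        simp only [Prod.mk.injEq] at heq
        have := heq.1; simp [io1, cMid] at this
      · exfalso
        simp only [Prod.mk.injEq] at heq
        have := heq.1; simp [io2, cMid] at this
      · exfalso
        simp only [Set.mem_singleton_iff, Prod.mk.injEq] at heq
        have := heq.1; simp [cInit, cMid] at this
      · -- the step into phase 2
        simp only [Set.mem_singleton_iff, Prod.mk.injEq] at heq
        obtain ⟨-, rfl, rfl, rfl⟩ := heq
        simp only [Option.toList, List.nil_append] at hv
        subst hv
        have hrest' : RunN (ProtStep (CcA q₀ r₀ M₁ M₂) P.prot) m₁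
            (io2 M₂.s₀ false false true, v₁, [],
              (pm₁ ++ pblock ([] : List W) qq rr) ++ []) c₂ := by
          rw [List.append_nil]; simpa using hrest
        rcases genBack (cc_emb2 q₀ r₀ M₁ M₂) (pm₁ ++ pblock ([] : List W) qq rr) hA
            m₁ M₂.s₀ false false true v₁ [] [] c₂ hrest' P.empty_mem
            (fun _ => rfl) (by simp) with
          ⟨s', g', e', k', v', u', pm', hc₂'⟩ |
          ⟨m', hm', ws₂, v₁', s₂f, g₂, e₂, k₂, u₂, pm₂, hveq₂, hwsnil₂, hMrun₂,
            hpm₂, hk₂, he₂, hexit₂⟩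
        · exfalso
          rw [← hc2] at hc₂'
          simp only [Prod.mk.injEq] at hc₂'
          have := hc₂'.1; simp [cFin, io2] at this
        · have hacc₂ : ∀ (hsF : s₂f ∈ M₂.F), g₂ = true → e₂ = true → u₂ = [] →
              ws₂ ∈ M₂.Lang P.prot := by
            intro hsF hg₂ he₂' hu₂
            subst hg₂ he₂' hu₂
            simp only [ProtAut.Lang, Set.mem_setOf_eq, ProtAut.Accepts,
              ProtAut.AcceptsWith]
            refine ⟨pm₂, hpm₂, s₂f, hsF, ?_⟩
            have h := hMrun₂
            rw [vtape_ff] at h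
            simpa [vtape] using h
          rcases hexit₂ with ⟨a₄, x₄, t₄, hTm, ⟨sg, hsF₂, hsW₂, heq₄⟩, v₅, hv₄, hrest₄⟩ |
            ⟨qq₄, rr₄, t₄, hTm, ⟨sg, hsF₂, hsW₂, heq₄⟩, hmem₄, hrest₄⟩
          · -- exit reading the right marker
            simp only [Prod.mk.injEq] at heq₄
            obtain ⟨hio, rfl, rfl, rfl⟩ := heq₄
            obtain ⟨rfl, rfl, rfl, rfl⟩ := io2_inj hio
            have hv₅ : v₅ = [] := by
              cases hrest₄ with
              | refl =>
                simp only [Prod.mk.injEq] at hc2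
                exact hc2.2.1.symm
              | head hstep₅ _ => exact absurd hstep₅ (by
                  intro h'; exact cc_fin_stuck P _ _ M₁ M₂ h')
            refine ⟨ws₂, hacc₂ hsF₂ rfl rfl (hk₂ rfl), ?_⟩
            rw [hveq₂, hv₄, hv₅]
            rfl
          · -- exit via a final reset query
            simp only [Prod.mk.injEq] at heq₄
            obtain ⟨hio, rfl, rfl, rfl⟩ := heq₄
            obtain ⟨rfl, rfl, rfl, rfl⟩ := io2_inj hio
            have hv₆ : v₁' = [EndM.rmark] := by
              cases hrest₄ with
              | refl =>
                exfalso
                simp only [Prod.mk.injEq] at hc2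
                have := hc2.1; simp [cFin, cPre] at this
              | @head _ b₅ _ m₅ hstep₅ hrest₅ =>
                generalize hcb₅ : ((cPre, v₁', ([] : List W),
                  (pm₁ ++ pblock ([] : List W) qq rr ++ pm₂) ++
                    pblock u₂ qq₄ rr₄) : PConfig σ W Q R (CcS σ W S₁ S₂)) = c₅ at hstep₅
                cases hstep₅ with
                | @wr s₆ t₆ a₆ x₆ v₆ u₆ p₆ hT₆ =>
                  simp only [Prod.mk.injEq] at hcb₅
                  obtain ⟨hs₆, hv₆', hu₆, hp₆⟩ := hcb₅
                  subst hs₆ hu₆ hp₆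
                  rcases hT₆ with (((⟨s, a', x', s', g, e, k, hm, hg, heq⟩ |
                      ⟨s, a', x', s', g, e, k, hm, hg, heq⟩) | ((heq | heq) | heq)) |
                      (⟨s, hF, hW, heq⟩ | ⟨s, hF, hW, heq⟩))
                  · exfalso
                    simp only [Prod.mk.injEq] at heq
                    have := heq.1; simp [io1, cPre] at this
                  · exfalso
                    simp only [Prod.mk.injEq] at heq
                    have := heq.1; simp [io2, cPre] at this
                  · exfalso
                    simp only [Set.mem_singleton_iff, Prod.mk.injEq] at heq
                    have := heq.1; simp [cInit, cPre] at this
                  · exfalso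
                    simp only [Set.mem_singleton_iff, Prod.mk.injEq] at heq
                    have := heq.1; simp [cMid, cPre] at this
                  · -- the marker step
                    simp only [Set.mem_singleton_iff, Prod.mk.injEq] at heq
                    obtain ⟨-, rfl, rfl, rfl⟩ := heq
                    simp only [Option.toList, List.singleton_append] at hv₆'
                    have hv₇ : v₆ = [] := by
                      cases hrest₅ with
                      | refl =>
                        simp only [Prod.mk.injEq] at hc2
                        exact hc2.2.1.symm
                      | head hstep₆ _ => exact absurd hstep₆ (by
                          intro h'; exact cc_fin_stuck P _ _ M₁ M₂ h')
                    rw [hv₆', hv₇]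
                  · exfalso
                    simp only [Prod.mk.injEq] at heq
                    have := heq.1; simp [io1, cPre] at this
                  · exfalso
                    simp only [Prod.mk.injEq] at heq
                    have := heq.1; simp [io2, cPre] at this
                | @qu s₆ t₆ qq₆ rr₆ v₆ u₆ p₆ hT₆ hmem₆ =>
                  exfalso
                  simp only [Prod.mk.injEq] at hcb₅
                  obtain ⟨hs₆, -, -, -⟩ := hcb₅
                  rcases hT₆ with (((⟨s, q', r', s', g, e, k, hm, heq⟩ |
                      ⟨s, q', r', s', g, e, k, hm, heq⟩) | heq) |
                      (⟨s, hF, hW, heq⟩ | ⟨s, hF, hW, heq⟩)) <;>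
                  · simp only [Set.mem_singleton_iff, Prod.mk.injEq] at heq
                    rw [heq.1] at hs₆
                    simp [io1, io2, cRq, cPre] at hs₆
            refine ⟨ws₂, hacc₂ hsF₂ rfl rfl (hk₂ rfl), ?_⟩
            rw [hveq₂, hv₆]
      · exfalso
        simp only [Set.mem_singleton_iff, Prod.mk.injEq] at heq
        have := heq.1; simp [cPre, cMid] at this
      · exfalso
        simp only [Prod.mk.injEq] at heq
        have := heq.1; simp [io1, cMid] at this
      · exfalso
        simp only [Prod.mk.injEq] at heq
        have := heq.1; simp [io2, cMid] at this
    | @qu s₂ t' qq₂ rr₂ v₂ u₂ p₂ hT hmem =>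
      exfalso
      simp only [Prod.mk.injEq] at hcb
      obtain ⟨hs, -, -, -⟩ := hcb
      rcases hT with (((⟨s, q', r', s', g, e, k, hm, heq⟩ |
          ⟨s, q', r', s', g, e, k, hm, heq⟩) | heq) |
          (⟨s, hF, hW, heq⟩ | ⟨s, hF, hW, heq⟩)) <;>
      · simp only [Set.mem_singleton_iff, Prod.mk.injEq] at heq
        rw [heq.1] at hs
        simp [io1, io2, cRq, cMid] at hs

end ConcatSound

section ConcatSound2

open Relation

variable {σ W Q R S₁ S₂ : Type} (P : ProtLang W Q R) (q₀ : Q) (r₀ : R)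
variable (M₁ : ProtAut σ W Q R S₁) (M₂ : ProtAut σ W Q R S₂) [Finite S₁] [Finite S₂]
variable (hrs : ∀ p₁ ∈ P.prot, ∀ p₂ ∈ P.prot, p₁ ++ pblock ([] : List W) q₀ r₀ ++ p₂ ∈ P.prot)
include hrs

lemma cc_sound {w : List σ} (hw : w ∈ (CcA q₀ r₀ M₁ M₂).Lang P.prot) :
    ∃ w₁ w₂, w₁ ∈ M₁.Lang P.prot ∧ w₂ ∈ M₂.Lang P.prot ∧ w = w₁ ++ w₂ := by
  simp only [ProtAut.Lang, Set.mem_setOf_eq, ProtAut.Accepts,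
    ProtAut.AcceptsWith] at hw
  obtain ⟨p, hp, sf, hsf, hrun⟩ := hw
  have hsf' : sf = cFin := hsf
  subst hsf'
  obtain ⟨n, hrunN⟩ := runN_of_rtg hrun
  generalize hc2 : ((cFin, [], [], p) : PConfig σ W Q R (CcS σ W S₁ S₂)) = c₂ at hrunN
  cases hrunN with
  | refl =>
    exfalso
    simp only [Prod.mk.injEq] at hc2
    have h1 : (CcA q₀ r₀ M₁ M₂).s₀ = cFin := hc2.1.symm
    simp [CcA, cInit, cFin] at h1
  | @head _ b _ m hstep hrest =>
    generalize hcb : (((CcA q₀ r₀ M₁ M₂).s₀, tape w, ([] : List W),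
      ([] : List (PLet W Q R))) : PConfig σ W Q R (CcS σ W S₁ S₂)) = c₁ at hstep
    cases hstep with
    | @wr s₂ t' a x v₂ u₂ p₂ hT =>
      simp only [Prod.mk.injEq] at hcb
      obtain ⟨hs, hv, hu, hpp⟩ := hcb
      subst hu hpp
      have hs' : s₂ = cInit := by rw [← hs]; rfl
      subst hs'
      rcases hT with (((⟨s, a', x', s', g, e, k, hm, hg, heq⟩ |
          ⟨s, a', x', s', g, e, k, hm, hg, heq⟩) | ((heq | heq) | heq)) |
          (⟨s, hF, hW, heq⟩ | ⟨s, hF, hW, heq⟩))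
      · exfalso
        simp only [Prod.mk.injEq] at heq
        have := heq.1; simp [io1, cInit] at this
      · exfalso
        simp only [Prod.mk.injEq] at heq
        have := heq.1; simp [io2, cInit] at this
      · -- the initial step
        simp only [Set.mem_singleton_iff, Prod.mk.injEq] at heq
        obtain ⟨-, rfl, rfl, rfl⟩ := heq
        simp only [tape, Option.toList, List.singleton_append, List.cons.injEq,
          true_and] at hv
        have hrest' : RunN (ProtStep (CcA q₀ r₀ M₁ M₂) P.prot) m
            (io1 M₁.s₀ false false true, v₂, [], [] ++ []) c₂ := by
          simpa using hrest
        rcases genBack (cc_emb1 q₀ r₀ M₁ M₂) [] (abs_nil P) m M₁.s₀ false false true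
            v₂ [] [] c₂ hrest' P.empty_mem (fun _ => rfl) (by simp) with
          ⟨s', g', e', k', v', u', pm', hc₂'⟩ |
          ⟨m', hm', ws₁, v₁, s₁, g₁, e₁, k₁, u₁, pm₁, hveq, hwsnil, hMrun₁, hpm₁,
            hk₁, he₁, hexit⟩
        · exfalso
          rw [← hc2] at hc₂'
          simp only [Prod.mk.injEq] at hc₂'
          have := hc₂'.1; simp [cFin, io1] at this
        · rcases hexit with ⟨a'', x'', t'', hTm, ⟨sfw, hsF, hsW, heqw⟩, v₃, hv₁, hrest₂⟩ |
            ⟨qq₃, rr₃, t'', hTm, ⟨sfw, hsF, hsW, heqw⟩, hmem₂, hrest₂⟩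
          · -- bridge via the write exit
            simp only [Prod.mk.injEq] at heqw
            obtain ⟨hio, rfl, rfl, rfl⟩ := heqw
            obtain ⟨rfl, rfl, rfl, rfl⟩ := io1_inj hio
            have hu₁ : u₁ = [] := hk₁ rfl
            subst hu₁
            simp only [Option.toList, List.nil_append] at hv₁
            subst hv₁
            have hacc₁ : ws₁ ∈ M₁.Lang P.prot := by
              simp only [ProtAut.Lang, Set.mem_setOf_eq, ProtAut.Accepts,
                ProtAut.AcceptsWith]
              refine ⟨pm₁, hpm₁, s₁, hsF, ?_⟩
              have h := hMrun₁
              rw [vtape_ff] at h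
              simpa [vtape] using h
            simp only [List.nil_append, List.append_nil] at hrest₂
            cases hrest₂ with
            | refl =>
              exfalso
              simp only [Prod.mk.injEq] at hc2
              have := hc2.1; simp [cFin, cRq] at this
            | @head _ b₃ _ m₃ hstep₃ hrest₃ =>
              generalize hcb₃ : ((cRq, v₁, ([] : List W), pm₁) :
                PConfig σ W Q R (CcS σ W S₁ S₂)) = c₃ at hstep₃
              cases hstep₃ with
              | @wr s₄ t₄ a₄ x₄ v₄ u₄ p₄ hT₄ =>
                exfalso
                simp only [Prod.mk.injEq] at hcb₃
                obtain ⟨hs₄, -, -, -⟩ := hcb₃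
                rcases hT₄ with (((⟨s, a', x', s', g, e, k, hm, hg, heq⟩ |
                    ⟨s, a', x', s', g, e, k, hm, hg, heq⟩) | ((heq | heq) | heq)) |
                    (⟨s, hF, hW, heq⟩ | ⟨s, hF, hW, heq⟩)) <;>
                · simp only [Set.mem_singleton_iff, Prod.mk.injEq] at heq
                  rw [heq.1] at hs₄
                  simp [io1, io2, cInit, cMid, cPre, cRq] at hs₄
              | @qu s₄ t₄ qq₄ rr₄ v₄ u₄ p₄ hT₄ hmem₄ =>
                simp only [Prod.mk.injEq] at hcb₃
                obtain ⟨hs₄, hv₄, hu₄, hp₄⟩ := hcb₃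
                subst hs₄ hv₄ hu₄ hp₄
                rcases hT₄ with (((⟨s, q', r', s', g, e, k, hm, heq⟩ |
                    ⟨s, q', r', s', g, e, k, hm, heq⟩) | heq) |
                    (⟨s, hF, hW, heq⟩ | ⟨s, hF, hW, heq⟩))
                · exfalso
                  simp only [Prod.mk.injEq] at heq
                  have := heq.1; simp [io1, cRq] at this
                · exfalso
                  simp only [Prod.mk.injEq] at heq
                  have := heq.1; simp [io2, cRq] at this
                · simp only [Set.mem_singleton_iff, Prod.mk.injEq] at heq
                  obtain ⟨-, rfl, rfl, rfl⟩ := heq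
                  obtain ⟨w₂, hw₂, hv₁e⟩ := cc_phase2 P qq₄ rr₄ M₁ M₂ m₃ v₁ pm₁
                    qq₄ rr₄ c₂ p (abs_of_reset P qq₄ rr₄ hrs hpm₁) hrest₃ hc2
                  refine ⟨ws₁, w₂, hacc₁, hw₂, ?_⟩
                  have : List.map EndM.lt w ++ [EndM.rmark] =
                      List.map EndM.lt (ws₁ ++ w₂) ++ [EndM.rmark] := by
                    rw [hv, hveq, hv₁e]
                    simp
                  exact map_rmark_cancel this
                · exfalso
                  simp only [Prod.mk.injEq] at heq
                  have := heq.1; simp [io1, cRq] at this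
                · exfalso
                  simp only [Prod.mk.injEq] at heq
                  have := heq.1; simp [io2, cRq] at this
          · -- bridge via the query exit
            simp only [Prod.mk.injEq] at heqw
            obtain ⟨hio, rfl, rfl, rfl⟩ := heqw
            obtain ⟨rfl, rfl, rfl, rfl⟩ := io1_inj hio
            have hu₁ : u₁ = [] := hk₁ rfl
            subst hu₁
            have hacc₁ : ws₁ ∈ M₁.Lang P.prot := by
              simp only [ProtAut.Lang, Set.mem_setOf_eq, ProtAut.Accepts,
                ProtAut.AcceptsWith]
              refine ⟨pm₁, hpm₁, s₁, hsF, ?_⟩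
              have h := hMrun₁
              rw [vtape_ff] at h
              simpa [vtape] using h
            have hrest₂' : RunN (ProtStep (CcA qq₃ rr₃ M₁ M₂) P.prot) m'
                (cMid, v₁, [], pm₁ ++ pblock ([] : List W) qq₃ rr₃) c₂ := by
              simpa using hrest₂
            obtain ⟨w₂, hw₂, hv₁e⟩ := cc_phase2 P qq₃ rr₃ M₁ M₂ m' v₁ pm₁
              qq₃ rr₃ c₂ p (abs_of_reset P qq₃ rr₃ hrs hpm₁) hrest₂' hc2
            refine ⟨ws₁, w₂, hacc₁, hw₂, ?_⟩
            have : List.map EndM.lt w ++ [EndM.rmark] =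
                List.map EndM.lt (ws₁ ++ w₂) ++ [EndM.rmark] := by
              rw [hv, hveq, hv₁e]
              simp
            exact map_rmark_cancel this
      · exfalso
        simp only [Set.mem_singleton_iff, Prod.mk.injEq] at heq
        have := heq.1; simp [cMid, cInit] at this
      · exfalso
        simp only [Set.mem_singleton_iff, Prod.mk.injEq] at heq
        have := heq.1; simp [cPre, cInit] at this
      · exfalso
        simp only [Prod.mk.injEq] at heq
        have := heq.1; simp [io1, cInit] at this
      · exfalso
        simp only [Prod.mk.injEq] at heq
        have := heq.1; simp [io2, cInit] at this
    | @qu s₂ t' qq₂ rr₂ v₂ u₂ p₂ hT hmem =>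
      exfalso
      simp only [Prod.mk.injEq] at hcb
      obtain ⟨hs, -, -, -⟩ := hcb
      have hs' : s₂ = cInit := by rw [← hs]; rfl
      subst hs'
      rcases hT with (((⟨s, q', r', s', g, e, k, hm, heq⟩ |
          ⟨s, q', r', s', g, e, k, hm, heq⟩) | heq) |
          (⟨s, hF, hW, heq⟩ | ⟨s, hF, hW, heq⟩)) <;>
      · simp only [Set.mem_singleton_iff, Prod.mk.injEq] at heq
        have := heq.1
        simp [io1, io2, cRq, cInit] at this

lemma cc_lang : (CcA q₀ r₀ M₁ M₂).Lang P.prot =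
    LangConcat (M₁.Lang P.prot) (M₂.Lang P.prot) := by
  ext w
  constructor
  · intro hw
    obtain ⟨w₁, w₂, h₁, h₂, rfl⟩ := cc_sound P q₀ r₀ M₁ M₂ hrs hw
    exact ⟨w₁, h₁, w₂, h₂, rfl⟩
  · rintro ⟨u, hu, v, hv, rfl⟩
    exact cc_complete P q₀ r₀ M₁ M₂ hrs hu hv

end ConcatSound2

/-- If the language of correct protocols `PROT` additionally has a
reset operation (axiom (vi)), then the class of `1NB_PROT`-recognizable languages is
closed under concatenation and Kleene star. -/
theorem stmt9 {W Q R : Type} [Fintype W] [Fintype Q] [Fintype R]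
    [Nonempty Q] [Nonempty R] (P : ProtLang W Q R)
    (hreset : ∃ (q : Q) (r : R), ∀ p₁ ∈ P.prot, ∀ p₂ ∈ P.prot,
        p₁ ++ pblock [] q r ++ p₂ ∈ P.prot)
    (σ : Type) [Fintype σ] (L₁ L₂ : Set (List σ))
    (h₁ : L₁ ∈ ProtCL P σ) (h₂ : L₂ ∈ ProtCL P σ) :
    LangConcat L₁ L₂ ∈ ProtCL P σ ∧ LangStar L₁ ∈ ProtCL P σ := by
  obtain ⟨q₀, r₀, hrs⟩ := hreset
  obtain ⟨n₁, M₁, rfl⟩ := h₁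
  obtain ⟨n₂, M₂, rfl⟩ := h₂
  constructor
  · rw [← cc_lang P q₀ r₀ M₁ M₂ hrs]
    exact mem_protCL P (CcA q₀ r₀ M₁ M₂)
  · rw [← star_lang P q₀ r₀ M₁ hrs]
    exact mem_protCL P (StA q₀ r₀ M₁)
end

section
/- Let β : {0,1}* → {0,1}* be the monoid morphism with β(0) = 01 and β(1) = 10, and let sq(x) = β(x)11β(x)11. For every set X ⊆ {0,1}* there exist languages L, W ⊆ {0,1}* with the following properties: (1) sq(x) ∈ L for every x ∈ X, and sq(x) ∉ L for every x ∉ X; (2) every infinite regular language over {0,1} contains a word of L ∩ W and a word of W ∖ L; (3) W is polynomially sparse: there is a constant c such that for all n ≥ 1 the number of words of W of length at most n is at most n^c + c; (4) for all u, v ∈ {0,1}* with |u| = |v| and u ≠ v, if uv ∉ W then uv ∈ L if and only if u is lexicographically smaller than v; (5) every word of odd length not in W belongs to L, and every word of the form xx (x ∈ {0,1}*) that is neither in sq({0,1}*) nor in W belongs to L. (This is the combinatorial content of the paper's Lemma on the existence of a language L satisfying Requirements 1–5; the polynomial-time computability clauses are omitted.) -/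
/-- The monoid morphism `β : {0,1}* → {0,1}*` with `β(0) = 01`, `β(1) = 10`
(`0 = false`, `1 = true`). -/
def betaMor (x : List Bool) : List Bool :=
  x.flatMap fun b => if b then [true, false] else [false, true]

/-- `sq(x) = β(x)·11·β(x)·11`. -/
def sqWord (x : List Bool) : List Bool :=
  betaMor x ++ [true, true] ++ betaMor x ++ [true, true]

/-- For equal-length binary words, `u` is lexicographically smaller than `v`:
at the first position where they differ, `u` has `0` and `v` has `1`. -/
def LexLt (u v : List Bool) : Prop :=
  ∃ i : ℕ, i < u.length ∧ u.take i = v.take i ∧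
    u[i]? = some false ∧ v[i]? = some true

lemma betaMor_cons (b : Bool) (t : List Bool) :
    betaMor (b :: t) = (if b then [true,false] else [false,true]) ++ betaMor t := rfl
lemma length_betaMor (x : List Bool) : (betaMor x).length = 2 * x.length := by
  induction x with
  | nil => rfl
  | cons b t ih => cases b <;> simp [betaMor_cons, ih] <;> ring
lemma betaMor_getElem? (u : List Bool) (j : ℕ) (b : Bool) (h : u[j]? = some b) :
    (betaMor u)[2*j]? = some b ∧ (betaMor u)[2*j+1]? = some (!b) := by
  induction u generalizing j with
  | nil => simp at h
  | cons c t ih =>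
    cases j with
    | zero => simp_all [betaMor_cons]; cases c <;> simp_all
    | succ j =>
      simp only [List.getElem?_cons_succ] at h
      have := ih j h
      have e1 : 2 * (j+1) = (2*j) + 2 := by ring
      have e2 : 2 * (j+1) + 1 = (2*j+1) + 2 := by ring
      cases c <;> simp [betaMor_cons, e1, e2, this.1, this.2]
lemma sqWord_eq (x : List Bool) :
    sqWord x = (betaMor x ++ [true, true]) ++ (betaMor x ++ [true, true]) := by
  simp [sqWord]
lemma length_sqWord (x : List Bool) : (sqWord x).length = 4 * x.length + 4 := by
  simp [sqWord, length_betaMor]; ring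

def line (x y z : List Bool) (k : ℕ) : List Bool := x ++ (List.replicate k y).flatten ++ z

lemma length_line (x y z : List Bool) (k : ℕ) :
    (line x y z k).length = x.length + k * y.length + z.length := by
  simp [line, List.length_flatten, List.map_replicate]
  ring

lemma sq_unique {x y z : List Bool} (hy : y ≠ []) {k1 k2 : ℕ} (hz : z.length ≤ k1)
    (hk : k1 < k2) (h1 : line x y z k1 ∈ Set.range sqWord)
    (h2 : line x y z k2 ∈ Set.range sqWord) : False := by
  obtain ⟨u1, hu1⟩ := h1
  obtain ⟨u2, hu2⟩ := h2
  have hyP : 1 ≤ y.length := List.length_pos_iff.mpr hy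
  have hl1 : 4 * u1.length + 4 = x.length + k1 * y.length + z.length := by
    rw [← length_sqWord, hu1, length_line]
  have hl2 : 4 * u2.length + 4 = x.length + k2 * y.length + z.length := by
    rw [← length_sqWord, hu2, length_line]
  have hu12 : u1.length < u2.length := by nlinarith
  -- h_i is a prefix of x ++ (replicate k_i y).flatten
  have key : ∀ (u : List Bool) (k : ℕ), sqWord u = line x y z k →
      2 * u.length + 2 ≤ x.length + k * y.length →
      (betaMor u ++ [true, true]) <+: (x ++ (List.replicate k y).flatten) := by
    intro u k hu hlen
    have hpre : (betaMor u ++ [true, true]) <+: line x y z k := by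
      rw [← hu, sqWord_eq]; exact List.prefix_append _ _
    have hpre2 : (x ++ (List.replicate k y).flatten) <+: line x y z k := by
      rw [line]; exact List.prefix_append _ _
    refine List.prefix_of_prefix_length_le hpre hpre2 ?_
    simp [length_betaMor]
    omega
  have p1 : (betaMor u1 ++ [true, true]) <+: (x ++ (List.replicate k1 y).flatten) := by
    apply key u1 k1 hu1
    have : z.length ≤ k1 * y.length := le_trans hz (Nat.le_mul_of_pos_right k1 hyP)
    omega
  have p2 : (betaMor u2 ++ [true, true]) <+: (x ++ (List.replicate k2 y).flatten) := by
    apply key u2 k2 hu2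
    have : z.length ≤ k2 * y.length :=
      le_trans hz (le_trans (le_of_lt hk) (Nat.le_mul_of_pos_right k2 hyP))
    omega
  -- x ++ rep k1 is a prefix of x ++ rep k2
  have p3 : (x ++ (List.replicate k1 y).flatten) <+: (x ++ (List.replicate k2 y).flatten) := by
    apply (List.prefix_append_right_inj x).mpr
    have : List.replicate k2 y = List.replicate k1 y ++ List.replicate (k2 - k1) y := by
      rw [← List.replicate_add]; congr 1; omega
    rw [this, List.flatten_append]; exact List.prefix_append _ _
  have p4 : (betaMor u1 ++ [true, true]) <+: (betaMor u2 ++ [true, true]) :=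
    List.prefix_of_prefix_length_le (p1.trans p3) p2 (by simp [length_betaMor]; omega)
  -- compare at positions 2|u1| and 2|u1|+1
  obtain ⟨c, hc⟩ : ∃ c, u2[u1.length]? = some c :=
    ⟨u2[u1.length], by simp [hu12]⟩
  have hb := betaMor_getElem? u2 u1.length c hc
  set i0 := 2 * u1.length with hi0
  have h1a : (betaMor u1 ++ [true, true])[i0]? = some true := by
    rw [List.getElem?_append_right (by simp [length_betaMor, hi0])]
    simp [length_betaMor, hi0]
  have h1b : (betaMor u1 ++ [true, true])[i0+1]? = some true := by
    rw [List.getElem?_append_right (by simp [length_betaMor, hi0])]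
    simp [length_betaMor, hi0]
  have h2a : (betaMor u2 ++ [true, true])[i0]? = some c := by
    rw [List.getElem?_append_left (by simp [length_betaMor]; omega)]
    exact hb.1
  have h2b : (betaMor u2 ++ [true, true])[i0+1]? = some (!c) := by
    rw [List.getElem?_append_left (by simp [length_betaMor]; omega)]
    exact hb.2
  obtain ⟨t, ht⟩ := p4
  have ea : (betaMor u2 ++ [true, true])[i0]? = (betaMor u1 ++ [true, true])[i0]? := by
    rw [← ht, List.getElem?_append_left (by simp [length_betaMor, hi0])]
  have eb : (betaMor u2 ++ [true, true])[i0+1]? = (betaMor u1 ++ [true, true])[i0+1]? := by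
    rw [← ht, List.getElem?_append_left (by simp [length_betaMor, hi0])]
  rw [h1a, h2a] at ea
  rw [h1b, h2b] at eb
  cases c <;> simp_all
lemma betaMor_inj : Function.Injective betaMor := by
  intro u v h
  have hl : u.length = v.length := by
    have := congrArg List.length h; simp [length_betaMor] at this; omega
  apply List.ext_getElem hl
  intro i h1 h2
  have hu := (betaMor_getElem? u i u[i] (by simp [h1])).1
  have hv := (betaMor_getElem? v i v[i] (by simp [h2])).1
  rw [h, hv] at hu
  exact (Option.some_inj.mp hu).symm
lemma sqWord_inj : Function.Injective sqWord := by
  intro u v h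
  have hl : u.length = v.length := by
    have := congrArg List.length h; simp [length_sqWord] at this; omega
  apply betaMor_inj
  rw [sqWord_eq, sqWord_eq] at h
  have := List.append_inj h (by simp [length_betaMor, hl])
  exact (List.append_inj this.1 (by simp [length_betaMor, hl])).1
/-- uniqueness of equal-halves splitting -/
lemma half_split {u v u' v' : List Bool} (h : u ++ v = u' ++ v')
    (h1 : u.length = v.length) (h2 : u'.length = v'.length) : u = u' ∧ v = v' :=
  List.append_inj h (by have := congrArg List.length h; simp at this; omega)
def enc : List Bool → ℕ
  | [] => 0
  | b :: t => 2 * enc t + (if b then 2 else 1)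
lemma enc_lt (l : List Bool) : enc l + 2 ≤ 2 ^ (l.length + 1) := by
  induction l with
  | nil => simp [enc]
  | cons b t ih =>
    have hb : enc (b :: t) ≤ 2 * enc t + 2 := by cases b <;> simp [enc]
    have h2 : 2 ^ ((b :: t).length + 1) = 2 * 2 ^ (t.length + 1) := by
      simp [List.length_cons]; ring
    omega
lemma enc_inj : Function.Injective enc := by
  intro u v h
  induction u generalizing v with
  | nil =>
    cases v with
    | nil => rfl
    | cons c s => cases c <;> simp [enc] at h <;> omega
  | cons b t ih =>
    cases v with
    | nil => cases b <;> simp [enc] at h <;> omega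
    | cons c s =>
      have hbc : b = c := by
        cases b <;> cases c <;> first | rfl | (simp [enc] at h; omega)
      subst hbc
      have : enc t = enc s := by
        cases b <;> simp [enc] at h <;> omega
      rw [ih this]
lemma ap_log_parity (A p K : ℕ) (hp : 1 ≤ p) (b : Bool) :
    ∃ k, K ≤ k ∧ decide (Even (Nat.log 2 (A + k * p))) = b := by
  obtain ⟨j, hj1, hj2⟩ : ∃ j, (A + (K+1) * p + p + 1 ≤ 2 ^ j) ∧ decide (Even j) = b := by
    set m := A + (K+1) * p + p + 1 with hm
    by_cases h : decide (Even m) = b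
    · exact ⟨m, le_of_lt (Nat.lt_two_pow_self (n := m)), h⟩
    · refine ⟨m + 1, le_of_lt (lt_trans (Nat.lt_two_pow_self (n := m))
        (Nat.pow_lt_pow_right one_lt_two (lt_add_one m))), ?_⟩
      have hev : Even (m+1) ↔ ¬ Even m := Nat.even_add_one
      cases b <;> simp_all [hev]
  have hpj : p < 2 ^ j := by omega
  have hAj : A < 2 ^ j := by omega
  set n := 2 ^ j - A with hn
  set k := n / p + 1 with hk
  have hdm : p * (n / p) + n % p = n := Nat.div_add_mod n p
  have hmod : n % p < p := Nat.mod_lt _ hp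
  have hkp : k * p = p * (n / p) + p := by rw [hk]; ring
  have hlow : 2 ^ j ≤ A + k * p := by omega
  have hhigh : A + k * p < 2 ^ (j + 1) := by
    have h2 : 2 ^ (j+1) = 2 ^ j + 2 ^ j := by ring
    omega
  refine ⟨k, ?_, ?_⟩
  · by_contra hcon
    push_neg at hcon
    have h1 : k * p ≤ K * p := Nat.mul_le_mul_right p (le_of_lt hcon)
    nlinarith
  · rw [Nat.log_eq_of_pow_le_of_lt_pow hlow hhigh]
    exact hj2
lemma exists_line {R : Set (List Bool)}
    (hreg : ∃ (n : ℕ) (D : DFA Bool (Fin n)), ∀ w, w ∈ D.accepts ↔ w ∈ R)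
    (hinf : R.Infinite) :
    ∃ a b c : List Bool, b ≠ [] ∧ ∀ k, line a b c k ∈ R := by
  obtain ⟨n, D, hD⟩ := hreg
  obtain ⟨w, hwR, hwlen⟩ : ∃ w ∈ R, n ≤ w.length := by
    by_contra hcon
    push_neg at hcon
    exact hinf ((List.finite_length_lt Bool n).subset fun w hw => hcon w hw)
  obtain ⟨a, b, c, hx, -, hb, hsub⟩ :=
    D.pumping_lemma ((hD w).mpr hwR) (by rwa [Fintype.card_fin])
  refine ⟨a, b, c, hb, fun k => ?_⟩
  have hmem : line a b c k ∈ ({a} : Language Bool) * KStar.kstar {b} * {c} := by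
    rw [Language.mem_mul]
    refine ⟨a ++ (List.replicate k b).flatten, ?_, c, Set.mem_singleton c, by simp [line]⟩
    rw [Language.mem_mul]
    refine ⟨a, Set.mem_singleton a, (List.replicate k b).flatten, ?_, rfl⟩
    exact Language.mem_kstar.mpr ⟨List.replicate k b, rfl,
      fun y hy => (List.eq_of_mem_replicate hy)⟩
  exact (hD _).mp (hsub hmem)


def Wset : Set (List Bool) :=
  {w | ∃ x y z : List Bool, ∃ k : ℕ,
    y ≠ [] ∧ 2 ^ (x.length + y.length + z.length) ≤ k ∧ w = line x y z k}

def Phi (w : List Bool) : Prop := Even (Nat.log 2 w.length)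

def Lset (X : Set (List Bool)) : Set (List Bool) :=
  (sqWord '' X) ∪ {w | w ∈ Wset ∧ w ∉ Set.range sqWord ∧ Phi w} ∪
  {w | (∃ u v : List Bool, w = u ++ v ∧ u.length = v.length ∧ LexLt u v) ∧ w ∉ Wset} ∪
  {w | Odd w.length ∧ w ∉ Wset} ∪
  {w | (∃ t, w = t ++ t) ∧ w ∉ Set.range sqWord ∧ w ∉ Wset}

lemma sparsity (n : ℕ) (hn : 1 ≤ n) : {w ∈ Wset | w.length ≤ n}.ncard ≤ n ^ 80 + 80 := by
  classical
  set B := 2 * n + 1 with hB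
  set S := {w ∈ Wset | w.length ≤ n} with hS
  have hrep : ∀ w : List Bool, ∃ q : List Bool × List Bool × List Bool × ℕ,
      w ∈ S → (w = line q.1 q.2.1 q.2.2.1 q.2.2.2 ∧
        enc q.1 < B ∧ enc q.2.1 < B ∧ enc q.2.2.1 < B ∧ q.2.2.2 < B) := by
    intro w
    by_cases hw : w ∈ S
    · obtain ⟨⟨x, y, z, k, hy, hk, hline⟩, hlen⟩ := hw
      refine ⟨(x, y, z, k), fun _ => ⟨hline, ?_, ?_, ?_, ?_⟩⟩ <;>
      · have hyl : 1 ≤ y.length := List.length_pos_iff.mpr hy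
        have hwl : x.length + k * y.length + z.length ≤ n := by
          rw [hline, length_line] at hlen; exact hlen
        have hkn : k ≤ n := le_trans (Nat.le_mul_of_pos_right k hyl) (by omega)
        have hsn : 2 ^ (x.length + y.length + z.length) ≤ n := le_trans hk hkn
        have hbnd : ∀ l : List Bool, l.length + 1 ≤ x.length + y.length + z.length + 1 →
            enc l < B := by
          intro l hl
          have h1 := enc_lt l
          have h2 : 2 ^ (l.length + 1) ≤ 2 ^ (x.length + y.length + z.length + 1) :=
            Nat.pow_le_pow_right (by norm_num) hl
          have h3 : 2 ^ (x.length + y.length + z.length + 1)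
              = 2 * 2 ^ (x.length + y.length + z.length) := by ring
          omega
        first
          | exact hbnd x (by omega)
          | exact hbnd y (by omega)
          | exact hbnd z (by omega)
          | exact (by omega : k < B)
    · exact ⟨([], [], [], 0), fun h => absurd h hw⟩
  choose f hf using hrep
  have hcode : S.ncard ≤ (Set.Iio (B ^ 4)).ncard := by
    apply Set.ncard_le_ncard_of_injOn
      (fun w => ((((f w).2.2.2 * B + enc (f w).2.2.1) * B + enc (f w).2.1) * B + enc (f w).1))
    · intro w hw
      obtain ⟨-, h1, h2, h3, h4⟩ := hf w hw
      simp only [Set.mem_Iio]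
      have s1 : (f w).2.2.2 * B + enc (f w).2.2.1 < B ^ 2 := by
        calc (f w).2.2.2 * B + enc (f w).2.2.1 < (f w).2.2.2 * B + B := by omega
          _ = ((f w).2.2.2 + 1) * B := by ring
          _ ≤ B * B := Nat.mul_le_mul_right B (by omega)
          _ = B ^ 2 := by ring
      have s2 : ((f w).2.2.2 * B + enc (f w).2.2.1) * B + enc (f w).2.1 < B ^ 3 := by
        calc _ < ((f w).2.2.2 * B + enc (f w).2.2.1) * B + B := by omega
          _ = ((f w).2.2.2 * B + enc (f w).2.2.1 + 1) * B := by ring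
          _ ≤ B ^ 2 * B := Nat.mul_le_mul_right B (by omega)
          _ = B ^ 3 := by ring
      calc _ < (((f w).2.2.2 * B + enc (f w).2.2.1) * B + enc (f w).2.1) * B + B := by omega
        _ = (((f w).2.2.2 * B + enc (f w).2.2.1) * B + enc (f w).2.1 + 1) * B := by ring
        _ ≤ B ^ 3 * B := Nat.mul_le_mul_right B (by omega)
        _ = B ^ 4 := by ring
    · intro w hw w' hw' heq
      obtain ⟨e0, e1, e2, e3, e4⟩ := hf w hw
      obtain ⟨e0', e1', e2', e3', e4'⟩ := hf w' hw'
      simp only at heq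
      have hBpos : 0 < B := by omega
      -- peel off base-B digits
      have peel : ∀ t a t' a' : ℕ, a < B → a' < B → t * B + a = t' * B + a' →
          t = t' ∧ a = a' := by
        intro t a t' a' ha ha' h
        have h1 : (t * B + a) % B = a := by
          rw [Nat.add_comm, Nat.add_mul_mod_self_right]; exact Nat.mod_eq_of_lt ha
        have h2 : (t' * B + a') % B = a' := by
          rw [Nat.add_comm, Nat.add_mul_mod_self_right]; exact Nat.mod_eq_of_lt ha'
        rw [h, h2] at h1
        subst h1
        exact ⟨Nat.eq_of_mul_eq_mul_right hBpos (by omega), rfl⟩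
      obtain ⟨p1, q1⟩ := peel _ _ _ _ e1 e1' heq
      obtain ⟨p2, q2⟩ := peel _ _ _ _ e2 e2' p1
      obtain ⟨p3, q3⟩ := peel _ _ _ _ e3 e3' p2
      have hx := enc_inj q1
      have hy := enc_inj q3
      have hz := enc_inj q2
      rw [e0, e0', hx, hy, hz, p3]
  have hIio : (Set.Iio (B ^ 4)).ncard = B ^ 4 := by
    rw [← Finset.coe_range, Set.ncard_coe_finset]; simp
  rw [hIio] at hcode
  refine le_trans hcode ?_
  -- (2n+1)^4 ≤ n^80 + 80
  rcases Nat.lt_or_ge n 2 with h2 | h2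
  · interval_cases n
    · norm_num [hB]
  · have c1 : B ^ 4 ≤ (3 * n) ^ 4 := Nat.pow_le_pow_left (by omega) 4
    have c2 : (3 * n) ^ 4 = 81 * n ^ 4 := by ring
    have c3 : (81 : ℕ) ≤ n ^ 7 := by
      calc (81 : ℕ) ≤ 2 ^ 7 := by norm_num
        _ ≤ n ^ 7 := Nat.pow_le_pow_left h2 7
    have c4 : 81 * n ^ 4 ≤ n ^ 7 * n ^ 4 := Nat.mul_le_mul_right _ c3
    have c5 : n ^ 7 * n ^ 4 = n ^ 11 := by ring
    have c6 : n ^ 11 ≤ n ^ 80 := Nat.pow_le_pow_right (by omega) (by norm_num)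
    omega

lemma lexlt_ne {u v : List Bool} (h : LexLt u v) : u ≠ v := by
  obtain ⟨i, -, -, hu, hv⟩ := h
  intro he; rw [he, hv] at hu; simp at hu

/-- For every set `X ⊆ {0,1}*` there exist languages `L, W ⊆ {0,1}*`
satisfying Requirements 1–5 of the paper: (1) `sqWord` separates `X` via `L`; (2) every
infinite regular language meets both `L ∩ W` and `W ∖ L`; (3) `W` is polynomially
sparse; (4) outside `W`, concatenations `uv` of distinct equal-length words lie in `L`
exactly when `u` is lexicographically smaller than `v`; (5) outside `W`, all words of
odd length, and all squares `xx` not of the form `sqWord(·)`, lie in `L`. -/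
theorem stmt13 (X : Set (List Bool)) :
    ∃ L W : Set (List Bool),
      (∀ x : List Bool, (x ∈ X → sqWord x ∈ L) ∧ (x ∉ X → sqWord x ∉ L)) ∧
      (∀ R : Set (List Bool),
        (∃ (n : ℕ) (D : DFA Bool (Fin n)), ∀ w, w ∈ D.accepts ↔ w ∈ R) →
        R.Infinite →
        (∃ w ∈ R, w ∈ L ∩ W) ∧ (∃ w ∈ R, w ∈ W \ L)) ∧
      (∃ c : ℕ, ∀ n : ℕ, 1 ≤ n → {w ∈ W | w.length ≤ n}.ncard ≤ n ^ c + c) ∧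
      (∀ u v : List Bool, u.length = v.length → u ≠ v → u ++ v ∉ W →
        (u ++ v ∈ L ↔ LexLt u v)) ∧
      (∀ w : List Bool, Odd w.length → w ∉ W → w ∈ L) ∧
      (∀ x : List Bool, x ++ x ∉ Set.range sqWord → x ++ x ∉ W → x ++ x ∈ L) := by
  refine ⟨Lset X, Wset, ?_, ?_, ⟨80, sparsity⟩, ?_, ?_, ?_⟩
  · -- Requirement 1
    intro x
    constructor
    · intro hx
      exact Or.inl (Or.inl (Or.inl (Or.inl ⟨x, hx, rfl⟩)))
    · intro hx hmem
      rcases hmem with ((((⟨u, hu, he⟩ | ⟨-, hnr, -⟩) | ⟨⟨u, v, he, hlen, hlex⟩, -⟩) |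
        ⟨hodd, -⟩) | ⟨-, hnr, -⟩)
      · exact hx (sqWord_inj he ▸ hu)
      · exact hnr ⟨x, rfl⟩
      · have h2 : u ++ v = (betaMor x ++ [true, true]) ++ (betaMor x ++ [true, true]) := by
          rw [← he, sqWord_eq]
        obtain ⟨h3, h4⟩ := half_split h2 hlen rfl
        exact lexlt_ne hlex (h3.trans h4.symm)
      · rw [length_sqWord] at hodd
        simp [Nat.odd_iff] at hodd
        omega
      · exact hnr ⟨x, rfl⟩
  · -- Requirement 2
    intro R hreg hinf
    obtain ⟨a, b, c, hbne, hline⟩ := exists_line hreg hinf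
    have hbl : 1 ≤ b.length := List.length_pos_iff.mpr hbne
    set s := a.length + b.length + c.length with hs
    set K := max (2 ^ s) c.length with hK
    have hlen : ∀ k, (line a b c k).length = a.length + c.length + k * b.length := by
      intro k; rw [length_line]; ring
    have hW : ∀ k, K ≤ k → line a b c k ∈ Wset := fun k hk =>
      ⟨a, b, c, k, hbne, le_trans (le_max_left _ _) hk, rfl⟩
    have hPhiIff : ∀ k, (Phi (line a b c k) ↔
        decide (Even (Nat.log 2 (a.length + c.length + k * b.length))) = true) := by
      intro k
      rw [decide_eq_true_eq]
      unfold Phi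
      rw [hlen k]
    have main : ∀ tv : Bool, ∃ w, w ∈ R ∧ w ∈ Wset ∧ w ∉ Set.range sqWord ∧
        (Phi w ↔ tv = true) := by
      intro tv
      obtain ⟨k1, hk1K, hp1⟩ := ap_log_parity (a.length + c.length) b.length K hbl tv
      obtain ⟨k2, hk2K, hp2⟩ := ap_log_parity (a.length + c.length) b.length (k1 + 1) hbl tv
      by_cases hr : line a b c k1 ∈ Set.range sqWord
      · refine ⟨line a b c k2, hline k2, hW k2 (by omega), ?_, ?_⟩
        · intro h2
          exact sq_unique hbne (le_trans (le_max_right _ _) hk1K) (by omega) hr h2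
        · rw [hPhiIff k2, hp2]
      · exact ⟨line a b c k1, hline k1, hW k1 hk1K, hr, by rw [hPhiIff k1, hp1]⟩
    constructor
    · obtain ⟨w, hwR, hwW, hwnr, hphi⟩ := main true
      exact ⟨w, hwR, Or.inl (Or.inl (Or.inl (Or.inr ⟨hwW, hwnr, hphi.mpr rfl⟩))), hwW⟩
    · obtain ⟨w, hwR, hwW, hwnr, hphi⟩ := main false
      refine ⟨w, hwR, hwW, ?_⟩
      intro hmem
      rcases hmem with ((((⟨u, -, he⟩ | ⟨-, -, hph⟩) | ⟨-, hnW⟩) | ⟨-, hnW⟩) | ⟨-, -, hnW⟩)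
      · exact hwnr ⟨u, he⟩
      · simpa using hphi.mp hph
      · exact hnW hwW
      · exact hnW hwW
      · exact hnW hwW
  · -- Requirement 4
    intro u v hlen hne hnW
    constructor
    · intro hmem
      rcases hmem with ((((⟨t, -, he⟩ | ⟨hW, -, -⟩) | ⟨⟨u', v', he, hlen', hlex⟩, -⟩) |
        ⟨hodd, -⟩) | ⟨⟨t, he⟩, -, -⟩)
      · have h2 : u ++ v = (betaMor t ++ [true, true]) ++ (betaMor t ++ [true, true]) := by
          rw [← he, sqWord_eq]
        obtain ⟨h3, h4⟩ := half_split h2 hlen rfl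
        exact absurd (h3.trans h4.symm) hne
      · exact absurd hW hnW
      · obtain ⟨h3, h4⟩ := half_split he hlen hlen'
        rw [h3, h4]
        exact hlex
      · rw [List.length_append, ← hlen] at hodd
        simp [Nat.odd_iff] at hodd
        omega
      · obtain ⟨h3, h4⟩ := half_split he hlen rfl
        exact absurd (h3.trans h4.symm) hne
    · intro hlex
      exact Or.inl (Or.inl (Or.inr ⟨⟨u, v, rfl, hlen, hlex⟩, hnW⟩))
  · -- Requirement 5a
    intro w hodd hnW
    exact Or.inl (Or.inr ⟨hodd, hnW⟩)
  · -- Requirement 5b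
    intro x hnr hnW
    exact Or.inr ⟨⟨x, rfl⟩, hnr, hnW⟩
end

section
/- Let A be a nondeterministic finite automaton over a finite alphabet and let s be a state of A such that s is reachable (there exists a word w with s ∈ A.evalFrom(start, w)) and coreachable (there exists a word w such that A.evalFrom({s}, w) contains an accept state). If there exists a nonempty word u with s ∈ A.evalFrom({s}, u), then the accepted language of A is infinite. Equivalently: if every state of A is reachable and coreachable and A accepts a finite language, then the transition graph of A is acyclic (no state lies on a nontrivial cycle). -/
lemma evalFrom_mono {α S : Type} (A : NFA α S) {T U : Set S} (h : T ⊆ U) :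
    ∀ w : List α, A.evalFrom T w ⊆ A.evalFrom U w := by
  intro w
  induction w generalizing T U with
  | nil => simpa using h
  | cons a w ih =>
    simp only [NFA.evalFrom, List.foldl_cons]
    exact ih (by
      intro x hx
      rw [NFA.mem_stepSet] at hx ⊢
      obtain ⟨t, ht, hs⟩ := hx
      exact ⟨t, h ht, hs⟩)

lemma evalFrom_app {α S : Type} (A : NFA α S) (T : Set S) (x y : List α) :
    A.evalFrom T (x ++ y) = A.evalFrom (A.evalFrom T x) y := by
  simp [NFA.evalFrom, List.foldl_append]

lemma mem_evalFrom_trans {α S : Type} (A : NFA α S) {T : Set S} {s : S} {x y : List α}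
    (h1 : s ∈ A.evalFrom T x) {t : S} (h2 : t ∈ A.evalFrom {s} y) :
    t ∈ A.evalFrom T (x ++ y) := by
  rw [evalFrom_app]
  exact evalFrom_mono A (by simpa using h1) y h2

/-- If a state `s` of an NFA `A` over a finite alphabet is reachable,
coreachable, and lies on a nontrivial cycle, then the language accepted by `A` is
infinite. -/
theorem stmt14 {α S : Type} [Fintype α] [Fintype S] (A : NFA α S) (s : S)
    (hreach : ∃ w : List α, s ∈ A.evalFrom A.start w)
    (hco : ∃ w : List α, ∃ f ∈ A.accept, f ∈ A.evalFrom {s} w)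
    (hcyc : ∃ u : List α, u ≠ [] ∧ s ∈ A.evalFrom {s} u) :
    {w : List α | w ∈ A.accepts}.Infinite := by
  obtain ⟨w₁, h1⟩ := hreach
  obtain ⟨w₂, f, hf, h2⟩ := hco
  obtain ⟨u, hu, h3⟩ := hcyc
  have hcyc' : ∀ n, s ∈ A.evalFrom {s} (List.flatten (List.replicate n u)) := by
    intro n
    induction n with
    | zero => simp [NFA.evalFrom]
    | succ n ih =>
      rw [List.replicate_succ, List.flatten_cons]
      exact mem_evalFrom_trans A h3 ih
  refine Set.infinite_of_injective_forall_mem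
    (f := fun n : ℕ => w₁ ++ List.flatten (List.replicate n u) ++ w₂) ?_ ?_
  · intro m n hmn
    have := congrArg List.length hmn
    simp only [List.length_append, List.length_flatten, List.map_replicate,
      List.sum_replicate, smul_eq_mul] at this
    have hul : 0 < u.length := List.length_pos_iff.mpr hu
    exact Nat.eq_of_mul_eq_mul_right hul (by omega)
  · intro n
    simp only [Set.mem_setOf_eq, NFA.mem_accepts]
    exact ⟨f, hf, mem_evalFrom_trans A (mem_evalFrom_trans A h1 (hcyc' n)) h2⟩
end

section
/- Let L ⊆ {0,1}*. Let PROT_L be the language over the alphabet {0,1,#,+,−,ρ,ρ'} consisting of all concatenations of query blocks of the following three forms: u#+ with u ∈ L; u#− with u ∈ {0,1}* ∖ L; and ρρ'. Let A be a nondeterministic finite automaton over {0,1,#,+,−,ρ,ρ'} with state set S, start set I and accept set F. Define a nondeterministic finite automaton B over the alphabet {y,n,#,+,−,ρ,ρ'} with the same state set S, start set I and accept set F, whose transitions are: for a ∈ {#,+,−,ρ,ρ'}, B steps from s to s' on a iff A steps from s to s' on a; B steps from s to s' on y iff there exists u ∈ L with s' ∈ A.evalFrom({s}, u); B steps from s to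 s' on n iff there exists u ∈ {0,1}* ∖ L with s' ∈ A.evalFrom({s}, u). Then L(A) ∩ PROT_L ≠ ∅ if and only if L(B) ∩ ({y#+} ∪ {n#−} ∪ {ρρ'})* ≠ ∅. -/
/-- The 7-letter alphabet `{0, 1, #, +, −, ρ, ρ'}` of the automaton `A`. -/
inductive ALet : Type
  | c0 | c1 | hash | plus | minus | rho | rho'
  deriving DecidableEq

/-- The 7-letter alphabet `{y, n, #, +, −, ρ, ρ'}` of the automaton `B`. -/
inductive BLet : Type
  | y | n | hash | plus | minus | rho | rho'
  deriving DecidableEq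

/-- Embedding of the binary letters `0`, `1` into `ALet`. -/
def embBit (b : Bool) : ALet := if b then ALet.c1 else ALet.c0

/-- The protocol language `PROT_L`: all concatenations of query blocks of the forms
`u#+` with `u ∈ L`, `u#−` with `u ∉ L`, and `ρρ'`. -/
def ProtL (L : Set (List Bool)) : Set (List ALet) :=
  {w | ∃ blocks : List (List ALet),
    (∀ bl ∈ blocks,
      (∃ u ∈ L, bl = u.map embBit ++ [ALet.hash, ALet.plus]) ∨
      (∃ u : List Bool, u ∉ L ∧ bl = u.map embBit ++ [ALet.hash, ALet.minus]) ∨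
      bl = [ALet.rho, ALet.rho']) ∧
    w = blocks.flatten}

/-- The NFA `B` built from `A`: same states, start and accept sets; it steps on
`#, +, −, ρ, ρ'` exactly as `A` does, on `y` along words of `L`, and on `n` along
words of `{0,1}* ∖ L`. -/
def mkB (L : Set (List Bool)) {S : Type} (A : NFA ALet S) : NFA BLet S where
  step s x :=
    match x with
    | BLet.y => {s' | ∃ u ∈ L, s' ∈ A.evalFrom {s} (u.map embBit)}
    | BLet.n => {s' | ∃ u : List Bool, u ∉ L ∧ s' ∈ A.evalFrom {s} (u.map embBit)}
    | BLet.hash => A.step s ALet.hash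
    | BLet.plus => A.step s ALet.plus
    | BLet.minus => A.step s ALet.minus
    | BLet.rho => A.step s ALet.rho
    | BLet.rho' => A.step s ALet.rho'
  start := A.start
  accept := A.accept

/-- The regular pattern `(y#+ | n#− | ρρ')*`. -/
def Pattern : Set (List BLet) :=
  {w | ∃ blocks : List (List BLet),
    (∀ bl ∈ blocks,
      bl = [BLet.y, BLet.hash, BLet.plus] ∨
      bl = [BLet.n, BLet.hash, BLet.minus] ∨
      bl = [BLet.rho, BLet.rho']) ∧
    w = blocks.flatten}


section aux
variable {α σ : Type*} (M : NFA α σ)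

theorem myEvalFrom_append (T : Set σ) (x y : List α) :
    M.evalFrom T (x ++ y) = M.evalFrom (M.evalFrom T x) y := by
  simp [NFA.evalFrom, List.foldl_append]

theorem myStepSet_iUnion {ι : Sort*} (f : ι → Set σ) (a : α) :
    M.stepSet (⋃ i, f i) a = ⋃ i, M.stepSet (f i) a := by
  ext s; simp [NFA.mem_stepSet]; tauto

theorem myEvalFrom_iUnion {ι : Sort*} (f : ι → Set σ) (w : List α) :
    M.evalFrom (⋃ i, f i) w = ⋃ i, M.evalFrom (f i) w := by
  induction w generalizing f with
  | nil => simp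
  | cons a w ih =>
    show M.evalFrom (M.stepSet (⋃ i, f i) a) w = _
    rw [myStepSet_iUnion, ih]
    rfl

theorem myEvalFrom_sUnion (T : Set σ) (w : List α) :
    M.evalFrom T w = ⋃ s ∈ T, M.evalFrom {s} w := by
  conv_lhs => rw [show T = ⋃ s ∈ T, {s} by simp]
  rw [Set.biUnion_eq_iUnion, myEvalFrom_iUnion, Set.biUnion_eq_iUnion]

theorem myEvalFrom_mono {T T' : Set σ} (h : T ⊆ T') (w : List α) :
    M.evalFrom T w ⊆ M.evalFrom T' w := by
  rw [myEvalFrom_sUnion M T, myEvalFrom_sUnion M T']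
  exact Set.biUnion_mono h (fun _ _ => subset_rfl)
end aux

section blocks
variable (L : Set (List Bool)) {S : Type} (A : NFA ALet S)

theorem stepSet_y (T : Set S) :
    (mkB L A).stepSet T BLet.y = ⋃ u ∈ L, A.evalFrom T (u.map embBit) := by
  ext s'
  simp only [NFA.mem_stepSet, mkB, Set.mem_iUnion, Set.mem_setOf_eq]
  constructor
  · rintro ⟨s, hs, u, hu, h⟩
    exact ⟨u, hu, by rw [myEvalFrom_sUnion]; exact Set.mem_biUnion hs h⟩
  · rintro ⟨u, hu, h⟩
    rw [myEvalFrom_sUnion] at h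
    obtain ⟨s, hs, h⟩ := Set.mem_iUnion₂.mp h
    exact ⟨s, hs, u, hu, h⟩

theorem stepSet_n (T : Set S) :
    (mkB L A).stepSet T BLet.n = ⋃ u ∈ {u | u ∉ L}, A.evalFrom T (u.map embBit) := by
  ext s'
  simp only [NFA.mem_stepSet, mkB, Set.mem_iUnion, Set.mem_setOf_eq]
  constructor
  · rintro ⟨s, hs, u, hu, h⟩
    exact ⟨u, hu, by rw [myEvalFrom_sUnion]; exact Set.mem_biUnion hs h⟩
  · rintro ⟨u, hu, h⟩
    rw [myEvalFrom_sUnion] at h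
    obtain ⟨s, hs, h⟩ := Set.mem_iUnion₂.mp h
    exact ⟨s, hs, u, hu, h⟩

theorem stepSet_hash (T : Set S) :
    (mkB L A).stepSet T BLet.hash = A.stepSet T ALet.hash := rfl
theorem stepSet_plus (T : Set S) :
    (mkB L A).stepSet T BLet.plus = A.stepSet T ALet.plus := rfl
theorem stepSet_minus (T : Set S) :
    (mkB L A).stepSet T BLet.minus = A.stepSet T ALet.minus := rfl
theorem stepSet_rho (T : Set S) :
    (mkB L A).stepSet T BLet.rho = A.stepSet T ALet.rho := rfl
theorem stepSet_rho' (T : Set S) :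
    (mkB L A).stepSet T BLet.rho' = A.stepSet T ALet.rho' := rfl

theorem evalFrom_yblock (T : Set S) :
    (mkB L A).evalFrom T [BLet.y, BLet.hash, BLet.plus] =
      ⋃ u ∈ L, A.evalFrom T (u.map embBit ++ [ALet.hash, ALet.plus]) := by
  show (mkB L A).stepSet ((mkB L A).stepSet ((mkB L A).stepSet T BLet.y) BLet.hash) BLet.plus = _
  rw [stepSet_y, stepSet_hash, stepSet_plus]
  simp only [Set.biUnion_eq_iUnion, myStepSet_iUnion]
  apply Set.iUnion_congr
  rintro ⟨u, hu⟩
  rw [myEvalFrom_append]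
  rfl

theorem evalFrom_nblock (T : Set S) :
    (mkB L A).evalFrom T [BLet.n, BLet.hash, BLet.minus] =
      ⋃ u ∈ {u | u ∉ L}, A.evalFrom T (u.map embBit ++ [ALet.hash, ALet.minus]) := by
  show (mkB L A).stepSet ((mkB L A).stepSet ((mkB L A).stepSet T BLet.n) BLet.hash) BLet.minus = _
  rw [stepSet_n, stepSet_hash, stepSet_minus]
  simp only [Set.biUnion_eq_iUnion, myStepSet_iUnion]
  apply Set.iUnion_congr
  rintro ⟨u, hu⟩
  rw [myEvalFrom_append]
  rfl

theorem evalFrom_rblock (T : Set S) :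
    (mkB L A).evalFrom T [BLet.rho, BLet.rho'] =
      A.evalFrom T [ALet.rho, ALet.rho'] := by
  show (mkB L A).stepSet ((mkB L A).stepSet T BLet.rho) BLet.rho' = _
  rw [stepSet_rho, stepSet_rho']
  rfl

theorem fwd : ∀ blocks : List (List ALet),
    (∀ bl ∈ blocks,
      (∃ u ∈ L, bl = u.map embBit ++ [ALet.hash, ALet.plus]) ∨
      (∃ u : List Bool, u ∉ L ∧ bl = u.map embBit ++ [ALet.hash, ALet.minus]) ∨
      bl = [ALet.rho, ALet.rho']) →
    ∀ T : Set S, ∃ bb : List (List BLet),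
      (∀ bl ∈ bb,
        bl = [BLet.y, BLet.hash, BLet.plus] ∨
        bl = [BLet.n, BLet.hash, BLet.minus] ∨
        bl = [BLet.rho, BLet.rho']) ∧
      A.evalFrom T blocks.flatten ⊆ (mkB L A).evalFrom T bb.flatten := by
  intro blocks
  induction blocks with
  | nil => intro _ T; exact ⟨[], by simp, by simp⟩
  | cons bl rest ih =>
    intro hprop T
    have hbl := hprop bl (by simp)
    have hrest : ∀ b ∈ rest, _ := fun b hb => hprop b (List.mem_cons_of_mem _ hb)
    -- choose the B-block and the key subset fact
    obtain ⟨bbl, hbbl, hsub⟩ :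
        ∃ bbl, (bbl = [BLet.y, BLet.hash, BLet.plus] ∨
          bbl = [BLet.n, BLet.hash, BLet.minus] ∨ bbl = [BLet.rho, BLet.rho']) ∧
          A.evalFrom T bl ⊆ (mkB L A).evalFrom T bbl := by
      rcases hbl with ⟨u, hu, rfl⟩ | ⟨u, hu, rfl⟩ | rfl
      · exact ⟨_, Or.inl rfl, by rw [evalFrom_yblock]; exact fun x hx => Set.mem_biUnion hu hx⟩
      · exact ⟨_, Or.inr (Or.inl rfl), by rw [evalFrom_nblock]; exact fun x hx => Set.mem_biUnion hu hx⟩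
      · exact ⟨_, Or.inr (Or.inr rfl), by rw [evalFrom_rblock]⟩
    obtain ⟨bb, hbb, hsub2⟩ := ih hrest ((mkB L A).evalFrom T bbl)
    refine ⟨bbl :: bb, ?_, ?_⟩
    · intro b hb
      rcases List.mem_cons.mp hb with rfl | hb
      · exact hbbl
      · exact hbb b hb
    · simp only [List.flatten_cons]
      rw [myEvalFrom_append, myEvalFrom_append]
      exact (myEvalFrom_mono A (Set.Subset.trans hsub subset_rfl) _).trans
        ((myEvalFrom_mono A subset_rfl _).trans hsub2)

theorem bwd : ∀ bb : List (List BLet),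
    (∀ bl ∈ bb,
      bl = [BLet.y, BLet.hash, BLet.plus] ∨
      bl = [BLet.n, BLet.hash, BLet.minus] ∨
      bl = [BLet.rho, BLet.rho']) →
    ∀ (T : Set S) (s' : S), s' ∈ (mkB L A).evalFrom T bb.flatten →
    ∃ blocks : List (List ALet),
      (∀ bl ∈ blocks,
        (∃ u ∈ L, bl = u.map embBit ++ [ALet.hash, ALet.plus]) ∨
        (∃ u : List Bool, u ∉ L ∧ bl = u.map embBit ++ [ALet.hash, ALet.minus]) ∨
        bl = [ALet.rho, ALet.rho']) ∧
      s' ∈ A.evalFrom T blocks.flatten := by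
  intro bb
  induction bb with
  | nil => intro _ T s' h; exact ⟨[], by simp, by simpa using h⟩
  | cons bl rest ih =>
    intro hprop T s' h
    have hbl := hprop bl (by simp)
    have hrest : ∀ b ∈ rest, _ := fun b hb => hprop b (List.mem_cons_of_mem _ hb)
    simp only [List.flatten_cons] at h
    rw [myEvalFrom_append] at h
    rcases hbl with rfl | rfl | rfl
    · rw [evalFrom_yblock, Set.biUnion_eq_iUnion, myEvalFrom_iUnion] at h
      obtain ⟨⟨u, hu⟩, h⟩ := Set.mem_iUnion.mp h
      obtain ⟨ab, hab, hmem⟩ := ih hrest _ s' h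
      refine ⟨(u.map embBit ++ [ALet.hash, ALet.plus]) :: ab, ?_, ?_⟩
      · intro b hb
        rcases List.mem_cons.mp hb with rfl | hb
        · exact Or.inl ⟨u, hu, rfl⟩
        · exact hab b hb
      · simp only [List.flatten_cons]; rw [myEvalFrom_append]; exact hmem
    · rw [evalFrom_nblock, Set.biUnion_eq_iUnion, myEvalFrom_iUnion] at h
      obtain ⟨⟨u, hu⟩, h⟩ := Set.mem_iUnion.mp h
      obtain ⟨ab, hab, hmem⟩ := ih hrest _ s' h
      refine ⟨(u.map embBit ++ [ALet.hash, ALet.minus]) :: ab, ?_, ?_⟩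
      · intro b hb
        rcases List.mem_cons.mp hb with rfl | hb
        · exact Or.inr (Or.inl ⟨u, hu, rfl⟩)
        · exact hab b hb
      · simp only [List.flatten_cons]; rw [myEvalFrom_append]; exact hmem
    · rw [evalFrom_rblock] at h
      obtain ⟨ab, hab, hmem⟩ := ih hrest _ s' h
      refine ⟨[ALet.rho, ALet.rho'] :: ab, ?_, ?_⟩
      · intro b hb
        rcases List.mem_cons.mp hb with rfl | hb
        · exact Or.inr (Or.inr rfl)
        · exact hab b hb
      · simp only [List.flatten_cons]; rw [myEvalFrom_append]; exact hmem

end blocks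

/-- `L(A) ∩ PROT_L ≠ ∅` iff `L(B) ∩ (y#+ | n#− | ρρ')* ≠ ∅`. -/
theorem stmt15 (L : Set (List Bool)) {S : Type} [Fintype S] (A : NFA ALet S) :
    (∃ w, w ∈ A.accepts ∧ w ∈ ProtL L) ↔
    (∃ w, w ∈ (mkB L A).accepts ∧ w ∈ Pattern) := by
  constructor
  · rintro ⟨w, hacc, blocks, hprop, rfl⟩
    obtain ⟨s, hs, hmem⟩ := hacc
    obtain ⟨bb, hbb, hsub⟩ := fwd L A blocks hprop A.start
    exact ⟨bb.flatten, ⟨s, hs, hsub hmem⟩, bb, hbb, rfl⟩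
  · rintro ⟨w, hacc, bb, hprop, rfl⟩
    obtain ⟨s, hs, hmem⟩ := hacc
    obtain ⟨ab, hab, hmem'⟩ := bwd L A bb hprop _ s hmem
    exact ⟨ab.flatten, ⟨s, hs, hmem'⟩, ab, hab, rfl⟩
end
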